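/- arXiv:0806.4344 — 12 statements merged into one kernel-verified Lean document; each statement's English description precedes it below -/
import Mathlib

section
/- For every three-player game in which each player's strategy set is Fin n with n ≥ 2 and Player 1's payoff function u₁ : Fin n × Fin n × Fin n → ℝ takes values in [0,1], and for every ε > 0, setting m = ⌈(ln n)/(2ε²)⌉, there exist functions f₂, f₃ : Fin m → Fin n such that the mixed strategies σ₂, σ₃ defined by σᵢ(j) = |{t ∈ Fin m : fᵢ(t) = j}|/m satisfy max_{a ∈ Fin n} ∑_{j,k} σ₂(j)·σ₃(k)·u₁(a,j,k) ≤ v + 2ε, where v is the minmax value for Player 1. -/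
open Real Finset

lemma ly_core (p : ℝ) (hp0 : 0 ≤ p) (hp1 : p ≤ 1) (x : ℝ) (hx : 0 ≤ x) :
    1 - p + p * Real.exp x ≤ Real.exp (p * x + x ^ 2 / 8) := by
  set D : ℝ → ℝ := fun y => 1 - p + p * Real.exp y with hDdef
  have hDpos : ∀ y, 0 < D y := by
    intro y
    rcases eq_or_lt_of_le hp0 with h | h
    · simp [hDdef, ← h]
    · have := Real.exp_pos y
      simp only [hDdef]
      nlinarith
  have hDd : ∀ y, HasDerivAt D (p * Real.exp y) y := fun y =>
    ((Real.hasDerivAt_exp y).const_mul p).const_add (1 - p)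
  set ψ : ℝ → ℝ := fun y => p + y / 4 - p * Real.exp y / D y with hψdef
  have hψd : ∀ y, HasDerivAt ψ
      (1 / 4 - (p * Real.exp y * D y - p * Real.exp y * (p * Real.exp y)) / (D y) ^ 2) y := by
    intro y
    have h1 : HasDerivAt (fun y => p * Real.exp y) (p * Real.exp y) y :=
      (Real.hasDerivAt_exp y).const_mul p
    have h2 := h1.div (hDd y) (hDpos y).ne'
    have h3 : HasDerivAt (fun y : ℝ => p + y / 4) (1 / 4) y :=
      ((hasDerivAt_id y).div_const 4).const_add p
    exact h3.sub h2
  have hψmono : Monotone ψ := by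
    apply monotone_of_deriv_nonneg
    · exact fun y => (hψd y).differentiableAt
    · intro y
      have key : ∀ d E : ℝ, 0 < d → 0 ≤ 1 / 4 - (E * d - E * E) / d ^ 2 := by
        intro d E hd
        rw [sub_nonneg, div_le_iff₀ (pow_pos hd 2)]
        nlinarith [sq_nonneg (d - 2 * E)]
      rw [(hψd y).deriv]
      exact key (D y) (p * Real.exp y) (hDpos y)
  have hψ0 : ψ 0 = 0 := by
    simp [hψdef, hDdef]
  have hψnn : ∀ y, 0 ≤ y → 0 ≤ ψ y := by
    intro y hy
    rw [← hψ0]; exact hψmono hy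
  set φ : ℝ → ℝ := fun y => p * y + y ^ 2 / 8 - Real.log (D y) with hφdef
  have hφd : ∀ y, HasDerivAt φ (ψ y) y := by
    intro y
    have hlog : HasDerivAt (fun y => Real.log (D y)) (p * Real.exp y / D y) y :=
      (hDd y).log (hDpos y).ne'
    have h1 : HasDerivAt (fun y : ℝ => p * y) p y := by
      simpa using (hasDerivAt_id y).const_mul p
    have h2 : HasDerivAt (fun y : ℝ => y ^ 2 / 8) (2 * y ^ 1 / 8) y :=
      (hasDerivAt_pow 2 y).div_const 8
    have := (h1.add h2).sub hlog
    refine this.congr_deriv ?_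
    simp [hψdef]; ring
  have hdiff : Differentiable ℝ φ := fun y => (hφd y).differentiableAt
  have hφmono : MonotoneOn φ (Set.Ici 0) := by
    apply monotoneOn_of_deriv_nonneg (convex_Ici 0) hdiff.continuous.continuousOn
      hdiff.differentiableOn
    intro y hy
    rw [(hφd y).deriv]
    exact hψnn y (le_of_lt (by simpa [interior_Ici] using hy))
  have hφ0 : φ 0 = 0 := by simp [hφdef, hDdef]
  have h := hφmono (Set.self_mem_Ici) (Set.mem_Ici.2 hx) hx
  rw [hφ0] at h
  have hlog : Real.log (D x) ≤ p * x + x ^ 2 / 8 := by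
    simp only [hφdef] at h; linarith
  have := (Real.log_le_iff_le_exp (hDpos x)).1 hlog
  simpa [hDdef] using this

lemma ly_mgf {n : ℕ} (σ h : Fin n → ℝ) (hσ0 : ∀ j, 0 ≤ σ j) (hσ1 : ∑ j, σ j = 1)
    (hh0 : ∀ j, 0 ≤ h j) (hh1 : ∀ j, h j ≤ 1) (l : ℝ) (hl : 0 ≤ l) :
    ∑ j, σ j * Real.exp (l * h j) ≤ Real.exp (l * (∑ j, σ j * h j) + l ^ 2 / 8) := by
  set μ := ∑ j, σ j * h j with hμ
  have hμ0 : 0 ≤ μ := Finset.sum_nonneg fun j _ => mul_nonneg (hσ0 j) (hh0 j)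
  have hμ1 : μ ≤ 1 := by
    rw [← hσ1]
    exact Finset.sum_le_sum fun j _ => by
      nlinarith [hσ0 j, hh1 j]
  have step1 : ∀ j, Real.exp (l * h j) ≤ 1 - h j + h j * Real.exp l := by
    intro j
    have := convexOn_exp.2 (Set.mem_univ (0:ℝ)) (Set.mem_univ l)
      (by linarith [hh1 j] : (0:ℝ) ≤ 1 - h j) (hh0 j) (by ring)
    simp only [smul_eq_mul, mul_zero, zero_add, Real.exp_zero, mul_one] at this
    calc Real.exp (l * h j) = Real.exp (h j * l) := by rw [mul_comm]
    _ ≤ 1 - h j + h j * Real.exp l := by linarith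
  calc ∑ j, σ j * Real.exp (l * h j)
      ≤ ∑ j, σ j * (1 - h j + h j * Real.exp l) :=
        Finset.sum_le_sum fun j _ => mul_le_mul_of_nonneg_left (step1 j) (hσ0 j)
    _ = (∑ j, σ j) - μ + μ * Real.exp l := by
        simp only [hμ, Finset.sum_mul, ← Finset.sum_add_distrib, ← Finset.sum_sub_distrib]
        exact Finset.sum_congr rfl fun j _ => by ring
    _ = 1 - μ + μ * Real.exp l := by rw [hσ1]
    _ ≤ Real.exp (μ * l + l ^ 2 / 8) := ly_core μ hμ0 hμ1 l hl
    _ = Real.exp (l * μ + l ^ 2 / 8) := by rw [mul_comm μ l]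

lemma ly_chernoff {n m : ℕ} (σ h : Fin n → ℝ) (hσ0 : ∀ j, 0 ≤ σ j)
    (hσ1 : ∑ j, σ j = 1) (hh0 : ∀ j, 0 ≤ h j) (hh1 : ∀ j, h j ≤ 1) (t : ℝ) (ht : 0 < t) :
    ∑ f ∈ Finset.univ.filter (fun f : Fin m → Fin n =>
        (m : ℝ) * ((∑ j, σ j * h j) + t) ≤ ∑ i, h (f i)),
      ∏ i, σ (f i) ≤ Real.exp (-(2 * m * t ^ 2)) := by
  set μ := ∑ j, σ j * h j with hμ
  set l : ℝ := 4 * t with hl0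
  have hl : 0 ≤ l := by positivity
  set bound : ℝ := (m : ℝ) * (μ + t) with hbd
  set A := Finset.univ.filter (fun f : Fin m → Fin n => bound ≤ ∑ i, h (f i)) with hA
  have hWnn : ∀ f : Fin m → Fin n, 0 ≤ ∏ i, σ (f i) := fun f =>
    Finset.prod_nonneg fun i _ => hσ0 (f i)
  calc ∑ f ∈ A, ∏ i, σ (f i)
      ≤ ∑ f ∈ A, (∏ i, σ (f i)) * Real.exp (l * ((∑ i, h (f i)) - bound)) := by
        apply Finset.sum_le_sum
        intro f hf
        have hfA : bound ≤ ∑ i, h (f i) := (Finset.mem_filter.1 hf).2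
        have h1 : (1:ℝ) ≤ Real.exp (l * ((∑ i, h (f i)) - bound)) :=
          Real.one_le_exp (by nlinarith)
        nlinarith [hWnn f]
    _ ≤ ∑ f : Fin m → Fin n, (∏ i, σ (f i)) * Real.exp (l * ((∑ i, h (f i)) - bound)) := by
        apply Finset.sum_le_sum_of_subset_of_nonneg (Finset.filter_subset _ _)
        intro f _ _
        exact mul_nonneg (hWnn f) (Real.exp_pos _).le
    _ = Real.exp (-(l * bound)) * ∑ f : Fin m → Fin n, ∏ i, (σ (f i) * Real.exp (l * h (f i))) := by
        rw [Finset.mul_sum]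
        apply Finset.sum_congr rfl
        intro f _
        rw [Finset.prod_mul_distrib, ← Real.exp_sum]
        rw [show l * ((∑ i, h (f i)) - bound) = -(l * bound) + ∑ i, l * h (f i) by
          rw [← Finset.mul_sum]; ring]
        rw [Real.exp_add]; ring
    _ = Real.exp (-(l * bound)) * (∑ j, σ j * Real.exp (l * h j)) ^ m := by
        congr 1
        rw [show ((∑ j, σ j * Real.exp (l * h j)) ^ m)
            = ∏ _i : Fin m, (∑ j, σ j * Real.exp (l * h j)) by
          rw [Finset.prod_const, Finset.card_univ, Fintype.card_fin]]
        rw [Finset.prod_univ_sum]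
        rw [Fintype.piFinset_univ]
    _ ≤ Real.exp (-(l * bound)) * Real.exp (l * μ + l ^ 2 / 8) ^ m := by
        apply mul_le_mul_of_nonneg_left _ (Real.exp_pos _).le
        apply pow_le_pow_left₀
        · exact Finset.sum_nonneg fun j _ => mul_nonneg (hσ0 j) (Real.exp_pos _).le
        · exact ly_mgf σ h hσ0 hσ1 hh0 hh1 l hl
    _ = Real.exp (-(2 * m * t ^ 2)) := by
        rw [← Real.exp_nat_mul, ← Real.exp_add]
        congr 1
        rw [hbd, hl0]
        ring

lemma ly_sample {n m : ℕ} (hn : 2 ≤ n) (hm : 1 ≤ m) (ε : ℝ) (hε : 0 < ε)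
    (hexp : (n : ℝ) * Real.exp (-(2 * m * ε ^ 2)) ≤ 1)
    (σ : Fin n → ℝ) (hσ0 : ∀ j, 0 ≤ σ j) (hσ1 : ∑ j, σ j = 1)
    (H : Fin n → Fin n → ℝ) (hH0 : ∀ a j, 0 ≤ H a j) (hH1 : ∀ a j, H a j ≤ 1)
    (c : ℝ) (hc : ∀ a, ∑ j, σ j * H a j ≤ c) :
    ∃ f : Fin m → Fin n, ∀ a,
      ∑ j, ((Finset.univ.filter fun t => f t = j).card : ℝ) / m * H a j ≤ c + ε := by
  have hmpos : (0:ℝ) < m := by exact_mod_cast hm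
  have hnpos : (0:ℝ) < n := by positivity
  -- empirical value identity
  have hemp : ∀ (f : Fin m → Fin n) (a : Fin n),
      ∑ j, ((Finset.univ.filter fun t => f t = j).card : ℝ) / m * H a j
        = (1 / m) * ∑ i, H a (f i) := by
    intro f a
    rw [← Finset.sum_fiberwise_of_maps_to (fun i (_ : i ∈ Finset.univ) => Finset.mem_univ (f i))
      (fun i => H a (f i))]
    rw [Finset.mul_sum]
    apply Finset.sum_congr rfl
    intro j _
    rw [show ∑ i ∈ Finset.univ.filter (fun i => f i = j), H a (f i)
        = ∑ i ∈ Finset.univ.filter (fun i => f i = j), H a j from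
      Finset.sum_congr rfl fun i hi => by rw [(Finset.mem_filter.1 hi).2]]
    rw [Finset.sum_const, nsmul_eq_mul]
    ring
  -- per-action bad set bound
  have hbad : ∀ a : Fin n,
      ∑ f ∈ Finset.univ.filter (fun f : Fin m → Fin n =>
          c + ε < (1 / m) * ∑ i, H a (f i)), ∏ i, σ (f i) < 1 / n := by
    intro a
    set B := Finset.univ.filter (fun f : Fin m → Fin n =>
        c + ε < (1 / m) * ∑ i, H a (f i)) with hB
    rcases B.eq_empty_or_nonempty with hBe | hBne
    · rw [hBe, Finset.sum_empty]; positivity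
    · obtain ⟨f₀, hf₀B, hf₀min⟩ := Finset.exists_min_image B
        (fun f => (1 / m : ℝ) * ∑ i, H a (f i)) hBne
      set μa := ∑ j, σ j * H a j with hμa
      set t := (1 / m : ℝ) * (∑ i, H a (f₀ i)) - μa with hT
      have hβ : c + ε < (1 / m) * ∑ i, H a (f₀ i) := (Finset.mem_filter.1 hf₀B).2
      have hεt : ε < t := by
        have := hc a
        rw [hT]; simp only [← hμa] at this ⊢; linarith
      have ht0 : 0 < t := lt_trans hε hεt
      have hsubset : B ⊆ Finset.univ.filter (fun f : Fin m → Fin n =>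
          (m : ℝ) * (μa + t) ≤ ∑ i, H a (f i)) := by
        intro f hf
        rw [Finset.mem_filter]
        refine ⟨Finset.mem_univ f, ?_⟩
        have h1 := hf₀min f hf
        rw [hT]
        calc (m : ℝ) * (μa + ((1 / m : ℝ) * (∑ i, H a (f₀ i)) - μa))
            = (m : ℝ) * ((1 / m : ℝ) * (∑ i, H a (f₀ i))) := by ring
          _ ≤ (m : ℝ) * ((1 / m : ℝ) * ∑ i, H a (f i)) :=
              mul_le_mul_of_nonneg_left h1 hmpos.le
          _ = ∑ i, H a (f i) := by field_simp
      calc ∑ f ∈ B, ∏ i, σ (f i)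
          ≤ ∑ f ∈ Finset.univ.filter (fun f : Fin m → Fin n =>
              (m : ℝ) * (μa + t) ≤ ∑ i, H a (f i)), ∏ i, σ (f i) :=
            Finset.sum_le_sum_of_subset_of_nonneg hsubset
              (fun f _ _ => Finset.prod_nonneg fun i _ => hσ0 (f i))
        _ ≤ Real.exp (-(2 * m * t ^ 2)) :=
            ly_chernoff σ (H a) hσ0 hσ1 (hH0 a) (hH1 a) t ht0
        _ < Real.exp (-(2 * m * ε ^ 2)) := by
            apply Real.exp_lt_exp.2
            have h1 : (1:ℝ) ≤ m := by exact_mod_cast hm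
            have h2 : ε ^ 2 < t ^ 2 := by nlinarith
            have h3 : (1:ℝ) * (t ^ 2 - ε ^ 2) ≤ m * (t ^ 2 - ε ^ 2) :=
              mul_le_mul_of_nonneg_right h1 (by nlinarith)
            nlinarith
        _ ≤ 1 / n := by
            rw [le_div_iff₀ hnpos]
            linarith [hexp]
  -- total mass is 1
  have htot : ∑ f : Fin m → Fin n, ∏ i, σ (f i) = 1 := by
    rw [← Fintype.piFinset_univ, ← Finset.prod_univ_sum]
    simp [hσ1]
  by_contra hcon
  push_neg at hcon
  have h1 : ∑ f : Fin m → Fin n, ∏ i, σ (f i) ≤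
      ∑ a : Fin n, ∑ f ∈ Finset.univ.filter (fun f : Fin m → Fin n =>
      c + ε < (1 / m) * ∑ i, H a (f i)), ∏ i, σ (f i) := by
    have step : ∀ f : Fin m → Fin n, ∏ i, σ (f i) ≤
        ∑ a : Fin n, (if c + ε < (1 / m) * ∑ i, H a (f i) then ∏ i, σ (f i) else 0) := by
      intro f
      obtain ⟨a, ha⟩ := hcon f
      rw [hemp f a] at ha
      calc ∏ i, σ (f i) = (if c + ε < (1 / m) * ∑ i, H a (f i)
            then ∏ i, σ (f i) else 0) := by rw [if_pos ha]
        _ ≤ _ := Finset.single_le_sum (f := fun a => (if c + ε < (1 / m) * ∑ i, H a (f i)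
            then ∏ i, σ (f i) else 0))
            (fun b _ => by
              split
              · exact Finset.prod_nonneg fun i _ => hσ0 (f i)
              · exact le_rfl) (Finset.mem_univ a)
    calc ∑ f : Fin m → Fin n, ∏ i, σ (f i)
        ≤ ∑ f : Fin m → Fin n, ∑ a : Fin n,
            (if c + ε < (1 / m) * ∑ i, H a (f i) then ∏ i, σ (f i) else 0) :=
          Finset.sum_le_sum fun f _ => step f
      _ = ∑ a : Fin n, ∑ f : Fin m → Fin n,
            (if c + ε < (1 / m) * ∑ i, H a (f i) then ∏ i, σ (f i) else 0) :=
          Finset.sum_comm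
      _ = _ := by
          apply Finset.sum_congr rfl
          intro a _
          rw [Finset.sum_ite, Finset.sum_const, smul_zero, add_zero]
  rw [htot] at h1
  have hne : Nonempty (Fin n) := ⟨⟨0, by omega⟩⟩
  have h2 : ∑ a : Fin n, ∑ f ∈ Finset.univ.filter (fun f : Fin m → Fin n =>
      c + ε < (1 / m) * ∑ i, H a (f i)), ∏ i, σ (f i) < ∑ _a : Fin n, (1 / n : ℝ) := by
    apply Finset.sum_lt_sum_of_nonempty
    · exact Finset.univ_nonempty
    · exact fun a _ => hbad a
  rw [Finset.sum_const, Finset.card_univ, Fintype.card_fin, nsmul_eq_mul] at h2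
  rw [mul_one_div, div_self hnpos.ne'] at h2
  linarith



/-- A mixed strategy on a finite strategy set `S`. -/
def IsMixedStrategy {S : Type*} [Fintype S] (σ : S → ℝ) : Prop :=
  (∀ s, 0 ≤ σ s) ∧ ∑ s, σ s = 1

/-- The minmax (threat) value for Player 1 of the three-player game with payoff `u`:
the minimum over mixed strategy profiles of Players 2 and 3 of the best-response
payoff of Player 1 (the minimum is attained, so `sInf` is a minimum). -/
noncomputable def minmaxVal {S₁ S₂ S₃ : Type*} [Fintype S₁] [Fintype S₂] [Fintype S₃]
    (u : S₁ × S₂ × S₃ → ℝ) : ℝ :=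
  sInf { v | ∃ σ₂ : S₂ → ℝ, ∃ σ₃ : S₃ → ℝ,
    IsMixedStrategy σ₂ ∧ IsMixedStrategy σ₃ ∧
    v = ⨆ a : S₁, ∑ j : S₂, ∑ k : S₃, σ₂ j * σ₃ k * u (a, j, k) }

/-- Lipton–Young style approximation: for an `n × n × n` game with payoffs in `[0,1]`
and any `ε > 0`, there are strategies for Players 2 and 3 mixing uniformly on
multisets of size `m = ⌈(ln n)/(2ε²)⌉` that guarantee the minmax value within `2ε`. -/
theorem simple_strategies_approximate_minmax (n : ℕ) (hn : 2 ≤ n)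
    (u₁ : Fin n × Fin n × Fin n → ℝ)
    (hu : ∀ x, u₁ x ∈ Set.Icc (0 : ℝ) 1) (ε : ℝ) (hε : 0 < ε) :
    ∃ f₂ f₃ : Fin (⌈Real.log n / (2 * ε ^ 2)⌉₊) → Fin n,
      (⨆ a : Fin n, ∑ j : Fin n, ∑ k : Fin n,
        (((Finset.univ.filter fun t => f₂ t = j).card : ℝ) /
            (⌈Real.log n / (2 * ε ^ 2)⌉₊ : ℝ)) *
        (((Finset.univ.filter fun t => f₃ t = k).card : ℝ) /
            (⌈Real.log n / (2 * ε ^ 2)⌉₊ : ℝ)) * u₁ (a, j, k))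
      ≤ minmaxVal u₁ + 2 * ε := by
  have hne : Nonempty (Fin n) := ⟨⟨0, by omega⟩⟩
  have hn1 : (1:ℝ) < n := by exact_mod_cast hn
  have hnpos : (0:ℝ) < n := by positivity
  set m : ℕ := ⌈Real.log n / (2 * ε ^ 2)⌉₊ with hmdef
  have hm : 1 ≤ m := by
    rw [hmdef]
    exact Nat.one_le_iff_ne_zero.2 (by
      have : 0 < Real.log n / (2 * ε ^ 2) := div_pos (Real.log_pos hn1) (by positivity)
      exact (Nat.ceil_pos.2 this).ne')
  have hmpos : (0:ℝ) < m := by exact_mod_cast hm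
  have hexp : (n : ℝ) * Real.exp (-(2 * m * ε ^ 2)) ≤ 1 := by
    have h1 : Real.log n / (2 * ε ^ 2) ≤ m := Nat.le_ceil _
    have h2 : Real.log n ≤ 2 * m * ε ^ 2 := by
      rw [div_le_iff₀ (by positivity : (0:ℝ) < 2 * ε ^ 2)] at h1
      linarith
    have h3 : (n:ℝ) ≤ Real.exp (2 * m * ε ^ 2) := by
      rw [← Real.exp_log hnpos]
      exact Real.exp_le_exp.2 h2
    calc (n : ℝ) * Real.exp (-(2 * m * ε ^ 2))
        ≤ Real.exp (2 * m * ε ^ 2) * Real.exp (-(2 * m * ε ^ 2)) :=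
          mul_le_mul_of_nonneg_right h3 (Real.exp_pos _).le
      _ = 1 := by rw [← Real.exp_add]; simp
  -- the defining set of the minmax value
  set S : Set ℝ := { v | ∃ σ₂ : Fin n → ℝ, ∃ σ₃ : Fin n → ℝ,
    IsMixedStrategy σ₂ ∧ IsMixedStrategy σ₃ ∧
    v = ⨆ a : Fin n, ∑ j : Fin n, ∑ k : Fin n, σ₂ j * σ₃ k * u₁ (a, j, k) } with hSdef
  have hSv : minmaxVal u₁ = sInf S := rfl
  have hSne : S.Nonempty := by
    refine ⟨_, fun _ => (1/n : ℝ), fun _ => (1/n : ℝ), ⟨fun _ => by positivity, ?_⟩,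
      ⟨fun _ => by positivity, ?_⟩, rfl⟩ <;>
    · rw [Finset.sum_const, Finset.card_univ, Fintype.card_fin, nsmul_eq_mul]
      field_simp
  set v := minmaxVal u₁ with hv
  -- key: for every δ > 0, good pair exists
  have key : ∀ δ : ℝ, 0 < δ → ∃ f₂ f₃ : Fin m → Fin n, ∀ a : Fin n,
      ∑ j : Fin n, ∑ k : Fin n,
        (((Finset.univ.filter fun t => f₂ t = j).card : ℝ) / m) *
        (((Finset.univ.filter fun t => f₃ t = k).card : ℝ) / m) * u₁ (a, j, k)
      ≤ v + 2 * ε + δ := by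
    intro δ hδ
    obtain ⟨x, hxS, hxlt⟩ := Real.lt_sInf_add_pos hSne hδ
    obtain ⟨σ₂, σ₃, hσ₂, hσ₃, rfl⟩ := hxS
    have hval : ∀ a : Fin n, ∑ j : Fin n, ∑ k : Fin n, σ₂ j * σ₃ k * u₁ (a, j, k)
        ≤ v + δ := by
      intro a
      have h1 := le_ciSup (f := fun a : Fin n =>
        ∑ j : Fin n, ∑ k : Fin n, σ₂ j * σ₃ k * u₁ (a, j, k))
        (Finite.bddAbove_range _) a
      exact le_trans h1 (le_of_lt (hSv ▸ hxlt))
    -- step 1 : sample player 2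
    set H : Fin n → Fin n → ℝ := fun a j => ∑ k, σ₃ k * u₁ (a, j, k) with hH
    have hH0 : ∀ a j, 0 ≤ H a j := fun a j =>
      Finset.sum_nonneg fun k _ => mul_nonneg (hσ₃.1 k) (hu _).1
    have hH1 : ∀ a j, H a j ≤ 1 := by
      intro a j
      calc H a j ≤ ∑ k, σ₃ k * 1 :=
            Finset.sum_le_sum fun k _ => mul_le_mul_of_nonneg_left (hu _).2 (hσ₃.1 k)
        _ = 1 := by simp [hσ₃.2]
    have hc : ∀ a, ∑ j, σ₂ j * H a j ≤ v + δ := by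
      intro a
      calc ∑ j, σ₂ j * H a j = ∑ j, ∑ k, σ₂ j * σ₃ k * u₁ (a, j, k) := by
            refine Finset.sum_congr rfl fun j _ => ?_
            rw [hH, Finset.mul_sum]
            exact Finset.sum_congr rfl fun k _ => by ring
        _ ≤ v + δ := hval a
    obtain ⟨f₂, hf₂⟩ := ly_sample hn hm ε hε hexp σ₂ hσ₂.1 hσ₂.2 H hH0 hH1 (v + δ) hc
    set e₂ : Fin n → ℝ := fun j => ((Finset.univ.filter fun t => f₂ t = j).card : ℝ) / m
      with he₂
    have he₂0 : ∀ j, 0 ≤ e₂ j := fun j => by positivity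
    have he₂1 : ∑ j, e₂ j = 1 := by
      rw [he₂, ← Finset.sum_div]
      rw [div_eq_one_iff_eq hmpos.ne']
      have := Finset.card_eq_sum_card_fiberwise
        (f := f₂) (s := (Finset.univ : Finset (Fin m))) (t := (Finset.univ : Finset (Fin n)))
        (fun t _ => Finset.mem_univ (f₂ t))
      rw [Finset.card_univ, Fintype.card_fin] at this
      exact_mod_cast this.symm
    -- step 2 : sample player 3
    set H' : Fin n → Fin n → ℝ := fun a k => ∑ j, e₂ j * u₁ (a, j, k) with hH'
    have hH'0 : ∀ a k, 0 ≤ H' a k := fun a k =>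
      Finset.sum_nonneg fun j _ => mul_nonneg (he₂0 j) (hu _).1
    have hH'1 : ∀ a k, H' a k ≤ 1 := by
      intro a k
      calc H' a k ≤ ∑ j, e₂ j * 1 :=
            Finset.sum_le_sum fun j _ => mul_le_mul_of_nonneg_left (hu _).2 (he₂0 j)
        _ = 1 := by simp [he₂1]
    have hc' : ∀ a, ∑ k, σ₃ k * H' a k ≤ v + δ + ε := by
      intro a
      calc ∑ k, σ₃ k * H' a k
          = ∑ k, ∑ j, σ₃ k * (e₂ j * u₁ (a, j, k)) := by
            refine Finset.sum_congr rfl fun k _ => ?_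
            rw [hH', Finset.mul_sum]
        _ = ∑ j, ∑ k, σ₃ k * (e₂ j * u₁ (a, j, k)) := Finset.sum_comm
        _ = ∑ j, e₂ j * H a j := by
            refine Finset.sum_congr rfl fun j _ => ?_
            rw [hH, Finset.mul_sum]
            exact Finset.sum_congr rfl fun k _ => by ring
        _ ≤ v + δ + ε := hf₂ a
    obtain ⟨f₃, hf₃⟩ := ly_sample hn hm ε hε hexp σ₃ hσ₃.1 hσ₃.2 H' hH'0 hH'1 (v + δ + ε) hc'
    refine ⟨f₂, f₃, fun a => ?_⟩
    set e₃ : Fin n → ℝ := fun k => ((Finset.univ.filter fun t => f₃ t = k).card : ℝ) / m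
      with he₃
    calc ∑ j : Fin n, ∑ k : Fin n, e₂ j * e₃ k * u₁ (a, j, k)
        = ∑ k : Fin n, ∑ j : Fin n, e₂ j * e₃ k * u₁ (a, j, k) := Finset.sum_comm
      _ = ∑ k, e₃ k * H' a k := by
          refine Finset.sum_congr rfl fun k _ => ?_
          rw [hH', Finset.mul_sum]
          exact Finset.sum_congr rfl fun j _ => by ring
      _ ≤ (v + δ + ε) + ε := hf₃ a
      _ = v + 2 * ε + δ := by ring
  -- extract an optimal pair by finiteness
  have hPne : Nonempty ((Fin m → Fin n) × (Fin m → Fin n)) := inferInstance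
  set G : ((Fin m → Fin n) × (Fin m → Fin n)) → ℝ := fun p =>
    ⨆ a : Fin n, ∑ j : Fin n, ∑ k : Fin n,
      (((Finset.univ.filter fun t => p.1 t = j).card : ℝ) / m) *
      (((Finset.univ.filter fun t => p.2 t = k).card : ℝ) / m) * u₁ (a, j, k) with hG
  obtain ⟨p₀, _, hp₀⟩ := Finset.exists_min_image Finset.univ G Finset.univ_nonempty
  refine ⟨p₀.1, p₀.2, ?_⟩
  have hfin : G p₀ ≤ v + 2 * ε := by
    by_contra hcon
    push_neg at hcon
    obtain ⟨f₂, f₃, hgood⟩ := key ((G p₀ - (v + 2 * ε)) / 2) (by linarith)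
    have h1 : G (f₂, f₃) ≤ v + 2 * ε + (G p₀ - (v + 2 * ε)) / 2 := by
      apply ciSup_le
      intro a
      exact hgood a
    have h2 := hp₀ (f₂, f₃) (Finset.mem_univ _)
    linarith
  exact hfin
end

section
/- For all integers m ≥ 1 and c with 1 ≤ c ≤ m, and every real number n ≥ 1 satisfying n < (C(m+1,c))², one has (c/m)² ≤ 4e² · n^{−1/c}. -/
/-- If `1 ≤ c ≤ m` and `1 ≤ n < (C(m+1,c))²`, then `(c/m)² ≤ 4e²·n^{-1/c}`. -/
theorem ratio_sq_le_four_exp_sq_rpow (m c : ℕ) (hc : 1 ≤ c) (hcm : c ≤ m)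
    (n : ℝ) (hn : 1 ≤ n) (hn' : n < ((m + 1).choose c : ℝ) ^ 2) :
    ((c : ℝ) / m) ^ 2 ≤ 4 * Real.exp 1 ^ 2 * n ^ (-(1 / (c : ℝ))) := by
  have hc0 : (0:ℝ) < c := by exact_mod_cast hc
  have hm0 : (0:ℝ) < m := by exact_mod_cast hc.trans hcm
  set A : ℝ := Real.exp 1 * (m + 1) / c with hA
  have hA0 : 0 < A := by positivity
  -- c^c / c! ≤ exp c
  have hfac : (c:ℝ) ^ c / c.factorial ≤ Real.exp c := by
    calc (c:ℝ) ^ c / c.factorial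
        ≤ ∑ i ∈ Finset.range (c+1), (c:ℝ) ^ i / i.factorial := by
          refine Finset.single_le_sum (f := fun i => (c:ℝ) ^ i / i.factorial)
            (fun i _ => by positivity) (Finset.self_mem_range_succ c)
      _ ≤ Real.exp c := Real.sum_le_exp_of_nonneg hc0.le _
  have hexp : Real.exp (c:ℝ) = Real.exp 1 ^ c := by
    rw [← Real.exp_nat_mul]; ring_nf
  have hchoose : ((m + 1).choose c : ℝ) ≤ A ^ c := by
    calc ((m + 1).choose c : ℝ) ≤ ((m:ℝ) + 1) ^ c / c.factorial := by
          have := Nat.choose_le_pow_div (α := ℝ) c (m + 1)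
          push_cast at this ⊢; exact this
      _ ≤ A ^ c := by
          rw [hA, div_pow, mul_pow, ← hexp]
          rw [div_le_iff₀ (by positivity)] at hfac
          rw [div_le_div_iff₀ (by positivity) (by positivity)]
          have hmp : (0:ℝ) ≤ ((m:ℝ)+1)^c := by positivity
          nlinarith [mul_le_mul_of_nonneg_left hfac hmp]
  have hnA : n < A ^ (2 * c) := by
    calc n < ((m + 1).choose c : ℝ) ^ 2 := hn'
      _ ≤ (A ^ c) ^ 2 := by
          exact pow_le_pow_left₀ (by positivity) hchoose 2
      _ = A ^ (2 * c) := by rw [← pow_mul, mul_comm]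
  -- n^(1/c) < A^2
  have key : n ^ ((1:ℝ) / c) < A ^ 2 := by
    have h1 : n ^ ((1:ℝ)/c) < (A ^ (2*c)) ^ ((1:ℝ)/c) :=
      Real.rpow_lt_rpow (by linarith) hnA (by positivity)
    calc n ^ ((1:ℝ)/c) < (A ^ (2*c)) ^ ((1:ℝ)/c) := h1
      _ = A ^ 2 := by
          rw [← Real.rpow_natCast A (2*c), ← Real.rpow_mul hA0.le,
            ← Real.rpow_natCast A 2]
          congr 1
          push_cast
          field_simp
  have hnpos : (0:ℝ) < n ^ ((1:ℝ)/c) := Real.rpow_pos_of_pos (by linarith) _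
  have hinv : (A ^ 2)⁻¹ ≤ n ^ (-(1 / (c:ℝ))) := by
    rw [Real.rpow_neg (by linarith)]
    exact inv_anti₀ hnpos key.le
  have hfinal : ((c : ℝ) / m) ^ 2 ≤ 4 * Real.exp 1 ^ 2 * (A ^ 2)⁻¹ := by
    have hm1 : (1:ℝ) ≤ m := by exact_mod_cast hc.trans hcm
    have he : (0:ℝ) < Real.exp 1 := Real.exp_pos 1
    have hAeq : 4 * Real.exp 1 ^ 2 * (A ^ 2)⁻¹ = 4 * (c:ℝ)^2 / ((m:ℝ)+1)^2 := by
      have h2 : Real.exp 1 ^ 2 = Real.exp 2 := by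
        rw [← Real.exp_nat_mul]; norm_num
      rw [hA]; field_simp
    rw [hAeq, div_pow, div_le_div_iff₀ (by positivity) (by positivity)]
    nlinarith [sq_nonneg ((c:ℝ)*((m:ℝ)-1))]
  calc ((c : ℝ) / m) ^ 2 ≤ 4 * Real.exp 1 ^ 2 * (A ^ 2)⁻¹ := hfinal
    _ ≤ 4 * Real.exp 1 ^ 2 * n ^ (-(1 / (c:ℝ))) := by
        exact mul_le_mul_of_nonneg_left hinv (by positivity)
end

section
/- For all integers n ≥ 1 and c ≥ 1 there exists a payoff function u₁ : Fin n × Fin n × Fin n → ℝ taking only the values 0 and 1 such that: (i) the minmax value for Player 1 of the three-player game with payoff u₁ is at most 4e² · n^{−1/c}; and (ii) for every pair of mixed strategies σ₂, σ₃ on Fin n whose supports each have cardinality at most c, there exists a pure strategy a ∈ Fin n of Player 1 with expected payoff ∑_{j,k} σ₂(j)·σ₃(k)·u₁(a,j,k) = 1. -/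
open Finset

open Finset

/-! ### Auxiliary lemmas -/

lemma count_solutions {F : Type*} [Field F] [Fintype F] [DecidableEq F]
    {d : ℕ} (lam : Fin (d+1) → F) (i0 : Fin (d+1)) (h1 : lam i0 = 1) (v : F) :
    ((Finset.univ : Finset (Fin (d+1) → F)).filter (fun y => ∑ i, lam i * y i = v)).card
      = Fintype.card F ^ d := by
  have key : ((Finset.univ : Finset (Fin (d+1) → F)).filter (fun y => ∑ i, lam i * y i = v)).card
      = (Finset.univ : Finset (Fin d → F)).card := by
    refine Finset.card_bij' (fun y _ => i0.removeNth y)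
      (fun g _ => i0.insertNth (v - ∑ i : Fin d, lam (i0.succAbove i) * g i) g)
      (fun y hy => Finset.mem_univ _) (fun g hg => ?_) (fun y hy => ?_) (fun g hg => ?_)
    · simp only [Finset.mem_filter, Finset.mem_univ, true_and]
      rw [Fin.sum_univ_succAbove
        (fun i => lam i * (Fin.insertNth (α := fun _ => F) i0
          (v - ∑ i : Fin d, lam (i0.succAbove i) * g i) g) i) i0]
      simp only [Fin.insertNth_apply_same, Fin.insertNth_apply_succAbove, h1, one_mul]
      ring
    · simp only [Finset.mem_filter, Finset.mem_univ, true_and] at hy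
      show i0.insertNth (v - ∑ i : Fin d, lam (i0.succAbove i) * (i0.removeNth y) i)
        (i0.removeNth y) = y
      have hsum := Fin.sum_univ_succAbove (fun i => lam i * y i) i0
      rw [hy, h1, one_mul] at hsum
      have hval : v - ∑ i : Fin d, lam (i0.succAbove i) * (i0.removeNth y) i = y i0 := by
        simp only [Fin.removeNth]
        linear_combination hsum
      rw [hval, Fin.insertNth_self_removeNth]
    · ext i
      simp [Fin.removeNth, Fin.insertNth_apply_succAbove]
  rw [key]
  simp [Fintype.card_fun]

lemma exists_functional {F : Type*} [Field F] [Fintype F] [DecidableEq F] {d n : ℕ}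
    (x : Fin n → (Fin (d+1) → F)) (T : Finset (Fin n)) (hne : T.Nonempty) (hcard : T.card ≤ d + 1) :
    ∃ lam : Fin (d+1) → F, (∃ i, lam i = 1) ∧ ∃ v : F, ∀ j ∈ T, ∑ i, lam i * x j i = v := by
  obtain ⟨j0, hj0⟩ := hne
  set S : Finset (Fin n) := T.erase j0 with hS
  let A : (Fin (d+1) → F) →ₗ[F] (S → F) :=
    { toFun := fun lam => fun t => ∑ i, lam i * (x t.1 i - x j0 i)
      map_add' := by
        intro a b; funext t; simp [add_mul, Finset.sum_add_distrib]
      map_smul' := by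
        intro r a; funext t; simp [Finset.mul_sum, mul_assoc] }
  have hker : ∃ lam, lam ∈ LinearMap.ker A ∧ lam ≠ 0 := by
    apply Submodule.exists_mem_ne_zero_of_ne_bot
    intro hbot
    have hinj : Function.Injective A := by
      rw [← LinearMap.ker_eq_bot]; exact hbot
    have hle := LinearMap.finrank_le_finrank_of_injective hinj
    rw [Module.finrank_fintype_fun_eq_card, Module.finrank_fintype_fun_eq_card] at hle
    simp only [Fintype.card_fin, Fintype.card_coe] at hle
    have hS1 : S.card ≤ d := by
      rw [hS, Finset.card_erase_of_mem hj0]; omega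
    omega
  obtain ⟨lam0, hker0, hne0⟩ := hker
  have h0 : ∀ t ∈ S, ∑ i, lam0 i * (x t i - x j0 i) = 0 := by
    intro t ht
    have h := LinearMap.mem_ker.mp hker0
    exact congrFun h ⟨t, ht⟩
  obtain ⟨i0, hi0⟩ : ∃ i, lam0 i ≠ 0 := by
    by_contra h; push_neg at h; exact hne0 (funext h)
  refine ⟨(lam0 i0)⁻¹ • lam0, ⟨i0, by simp [inv_mul_cancel₀ hi0]⟩,
    ∑ i, ((lam0 i0)⁻¹ * lam0 i) * x j0 i, ?_⟩
  intro j hj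
  rcases eq_or_ne j j0 with rfl | hne
  · simp
  · have hjS : j ∈ S := Finset.mem_erase.mpr ⟨hne, hj⟩
    have h := h0 j hjS
    simp only [Pi.smul_apply, smul_eq_mul]
    have expand : ∑ i, (lam0 i0)⁻¹ * lam0 i * x j i - ∑ i, (lam0 i0)⁻¹ * lam0 i * x j0 i
        = (lam0 i0)⁻¹ * ∑ i, lam0 i * (x j i - x j0 i) := by
      rw [Finset.mul_sum, ← Finset.sum_sub_distrib]
      congr 1; funext i; ring
    have h2 : ∑ i, (lam0 i0)⁻¹ * lam0 i * x j i - ∑ i, (lam0 i0)⁻¹ * lam0 i * x j0 i = 0 := by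
      rw [expand, h, mul_zero]
    linear_combination h2

lemma lam_card_le {F : Type*} [Fintype F] [DecidableEq F] [One F] (d : ℕ) :
    Fintype.card {lam : Fin (d+1) → F // ∃ i, lam i = 1} ≤ (d+1) * Fintype.card F ^ d := by
  classical
  have key : Fintype.card {lam : Fin (d+1) → F // ∃ i, lam i = 1}
      ≤ Fintype.card (Fin (d+1) × (Fin d → F)) := by
    apply Fintype.card_le_of_injective
      (fun lam => ((Classical.choose lam.2), (Classical.choose lam.2).removeNth lam.val))
    intro a b hab
    simp only [Prod.mk.injEq] at hab
    obtain ⟨h1, h2⟩ := hab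
    have ha : a.val (Classical.choose a.2) = 1 := Classical.choose_spec a.2
    have hb : b.val (Classical.choose b.2) = 1 := Classical.choose_spec b.2
    apply Subtype.ext
    funext j
    rcases eq_or_ne j (Classical.choose a.2) with rfl | hne
    · rw [ha, h1] at *; rw [hb]
    · obtain ⟨z, hz⟩ := Fin.exists_succAbove_eq hne
      have h3 := congrFun h2 z
      simp only [Fin.removeNth] at h3
      rw [← h1] at h3
      rw [← hz]; exact h3
  calc Fintype.card {lam : Fin (d+1) → F // ∃ i, lam i = 1}
      ≤ Fintype.card (Fin (d+1) × (Fin d → F)) := key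
    _ = (d+1) * Fintype.card F ^ d := by simp [Fintype.card_fun]

lemma lam_card_ge {F : Type*} [Fintype F] [DecidableEq F] [One F] (d : ℕ) :
    Fintype.card F ^ d ≤ Fintype.card {lam : Fin (d+1) → F // ∃ i, lam i = 1} := by
  classical
  have h : Fintype.card (Fin d → F) ≤ Fintype.card {lam : Fin (d+1) → F // ∃ i, lam i = 1} := by
    apply Fintype.card_le_of_injective (fun g => ⟨Fin.cons 1 g, ⟨0, by simp⟩⟩)
    intro a b hab
    simp only [Subtype.mk.injEq] at hab
    have h := congrArg Fin.tail hab
    rwa [Fin.tail_cons, Fin.tail_cons] at h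
  simpa [Fintype.card_fun] using h

lemma sum_fin_lt {M : Type*} [AddCommMonoid M] {n t : ℕ} (ht : t ≤ n) (f : ℕ → M) :
    ∑ j : Fin n, (if (j:ℕ) < t then f j else 0) = ∑ j ∈ Finset.range t, f j := by
  rw [Fin.sum_univ_eq_sum_range (fun j => if j < t then f j else 0) n]
  rw [← Finset.sum_subset (Finset.range_subset_range.mpr ht)
    (fun x _ hx => by rw [if_neg (by simpa using hx)])]
  exact Finset.sum_congr rfl (fun x hx => by rw [if_pos (Finset.mem_range.mp hx)])

lemma key_real {n c : ℕ} (hn : 1 ≤ n) (hc : 1 ≤ c) {K Y : ℝ} (hK : 0 < K) (hY : 0 < Y)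
    (h : (n:ℝ) ≤ (K * Y) ^ c) : Y⁻¹ ≤ K * (n:ℝ) ^ (-(1/(c:ℝ))) := by
  have hn0 : (0:ℝ) < n := by exact_mod_cast hn
  have hc0 : (c:ℝ) ≠ 0 := by positivity
  have h1 : (n:ℝ) ^ ((1:ℝ)/c) ≤ K * Y := by
    have h2 := Real.rpow_le_rpow (le_of_lt hn0) h (by positivity : (0:ℝ) ≤ 1/c)
    rwa [← Real.rpow_natCast (K*Y) c, ← Real.rpow_mul (by positivity), mul_one_div,
      div_self hc0, Real.rpow_one] at h2
  have hx : (0:ℝ) < (n:ℝ) ^ ((1:ℝ)/c) := Real.rpow_pos_of_pos hn0 _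
  rw [Real.rpow_neg (le_of_lt hn0), inv_eq_one_div, inv_eq_one_div, mul_one_div,
    div_le_div_iff₀ hY hx]
  nlinarith

lemma prod_split {n : ℕ} (σ₂ σ₃ : Fin n → ℝ) (P Q : Fin n → Prop)
    [DecidablePred P] [DecidablePred Q] :
    ∑ j, ∑ k, σ₂ j * σ₃ k * (if P j ∧ Q k then (1:ℝ) else 0)
      = (∑ j, σ₂ j * (if P j then (1:ℝ) else 0)) * (∑ k, σ₃ k * (if Q k then (1:ℝ) else 0)) := by
  rw [Finset.sum_mul_sum]
  refine Finset.sum_congr rfl fun j _ => Finset.sum_congr rfl fun k _ => ?_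
  by_cases hP : P j <;> by_cases hQ : Q k <;> simp [hP, hQ] <;> ring

/-- the number `(d+1) ≤ e^(d+1)` as reals -/
lemma nat_le_exp (d : ℕ) : ((d:ℝ)+1) ≤ Real.exp 1 ^ (d+1) := by
  have h := Real.add_one_le_exp (d+1 : ℝ)
  rw [← Real.exp_one_rpow ((d:ℝ)+1)] at h
  have : Real.exp 1 ^ ((d:ℝ)+1) = Real.exp 1 ^ (d+1) := by
    rw [← Real.rpow_natCast (Real.exp 1) (d+1)]
    norm_num
  rw [this] at h
  linarith


/-- Number of (normalized functional, value) pairs over `ZMod q` (totalized via `q-1+1`). -/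
def Mfun (d q : ℕ) : ℕ :=
  Fintype.card ({lam : Fin (d+1) → ZMod (q-1+1) // ∃ i, lam i = 1} × ZMod (q-1+1))

lemma Mfun_eq (d t : ℕ) :
    Mfun d (t+1) = Fintype.card ({lam : Fin (d+1) → ZMod (t+1) // ∃ i, lam i = 1} × ZMod (t+1)) :=
  rfl

lemma Mfun_bounds (d t : ℕ) :
    (t+1)^(d+1) ≤ Mfun d (t+1) ∧ Mfun d (t+1) ≤ (d+1) * (t+1)^(d+1) := by
  classical
  have hc : Fintype.card (ZMod (t+1)) = t+1 := ZMod.card _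
  rw [Mfun_eq, Fintype.card_prod, hc]
  constructor
  · calc (t+1)^(d+1) = (t+1)^d * (t+1) := by ring
      _ ≤ _ := Nat.mul_le_mul_right _ (by
        simpa [hc] using lam_card_ge (F := ZMod (t+1)) d)
  · calc Fintype.card {lam : Fin (d+1) → ZMod (t+1) // ∃ i, lam i = 1} * (t+1)
        ≤ ((d+1) * (t+1)^d) * (t+1) := Nat.mul_le_mul_right _ (by
          simpa [hc] using lam_card_le (F := ZMod (t+1)) d)
      _ = (d+1) * (t+1)^(d+1) := by ring

lemma minmax_le {n : ℕ} (hn : 0 < n) (u : Fin n × Fin n × Fin n → ℝ)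
    (hu : ∀ x, 0 ≤ u x) (σ₂ σ₃ : Fin n → ℝ) (h2 : IsMixedStrategy σ₂) (h3 : IsMixedStrategy σ₃)
    (B : ℝ) (hB : ∀ a, ∑ j, ∑ k, σ₂ j * σ₃ k * u (a,j,k) ≤ B) :
    minmaxVal u ≤ B := by
  have : Nonempty (Fin n) := ⟨⟨0, hn⟩⟩
  have hbdd : BddBelow { v | ∃ σ₂ : Fin n → ℝ, ∃ σ₃ : Fin n → ℝ,
      IsMixedStrategy σ₂ ∧ IsMixedStrategy σ₃ ∧
      v = ⨆ a : Fin n, ∑ j : Fin n, ∑ k : Fin n, σ₂ j * σ₃ k * u (a, j, k) } := by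
    refine ⟨0, ?_⟩
    rintro v ⟨τ₂, τ₃, ht2, ht3, rfl⟩
    have h0 : ∀ a : Fin n, (0:ℝ) ≤ ∑ j : Fin n, ∑ k : Fin n, τ₂ j * τ₃ k * u (a, j, k) := by
      intro a
      apply Finset.sum_nonneg; intro j _
      apply Finset.sum_nonneg; intro k _
      have := ht2.1 j; have := ht3.1 k; have := hu (a, j, k); positivity
    have a0 : Fin n := Classical.arbitrary _
    exact le_trans (h0 a0)
      (le_ciSup (f := fun a : Fin n => ∑ j : Fin n, ∑ k : Fin n, τ₂ j * τ₃ k * u (a, j, k))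
        (Set.Finite.bddAbove (Set.finite_range _)) a0)
  refine le_trans (csInf_le hbdd ⟨σ₂, σ₃, h2, h3, rfl⟩) (ciSup_le hB)

lemma supp_ne {n : ℕ} (σ : Fin n → ℝ) (hσ : IsMixedStrategy σ) :
    (Finset.univ.filter fun s => 0 < σ s).Nonempty := by
  classical
  by_contra hemp
  rw [Finset.not_nonempty_iff_eq_empty] at hemp
  have hz : ∀ s, σ s = 0 := by
    intro s
    have hns : ¬ (0 < σ s) := by
      intro hpos
      have : s ∈ Finset.univ.filter fun s => 0 < σ s :=
        Finset.mem_filter.mpr ⟨Finset.mem_univ _, hpos⟩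
      rw [hemp] at this; exact absurd this (Finset.notMem_empty _)
    linarith [hσ.1 s]
  have h1 := hσ.2
  rw [Finset.sum_congr rfl (fun s _ => hz s)] at h1
  simp at h1

lemma main_construction (n d t : ℕ) (hnpos : 0 < n)
    (hprime : Nat.Prime (t+1)) (hM2 : (Mfun d (t+1))^2 ≤ n)
    (hreal : (n:ℝ) ≤ (4 * Real.exp 1 ^ 2 * (((t+1:ℕ)):ℝ)^2)^(d+1)) :
    ∃ u₁ : Fin n × Fin n × Fin n → ℝ,
      (∀ x, u₁ x = 0 ∨ u₁ x = 1) ∧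
      minmaxVal u₁ ≤ 4 * Real.exp 1 ^ 2 * (n : ℝ) ^ (-(1 / ((d+1 : ℕ) : ℝ))) ∧
      ∀ σ₂ σ₃ : Fin n → ℝ, IsMixedStrategy σ₂ → IsMixedStrategy σ₃ →
        (Finset.univ.filter fun s => 0 < σ₂ s).card ≤ d+1 →
        (Finset.univ.filter fun s => 0 < σ₃ s).card ≤ d+1 →
        ∃ a : Fin n, ∑ j : Fin n, ∑ k : Fin n, σ₂ j * σ₃ k * u₁ (a, j, k) = 1 := by
  classical
  haveI : Fact (Nat.Prime (t+1)) := ⟨hprime⟩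
  have hcardF : Fintype.card (ZMod (t+1)) = t+1 := ZMod.card _
  have hCeq : Mfun d (t+1)
      = Fintype.card (({lam : Fin (d+1) → ZMod (t+1) // ∃ i, lam i = 1} × ZMod (t+1))) :=
    Mfun_eq d t
  haveI hCCne : Nonempty (({lam : Fin (d+1) → ZMod (t+1) // ∃ i, lam i = 1} × ZMod (t+1)) ×
      ({lam : Fin (d+1) → ZMod (t+1) // ∃ i, lam i = 1} × ZMod (t+1))) :=
    ⟨⟨⟨⟨fun _ => 1, ⟨0, rfl⟩⟩, 0⟩, ⟨⟨fun _ => 1, ⟨0, rfl⟩⟩, 0⟩⟩⟩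
  have hCCn : Fintype.card ((({lam : Fin (d+1) → ZMod (t+1) // ∃ i, lam i = 1} × ZMod (t+1))) ×
      (({lam : Fin (d+1) → ZMod (t+1) // ∃ i, lam i = 1} × ZMod (t+1)))) ≤ Fintype.card (Fin n) := by
    rw [Fintype.card_prod, ← hCeq, Fintype.card_fin, ← pow_two]
    exact hM2
  obtain ⟨emb⟩ := Function.Embedding.nonempty_of_card_le hCCn
  set dec := Function.invFun emb with hdecdef
  have hdecl : ∀ p, dec (emb p) = p := Function.leftInverse_invFun emb.injective
  set tt := (t+1)^(d+1) with htt
  have httpos : 0 < tt := by positivity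
  have httn : tt ≤ n := by
    have h1 := (Mfun_bounds d t).1
    have h2 : Mfun d (t+1) ≤ (Mfun d (t+1))^2 := by nlinarith [h1, httpos]
    exact le_trans h1 (le_trans h2 hM2)
  have hVcard : Fintype.card (Fin (d+1) → ZMod (t+1)) = tt := by
    rw [Fintype.card_fun, hcardF, Fintype.card_fin, htt]
  set EV := Fintype.equivFinOfCardEq hVcard with hEV
  set xnat : ℕ → (Fin (d+1) → ZMod (t+1)) := fun m => EV.symm ⟨m % tt, Nat.mod_lt _ httpos⟩
    with hxnat
  set x : Fin n → (Fin (d+1) → ZMod (t+1)) := fun j => xnat j.val with hx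
  refine ⟨fun w => if (∑ i, ((dec w.1).1.1.val i) * x w.2.1 i = (dec w.1).1.2)
      ∧ (∑ i, ((dec w.1).2.1.val i) * x w.2.2 i = (dec w.1).2.2) then 1 else 0, ?_, ?_, ?_⟩
  · intro w
    dsimp only
    split
    · right; rfl
    · left; rfl
  · -- the minmax bound
    set σ : Fin n → ℝ := fun j => if (j:ℕ) < tt then ((tt:ℕ):ℝ)⁻¹ else 0 with hσ
    have hmix : IsMixedStrategy σ := by
      constructor
      · intro s; rw [hσ]; dsimp only; split <;> positivity
      · rw [hσ]
        rw [sum_fin_lt httn (fun _ => ((tt:ℕ):ℝ)⁻¹)]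
        rw [Finset.sum_const, Finset.card_range, nsmul_eq_mul]
        rw [mul_inv_cancel₀ (by positivity : ((tt:ℕ):ℝ) ≠ 0)]
    have hinner : ∀ (lam : Fin (d+1) → ZMod (t+1)) (i0 : Fin (d+1)) (hi0 : lam i0 = 1)
        (v : ZMod (t+1)),
        ∑ j : Fin n, σ j * (if ∑ i, lam i * x j i = v then (1:ℝ) else 0)
          = (((t+1:ℕ)):ℝ)⁻¹ := by
      intro lam i0 hi0 v
      have hterm : ∀ j : Fin n, σ j * (if ∑ i, lam i * x j i = v then (1:ℝ) else 0)
          = (if (j:ℕ) < tt then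
              (fun m : ℕ => ((tt:ℕ):ℝ)⁻¹ * (if ∑ i, lam i * xnat m i = v then (1:ℝ) else 0)) (j:ℕ)
            else 0) := by
        intro j
        rw [hσ, hx]
        dsimp only
        by_cases hj : (j:ℕ) < tt
        · rw [if_pos hj, if_pos hj]
        · rw [if_neg hj, if_neg hj, zero_mul]
      rw [Finset.sum_congr rfl (fun j _ => hterm j)]
      rw [sum_fin_lt httn
        (fun m : ℕ => ((tt:ℕ):ℝ)⁻¹ * (if ∑ i, lam i * xnat m i = v then (1:ℝ) else 0))]
      rw [← Finset.mul_sum]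
      have h2 : ∑ m ∈ Finset.range tt, (if ∑ i, lam i * xnat m i = v then (1:ℝ) else 0)
          = ∑ y : Fin (d+1) → ZMod (t+1), (if ∑ i, lam i * y i = v then (1:ℝ) else 0) := by
        rw [← Fin.sum_univ_eq_sum_range
          (fun m => if ∑ i, lam i * xnat m i = v then (1:ℝ) else 0) tt]
        rw [← Equiv.sum_comp EV.symm (fun y => if ∑ i, lam i * y i = v then (1:ℝ) else 0)]
        apply Finset.sum_congr rfl
        intro m _
        have hm : xnat (m:ℕ) = EV.symm m := by
          simp only [hxnat]
          have hmk : (⟨(m:ℕ) % tt, Nat.mod_lt _ httpos⟩ : Fin tt) = m := by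
            apply Fin.ext
            exact Nat.mod_eq_of_lt m.isLt
          rw [hmk]
        rw [hm]
      rw [h2, Finset.sum_boole, count_solutions lam i0 hi0 v, hcardF]
      rw [htt]
      push_cast
      rw [pow_succ]
      have hpos : ((t:ℝ)+1) > 0 := by positivity
      field_simp
    have hpayoff : ∀ a : Fin n,
        ∑ j : Fin n, ∑ k : Fin n, σ j * σ k *
          (if (∑ i, ((dec a).1.1.val i) * x j i = (dec a).1.2)
            ∧ (∑ i, ((dec a).2.1.val i) * x k i = (dec a).2.2) then (1:ℝ) else 0)
          = (((t+1:ℕ)):ℝ)⁻¹ * (((t+1:ℕ)):ℝ)⁻¹ := by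
      intro a
      rw [prod_split σ σ _ _]
      rw [hinner _ (Classical.choose (dec a).1.1.2) (Classical.choose_spec (dec a).1.1.2),
        hinner _ (Classical.choose (dec a).2.1.2) (Classical.choose_spec (dec a).2.1.2)]
    have hkey := key_real (n := n) (c := d+1) hnpos (Nat.le_add_left 1 d)
      (by positivity : (0:ℝ) < 4 * Real.exp 1 ^ 2)
      (by positivity : (0:ℝ) < (((t+1:ℕ)):ℝ)^2) (by exact_mod_cast hreal)
    refine minmax_le hnpos _ ?_ σ σ hmix hmix _ ?_
    · intro w
      split <;> norm_num
    · intro a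
      dsimp only
      rw [hpayoff a]
      calc (((t+1:ℕ)):ℝ)⁻¹ * (((t+1:ℕ)):ℝ)⁻¹ = ((((t+1:ℕ)):ℝ)^2)⁻¹ := by
            rw [pow_two, mul_inv]
        _ ≤ 4 * Real.exp 1 ^ 2 * (n:ℝ) ^ (-(1/((d+1:ℕ):ℝ))) := hkey
  · -- the covering property
    intro σ₂ σ₃ h2 h3 hc2 hc3
    obtain ⟨lam2, hex2, v2, hcov2⟩ :=
      exists_functional x (Finset.univ.filter fun s => 0 < σ₂ s) (supp_ne σ₂ h2) hc2
    obtain ⟨lam3, hex3, v3, hcov3⟩ :=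
      exists_functional x (Finset.univ.filter fun s => 0 < σ₃ s) (supp_ne σ₃ h3) hc3
    refine ⟨emb ((⟨lam2, hex2⟩, v2), (⟨lam3, hex3⟩, v3)), ?_⟩
    have hdeca : dec (emb ((⟨lam2, hex2⟩, v2), (⟨lam3, hex3⟩, v3)))
        = ((⟨lam2, hex2⟩, v2), (⟨lam3, hex3⟩, v3)) := hdecl _
    dsimp only
    simp only [hdeca]
    rw [prod_split σ₂ σ₃ (fun j => ∑ i, lam2 i * x j i = v2) (fun k => ∑ i, lam3 i * x k i = v3)]
    have f2 : ∑ j : Fin n, σ₂ j * (if ∑ i, lam2 i * x j i = v2 then (1:ℝ) else 0) = 1 := by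
      have hstep : ∑ j : Fin n, σ₂ j * (if ∑ i, lam2 i * x j i = v2 then (1:ℝ) else 0)
          = ∑ j : Fin n, σ₂ j := by
        apply Finset.sum_congr rfl
        intro j _
        by_cases hj : 0 < σ₂ j
        · rw [if_pos (hcov2 j (Finset.mem_filter.mpr ⟨Finset.mem_univ _, hj⟩)), mul_one]
        · rw [le_antisymm (not_lt.mp hj) (h2.1 j), zero_mul]
      rw [hstep, h2.2]
    have f3 : ∑ k : Fin n, σ₃ k * (if ∑ i, lam3 i * x k i = v3 then (1:ℝ) else 0) = 1 := by
      have hstep : ∑ k : Fin n, σ₃ k * (if ∑ i, lam3 i * x k i = v3 then (1:ℝ) else 0)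
          = ∑ k : Fin n, σ₃ k := by
        apply Finset.sum_congr rfl
        intro k _
        by_cases hk : 0 < σ₃ k
        · rw [if_pos (hcov3 k (Finset.mem_filter.mpr ⟨Finset.mem_univ _, hk⟩)), mul_one]
        · rw [le_antisymm (not_lt.mp hk) (h3.1 k), zero_mul]
      rw [hstep, h3.2]
    rw [f2, f3, one_mul]

/-- For all `n, c ≥ 1` there is an `n × n × n` game with 0-1 payoffs whose minmax value
for Player 1 is at most `4e²·n^{-1/c}`, yet against every pair of mixed strategies of
Players 2 and 3 with supports of size at most `c`, Player 1 has a pure strategy with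
expected payoff 1. -/
theorem small_support_cannot_approximate (n c : ℕ) (hn : 1 ≤ n) (hc : 1 ≤ c) :
    ∃ u₁ : Fin n × Fin n × Fin n → ℝ,
      (∀ x, u₁ x = 0 ∨ u₁ x = 1) ∧
      minmaxVal u₁ ≤ 4 * Real.exp 1 ^ 2 * (n : ℝ) ^ (-(1 / (c : ℝ))) ∧
      ∀ σ₂ σ₃ : Fin n → ℝ, IsMixedStrategy σ₂ → IsMixedStrategy σ₃ →
        (Finset.univ.filter fun s => 0 < σ₂ s).card ≤ c →
        (Finset.univ.filter fun s => 0 < σ₃ s).card ≤ c →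
        ∃ a : Fin n, ∑ j : Fin n, ∑ k : Fin n, σ₂ j * σ₃ k * u₁ (a, j, k) = 1 := by
  classical
  have hnpos : 0 < n := hn
  obtain ⟨d, rfl⟩ : ∃ d, c = d + 1 := ⟨c - 1, by omega⟩
  have hKpos : (0:ℝ) < 4 * Real.exp 1 ^ 2 := by positivity
  have hd1exp : ((d:ℝ)+1) ≤ Real.exp 1 ^ (d+1) := nat_le_exp d
  by_cases hsmall : (n:ℝ) ≤ (4 * Real.exp 1 ^ 2 * 1) ^ (d+1)
  · -- trivial all-ones game
    refine ⟨fun _ => 1, fun x => Or.inr rfl, ?_, ?_⟩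
    · have hkey := key_real (c := d+1) hn (Nat.le_add_left 1 d) hKpos one_pos hsmall
      simp only [inv_one] at hkey
      have hmix : IsMixedStrategy (fun _ : Fin n => (n:ℝ)⁻¹) := by
        constructor
        · intro s; positivity
        · rw [Finset.sum_const, Finset.card_univ, Fintype.card_fin, nsmul_eq_mul]
          rw [mul_inv_cancel₀ (by positivity : ((n:ℕ):ℝ) ≠ 0)]
      apply minmax_le hnpos _ (fun _ => by norm_num) _ _ hmix hmix
      intro a
      have hsum : ∑ j : Fin n, ∑ k : Fin n, (fun _ : Fin n => (n:ℝ)⁻¹) j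
            * (fun _ : Fin n => (n:ℝ)⁻¹) k * 1
          = (∑ j : Fin n, (n:ℝ)⁻¹) * (∑ k : Fin n, (n:ℝ)⁻¹) := by
        rw [Finset.sum_mul_sum]
        simp [mul_one]
      rw [hsum, hmix.2, one_mul]
      exact hkey
    · intro σ₂ σ₃ h2 h3 _ _
      refine ⟨⟨0, hnpos⟩, ?_⟩
      have hsum : ∑ j : Fin n, ∑ k : Fin n, σ₂ j * σ₃ k * 1
          = (∑ j : Fin n, σ₂ j) * (∑ k : Fin n, σ₃ k) := by
        rw [Finset.sum_mul_sum]; simp [mul_one]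
      rw [hsum, h2.2, h3.2, one_mul]
  · -- the real construction
    push_neg at hsmall
    rw [mul_one] at hsmall
    have hswap : (Real.exp 1 ^ (d+1))^2 = (Real.exp 1 ^ 2)^(d+1) := by
      rw [← pow_mul, ← pow_mul, Nat.mul_comm]
    have hsq : ((d:ℝ)+1)^2 ≤ (Real.exp 1 ^ (d+1))^2 :=
      pow_le_pow_left₀ (by positivity) hd1exp 2
    have hlarge : ((d+1) * 2^(d+1))^2 ≤ n := by
      have h1 : ((((d+1) * 2^(d+1))^2 : ℕ) : ℝ) ≤ (4 * Real.exp 1 ^ 2)^(d+1) := by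
        push_cast
        have h4 : ((2:ℝ)^(d+1))^2 = (4:ℝ)^(d+1) := by
          rw [← pow_mul, show (4:ℝ) = 2^2 by norm_num, ← pow_mul, Nat.mul_comm]
        calc (((d:ℝ)+1) * 2^(d+1))^2 = ((d:ℝ)+1)^2 * ((2:ℝ)^(d+1))^2 := by ring
          _ ≤ (Real.exp 1 ^ (d+1))^2 * ((2:ℝ)^(d+1))^2 :=
              mul_le_mul_of_nonneg_right hsq (by positivity)
          _ = (Real.exp 1 ^ 2)^(d+1) * (4:ℝ)^(d+1) := by rw [hswap, h4]
          _ = (4 * Real.exp 1 ^ 2)^(d+1) := by rw [← mul_pow]; ring_nf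
      have h2 : ((((d+1) * 2^(d+1))^2 : ℕ) : ℝ) < (n:ℝ) := lt_of_le_of_lt h1 hsmall
      exact_mod_cast le_of_lt h2
    have hP2 : Nat.Prime 2 ∧ (Mfun d 2)^2 ≤ n := by
      refine ⟨Nat.prime_two, ?_⟩
      have hb : Mfun d (1+1) ≤ (d+1) * (1+1)^(d+1) := (Mfun_bounds d 1).2
      calc (Mfun d 2)^2 ≤ ((d+1) * 2^(d+1))^2 := Nat.pow_le_pow_left hb 2
        _ ≤ n := hlarge
    have h2n : 2 ≤ n := by
      have h1 : 2 ≤ (d+1) * 2^(d+1) := by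
        have h2 : 2 ≤ 2^(d+1) := Nat.le_self_pow (Nat.succ_ne_zero d) 2
        have h3 : 1 * 2^(d+1) ≤ (d+1) * 2^(d+1) :=
          Nat.mul_le_mul_right _ (Nat.le_add_left 1 d)
        omega
      have h4 : 2 ≤ ((d+1) * 2^(d+1))^2 := by nlinarith [h1]
      omega
    set Pp : ℕ → Prop := fun r => Nat.Prime r ∧ (Mfun d r)^2 ≤ n with hPp
    haveI : DecidablePred Pp := Classical.decPred _
    have hPq : Pp (Nat.findGreatest Pp n) := Nat.findGreatest_spec h2n hP2
    obtain ⟨t, hqt⟩ : ∃ t, Nat.findGreatest Pp n = t + 1 :=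
      ⟨Nat.findGreatest Pp n - 1, by have := hPq.1.two_le; omega⟩
    have hprime : Nat.Prime (t+1) := hqt ▸ hPq.1
    have hM2 : (Mfun d (t+1))^2 ≤ n := hqt ▸ hPq.2
    -- Bertrand's postulate and maximality of the chosen prime
    obtain ⟨p, hpp, hqp, hp2q⟩ :=
      Nat.exists_prime_lt_and_le_two_mul (Nat.findGreatest Pp n)
        (by have := hPq.1.two_le; omega)
    have hnp : n < (Mfun d p)^2 := by
      by_contra hle
      push_neg at hle
      obtain ⟨s, hs⟩ : ∃ s, p = s+1 := ⟨p-1, by have := hpp.two_le; omega⟩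
      have hpM : p ≤ Mfun d p := by
        conv_lhs => rw [hs]
        rw [hs]
        calc s+1 ≤ (s+1)^(d+1) := Nat.le_self_pow (Nat.succ_ne_zero d) _
          _ ≤ Mfun d (s+1) := (Mfun_bounds d s).1
      have hpn : p ≤ n := by nlinarith [hpM, hle]
      have hPpp : Pp p := by simp only [hPp]; exact ⟨hpp, hle⟩
      have := Nat.le_findGreatest hpn hPpp
      omega
    obtain ⟨s, hs⟩ : ∃ s, p = s+1 := ⟨p-1, by have := hpp.two_le; omega⟩
    have hub : Mfun d p ≤ (d+1) * (2*(t+1))^(d+1) := by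
      rw [hs]
      calc Mfun d (s+1) ≤ (d+1)*(s+1)^(d+1) := (Mfun_bounds d s).2
        _ ≤ (d+1) * (2*(t+1))^(d+1) := by
          apply Nat.mul_le_mul_left
          apply Nat.pow_le_pow_left
          omega
    have hchain : n < ((d+1) * (2*(t+1))^(d+1))^2 :=
      lt_of_lt_of_le hnp (Nat.pow_le_pow_left hub 2)
    have hreal : (n:ℝ) ≤ (4 * Real.exp 1 ^ 2 * (((t+1:ℕ)):ℝ)^2)^(d+1) := by
      have h1 : (n:ℝ) < (((d:ℝ)+1) * (2*((t:ℝ)+1))^(d+1))^2 := by exact_mod_cast hchain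
      refine le_trans (le_of_lt h1) ?_
      have hA : ∀ y : ℝ, (y^(d+1))^2 = (y^2)^(d+1) := fun y => by
        rw [← pow_mul, ← pow_mul, Nat.mul_comm]
      calc (((d:ℝ)+1) * (2*((t:ℝ)+1))^(d+1))^2
          = ((d:ℝ)+1)^2 * (((2*((t:ℝ)+1))^(d+1))^2) := by ring
        _ ≤ (Real.exp 1 ^ (d+1))^2 * (((2*((t:ℝ)+1))^(d+1))^2) :=
            mul_le_mul_of_nonneg_right hsq (by positivity)
        _ = (Real.exp 1 ^ 2)^(d+1) * ((2*((t:ℝ)+1))^2)^(d+1) := by rw [hA, hA]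
        _ = (4 * Real.exp 1 ^ 2 * (((t+1:ℕ)):ℝ)^2)^(d+1) := by
            rw [← mul_pow]; congr 1; push_cast; ring
    exact main_construction n d t hnpos hprime hM2 hreal
end

section
/- Consider the three-player 3×2×2 game with Player 1's payoff u₁ : Fin 3 × Fin 2 × Fin 2 → ℝ given by: u₁(0,j,k) = 1 if j = 0 and k = 0 and 0 otherwise; u₁(1,j,k) = 1 if j = 1 and 0 otherwise; u₁(2,j,k) = 1 if k = 1 and 0 otherwise. All payoffs are 0 or 1. Then the minmax value for Player 1 equals (3 − √5)/2; in particular it is irrational. Equivalently, min over p,q ∈ [0,1] of max{p·q, 1−p, 1−q} equals (3 − √5)/2. -/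
lemma sup_fin3 (f : Fin 3 → ℝ) : (⨆ a : Fin 3, f a) = max (f 0) (max (f 1) (f 2)) := by
  apply le_antisymm
  · apply ciSup_le
    intro a
    fin_cases a <;> simp [le_max_iff]
  · have h := Finite.bddAbove_range f
    apply max_le (le_ciSup h 0) (max_le (le_ciSup h 1) (le_ciSup h 2))

/-- The `3 × 2 × 2` game with 0-1 payoffs `u₁(0,j,k) = [j = 0 ∧ k = 0]`,
`u₁(1,j,k) = [j = 1]`, `u₁(2,j,k) = [k = 1]` has minmax value `(3 - √5)/2` for
Player 1, which is irrational; equivalently,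
`min_{p,q ∈ [0,1]} max {pq, 1-p, 1-q} = (3 - √5)/2`. -/
theorem minmax_irrational_two_payoffs :
    minmaxVal (fun p : Fin 3 × Fin 2 × Fin 2 =>
        if p.1 = 0 then (if p.2.1 = 0 ∧ p.2.2 = 0 then (1 : ℝ) else 0)
        else if p.1 = 1 then (if p.2.1 = 1 then (1 : ℝ) else 0)
        else (if p.2.2 = 1 then (1 : ℝ) else 0))
      = (3 - Real.sqrt 5) / 2 ∧
    Irrational ((3 - Real.sqrt 5) / 2) ∧
    sInf { v : ℝ | ∃ p ∈ Set.Icc (0 : ℝ) 1, ∃ q ∈ Set.Icc (0 : ℝ) 1,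
        v = max (p * q) (max (1 - p) (1 - q)) } = (3 - Real.sqrt 5) / 2 := by
  set u : Fin 3 × Fin 2 × Fin 2 → ℝ := fun p =>
        if p.1 = 0 then (if p.2.1 = 0 ∧ p.2.2 = 0 then (1 : ℝ) else 0)
        else if p.1 = 1 then (if p.2.1 = 1 then (1 : ℝ) else 0)
        else (if p.2.2 = 1 then (1 : ℝ) else 0) with hu
  set B : Set ℝ := { v : ℝ | ∃ p ∈ Set.Icc (0 : ℝ) 1, ∃ q ∈ Set.Icc (0 : ℝ) 1,
        v = max (p * q) (max (1 - p) (1 - q)) } with hB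
  -- numeric facts
  have h5 : Real.sqrt 5 * Real.sqrt 5 = 5 := Real.mul_self_sqrt (by norm_num)
  have h5nn := Real.sqrt_nonneg 5
  set g : ℝ := (Real.sqrt 5 - 1) / 2 with hg
  set c : ℝ := (3 - Real.sqrt 5) / 2 with hc
  have hgg : g * g = c := by rw [hg, hc]; nlinarith
  have hg0 : 0 ≤ g := by rw [hg]; nlinarith
  have hg1 : g ≤ 1 := by rw [hg]; nlinarith
  have hcg : c = 1 - g := by rw [hg, hc]; ring
  -- the two sets are equal
  have hset : { v | ∃ σ₂ : Fin 2 → ℝ, ∃ σ₃ : Fin 2 → ℝ,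
      IsMixedStrategy σ₂ ∧ IsMixedStrategy σ₃ ∧
      v = ⨆ a : Fin 3, ∑ j : Fin 2, ∑ k : Fin 2, σ₂ j * σ₃ k * u (a, j, k) } = B := by
    ext v
    constructor
    · rintro ⟨σ₂, σ₃, ⟨h2n, h2s⟩, ⟨h3n, h3s⟩, rfl⟩
      rw [Fin.sum_univ_two] at h2s h3s
      refine ⟨σ₂ 0, ⟨h2n 0, by linarith [h2n 1]⟩, σ₃ 0, ⟨h3n 0, by linarith [h3n 1]⟩, ?_⟩
      rw [sup_fin3]
      congr 1
      · simp [hu, Fin.sum_univ_two]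
      · congr 1
        · simp [hu, Fin.sum_univ_two]
          rw [← mul_add, h3s, mul_one]; linarith
        · simp [hu, Fin.sum_univ_two]
          rw [← add_mul, h2s, one_mul]; linarith
    · rintro ⟨p, ⟨hp0, hp1⟩, q, ⟨hq0, hq1⟩, rfl⟩
      refine ⟨![p, 1 - p], ![q, 1 - q], ⟨?_, ?_⟩, ⟨?_, ?_⟩, ?_⟩
      · intro s; fin_cases s <;> simp <;> linarith
      · simp [Fin.sum_univ_two]
      · intro s; fin_cases s <;> simp <;> linarith
      · simp [Fin.sum_univ_two]
      · rw [sup_fin3]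
        congr 1
        · simp [hu, Fin.sum_univ_two]
        · congr 1
          · simp [hu, Fin.sum_univ_two]; ring
          · simp [hu, Fin.sum_univ_two]; ring
  -- c ∈ B
  have hmem : c ∈ B := by
    refine ⟨g, ⟨hg0, hg1⟩, g, ⟨hg0, hg1⟩, ?_⟩
    rw [hgg, ← hcg]
    simp
  -- c is a lower bound of B
  have hlb : ∀ v ∈ B, c ≤ v := by
    rintro v ⟨p, ⟨hp0, hp1⟩, q, ⟨hq0, hq1⟩, rfl⟩
    rcases le_or_gt p g with h | h
    · have : c ≤ 1 - p := by rw [hcg]; linarith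
      exact this.trans ((le_max_left _ _).trans (le_max_right _ _))
    · rcases le_or_gt q g with h' | h'
      · have : c ≤ 1 - q := by rw [hcg]; linarith
        exact this.trans ((le_max_right _ _).trans (le_max_right _ _))
      · have : c ≤ p * q := by
          rw [← hgg]
          exact mul_le_mul h.le h'.le hg0 (by linarith)
        exact this.trans (le_max_left _ _)
  have hInfB : sInf B = c :=
    le_antisymm (csInf_le ⟨c, hlb⟩ hmem) (le_csInf ⟨c, hmem⟩ hlb)
  refine ⟨?_, ?_, hInfB⟩
  · rw [minmaxVal, hset, hInfB]
  · have h5irr : Irrational (Real.sqrt 5) := by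
      have := Nat.Prime.irrational_sqrt (by norm_num : Nat.Prime 5)
      simpa using this
    rintro ⟨r, hr⟩
    exact h5irr ⟨3 - 2 * r, by push_cast; linarith [hr]⟩
end

section
/- Let S₂, S₃ be nonempty finite strategy sets and let u₁ : Fin 2 × S₂ × S₃ → ℝ take only the values 0 and 1. If either (a) there exist j ∈ S₂ and k, k' ∈ S₃ with u₁(0,j,k) = 0 and u₁(1,j,k') = 0, or (b) there exist k ∈ S₃ and j, j' ∈ S₂ with u₁(0,j,k) = 0 and u₁(1,j',k) = 0, then the minmax value for Player 1 is at most 1/2. -/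
/-- Cases 3 and 4: if one bully has a pure strategy letting the other play matching
pennies against Player 1, the minmax value for Player 1 is at most 1/2 in a 0-1 game. -/
theorem minmax_le_half_of_matching_pennies {S₂ S₃ : Type*} [Fintype S₂] [Fintype S₃]
    [Nonempty S₂] [Nonempty S₃]
    (u₁ : Fin 2 × S₂ × S₃ → ℝ) (h01 : ∀ x, u₁ x = 0 ∨ u₁ x = 1)
    (h : (∃ (j : S₂) (k k' : S₃), u₁ (0, j, k) = 0 ∧ u₁ (1, j, k') = 0) ∨
         (∃ (k : S₃) (j j' : S₂), u₁ (0, j, k) = 0 ∧ u₁ (1, j', k) = 0)) :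
    minmaxVal u₁ ≤ 1 / 2 := by
  classical
  have hu0 : ∀ x, 0 ≤ u₁ x := fun x => (h01 x).elim (fun h => h.ge) (fun h => h ▸ zero_le_one)
  have hu1 : ∀ x, u₁ x ≤ 1 := fun x => (h01 x).elim (fun h => h ▸ zero_le_one) le_of_eq
  have hbdd : BddBelow { v | ∃ σ₂ : S₂ → ℝ, ∃ σ₃ : S₃ → ℝ,
      IsMixedStrategy σ₂ ∧ IsMixedStrategy σ₃ ∧
      v = ⨆ a : Fin 2, ∑ j : S₂, ∑ k : S₃, σ₂ j * σ₃ k * u₁ (a, j, k) } := by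
    refine ⟨0, ?_⟩
    rintro v ⟨σ₂, σ₃, h₂, h₃, rfl⟩
    refine le_ciSup_of_le (Set.Finite.bddAbove (Set.finite_range _)) 0 ?_
    exact Finset.sum_nonneg fun j _ => Finset.sum_nonneg fun k _ =>
      mul_nonneg (mul_nonneg (h₂.1 j) (h₃.1 k)) (hu0 _)
  rcases h with ⟨j, k, k', h0, h1⟩ | ⟨k, j, j', h0, h1⟩
  · set σ₂ : S₂ → ℝ := fun s => if s = j then 1 else 0 with hσ₂
    set σ₃ : S₃ → ℝ := fun s => (if s = k then 1/2 else 0) + (if s = k' then 1/2 else 0) with hσ₃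
    have hm₂ : IsMixedStrategy σ₂ := by
      constructor
      · intro s; simp only [hσ₂]; positivity
      · simp [hσ₂]
    have hm₃ : IsMixedStrategy σ₃ := by
      constructor
      · intro s; simp only [hσ₃]; positivity
      · simp [hσ₃, Finset.sum_add_distrib]; norm_num
    have hval : ∀ a : Fin 2, ∑ j₀ : S₂, ∑ k₀ : S₃, σ₂ j₀ * σ₃ k₀ * u₁ (a, j₀, k₀)
        = (1/2) * u₁ (a, j, k) + (1/2) * u₁ (a, j, k') := by
      intro a
      rw [Finset.sum_eq_single_of_mem j (Finset.mem_univ j)]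
      · simp only [hσ₂, hσ₃, if_pos rfl, one_mul, add_mul, ite_mul, zero_mul,
          Finset.sum_add_distrib, Finset.sum_ite_eq', Finset.mem_univ, if_pos]
      · intro b _ hb
        simp [hσ₂, hb]
    refine csInf_le_of_le hbdd ⟨σ₂, σ₃, hm₂, hm₃, rfl⟩ ?_
    refine ciSup_le fun a => ?_
    rw [hval]
    have ha : a = 0 ∨ a = 1 := by omega
    rcases ha with rfl | rfl
    · rw [h0]; nlinarith [hu1 (⟨0, j, k'⟩ : Fin 2 × S₂ × S₃)]
    · rw [h1]; nlinarith [hu1 (⟨1, j, k⟩ : Fin 2 × S₂ × S₃)]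
  · set σ₃ : S₃ → ℝ := fun s => if s = k then 1 else 0 with hσ₃
    set σ₂ : S₂ → ℝ := fun s => (if s = j then 1/2 else 0) + (if s = j' then 1/2 else 0) with hσ₂
    have hm₃ : IsMixedStrategy σ₃ := by
      constructor
      · intro s; simp only [hσ₃]; positivity
      · simp [hσ₃]
    have hm₂ : IsMixedStrategy σ₂ := by
      constructor
      · intro s; simp only [hσ₂]; positivity
      · simp [hσ₂, Finset.sum_add_distrib]; norm_num
    have hval : ∀ a : Fin 2, ∑ j₀ : S₂, ∑ k₀ : S₃, σ₂ j₀ * σ₃ k₀ * u₁ (a, j₀, k₀)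
        = (1/2) * u₁ (a, j, k) + (1/2) * u₁ (a, j', k) := by
      intro a
      have inner : ∀ j₀ : S₂, ∑ k₀ : S₃, σ₂ j₀ * σ₃ k₀ * u₁ (a, j₀, k₀)
          = σ₂ j₀ * u₁ (a, j₀, k) := by
        intro j₀
        rw [Finset.sum_eq_single_of_mem k (Finset.mem_univ k)]
        · simp [hσ₃]
        · intro b _ hb; simp [hσ₃, hb]
      rw [Finset.sum_congr rfl (fun j₀ _ => inner j₀)]
      simp only [hσ₂, add_mul, ite_mul, zero_mul, Finset.sum_add_distrib,
        Finset.sum_ite_eq', Finset.mem_univ, if_pos]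
    refine csInf_le_of_le hbdd ⟨σ₂, σ₃, hm₂, hm₃, rfl⟩ ?_
    refine ciSup_le fun a => ?_
    rw [hval]
    have ha : a = 0 ∨ a = 1 := by omega
    rcases ha with rfl | rfl
    · rw [h0]; nlinarith [hu1 (⟨0, j', k⟩ : Fin 2 × S₂ × S₃)]
    · rw [h1]; nlinarith [hu1 (⟨1, j, k⟩ : Fin 2 × S₂ × S₃)]
end

section
/- Let S₂, S₃ be nonempty finite strategy sets and let u₁ : Fin 2 × S₂ × S₃ → ℝ take only the values 0 and 1. Suppose (H1) for every i ∈ Fin 2 there exist j ∈ S₂ and k ∈ S₃ with u₁(i,j,k) = 0, and (H2) whenever u₁(i,j,k) = 0, then u₁(i',j',k) = 1 and u₁(i',j,k') = 1 for the other action i' ≠ i of Player 1 and all j' ∈ S₂, k' ∈ S₃. Then the minmax value for Player 1 equals 3/4. -/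
lemma fin2_iSup (f : Fin 2 → ℝ) : ⨆ a, f a = max (f 0) (f 1) := by
  apply le_antisymm
  · apply ciSup_le; intro a; fin_cases a
    · exact le_max_left _ _
    · exact le_max_right _ _
  · exact max_le (le_ciSup (Set.finite_range f).bddAbove 0)
      (le_ciSup (Set.finite_range f).bddAbove 1)

lemma two_point_sum {S : Type*} [Fintype S] [DecidableEq S] (g : S → ℝ) (a b : S) :
    ∑ j, ((if j = a then (2:ℝ)⁻¹ else 0) + (if j = b then (2:ℝ)⁻¹ else 0)) * g j
      = (g a + g b) / 2 := by
  simp [add_mul, ite_mul, Finset.sum_add_distrib, Finset.sum_ite_eq']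
  ring

open scoped Classical in
lemma pay_eq {S₂ S₃ : Type*} [Fintype S₂] [Fintype S₃] (σ₂ : S₂ → ℝ) (σ₃ : S₃ → ℝ)
    (h₂ : IsMixedStrategy σ₂) (h₃ : IsMixedStrategy σ₃)
    (w : S₂ × S₃ → ℝ) (h01 : ∀ p, w p = 0 ∨ w p = 1) :
    ∑ j, ∑ k, σ₂ j * σ₃ k * w (j, k)
      = 1 - ∑ p ∈ Finset.univ.filter (fun p : S₂ × S₃ => w p = 0), σ₂ p.1 * σ₃ p.2 := by
  have htot : ∑ p : S₂ × S₃, σ₂ p.1 * σ₃ p.2 = 1 := by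
    rw [← Finset.univ_product_univ, Finset.sum_product]
    simp only [← Finset.sum_mul_sum]
    rw [h₂.2, h₃.2, one_mul]
  have hL : ∑ j, ∑ k, σ₂ j * σ₃ k * w (j, k)
      = ∑ p : S₂ × S₃, σ₂ p.1 * σ₃ p.2 * w p := by
    rw [← Finset.univ_product_univ, Finset.sum_product]
  rw [hL]
  rw [← Finset.sum_filter_add_sum_filter_not Finset.univ (fun p : S₂ × S₃ => w p = 0)
    (fun p => σ₂ p.1 * σ₃ p.2 * w p)]
  have e1 : ∑ p ∈ Finset.univ.filter (fun p : S₂ × S₃ => w p = 0),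
      σ₂ p.1 * σ₃ p.2 * w p = 0 := by
    apply Finset.sum_eq_zero
    intro p hp
    rw [(Finset.mem_filter.mp hp).2, mul_zero]
  have e2 : ∑ p ∈ Finset.univ.filter (fun p : S₂ × S₃ => ¬ w p = 0),
      σ₂ p.1 * σ₃ p.2 * w p
      = ∑ p ∈ Finset.univ.filter (fun p : S₂ × S₃ => ¬ w p = 0), σ₂ p.1 * σ₃ p.2 := by
    apply Finset.sum_congr rfl
    intro p hp
    have := (h01 p).resolve_left (Finset.mem_filter.mp hp).2
    rw [this, mul_one]
  rw [e1, e2, zero_add]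
  have := Finset.sum_filter_add_sum_filter_not Finset.univ (fun p : S₂ × S₃ => w p = 0)
    (fun p => σ₂ p.1 * σ₃ p.2)
  rw [htot] at this
  linarith


/-- Case 5: in a 0-1 game where Player 1 has two actions, if each action of Player 1 can
be punished (H1) but any zero entry forces all entries with the other action of Player 1
in the same row or column to be 1 (H2), then the minmax value for Player 1 is 3/4. -/
theorem minmax_eq_three_quarters {S₂ S₃ : Type*} [Fintype S₂] [Fintype S₃]
    [Nonempty S₂] [Nonempty S₃]
    (u₁ : Fin 2 × S₂ × S₃ → ℝ) (h01 : ∀ x, u₁ x = 0 ∨ u₁ x = 1)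
    (H1 : ∀ i : Fin 2, ∃ (j : S₂) (k : S₃), u₁ (i, j, k) = 0)
    (H2 : ∀ (i i' : Fin 2) (j : S₂) (k : S₃), u₁ (i, j, k) = 0 → i' ≠ i →
      ∀ (j' : S₂) (k' : S₃), u₁ (i', j', k) = 1 ∧ u₁ (i', j, k') = 1) :
    minmaxVal u₁ = 3 / 4 := by
  classical
  obtain ⟨j₀, k₀, h0⟩ := H1 0
  obtain ⟨j₁, k₁, h1⟩ := H1 1
  have H01 := fun (j' : S₂) (k' : S₃) => H2 0 1 j₀ k₀ h0 (by decide) j' k'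
  have H10 := fun (j' : S₂) (k' : S₃) => H2 1 0 j₁ k₁ h1 (by decide) j' k'
  set V := { v | ∃ σ₂ : S₂ → ℝ, ∃ σ₃ : S₃ → ℝ,
    IsMixedStrategy σ₂ ∧ IsMixedStrategy σ₃ ∧
    v = ⨆ a : Fin 2, ∑ j : S₂, ∑ k : S₃, σ₂ j * σ₃ k * u₁ (a, j, k) } with hV
  -- membership of 3/4
  have hmem : (3/4 : ℝ) ∈ V := by
    refine ⟨fun j => (if j = j₀ then (2:ℝ)⁻¹ else 0) + (if j = j₁ then (2:ℝ)⁻¹ else 0),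
      fun k => (if k = k₀ then (2:ℝ)⁻¹ else 0) + (if k = k₁ then (2:ℝ)⁻¹ else 0),
      ⟨fun s => by positivity, by
        simp [Finset.sum_add_distrib, Finset.sum_ite_eq']; norm_num⟩,
      ⟨fun s => by positivity, by
        simp [Finset.sum_add_distrib, Finset.sum_ite_eq']; norm_num⟩, ?_⟩
    have key : ∀ a : Fin 2,
        (∑ j : S₂, ∑ k : S₃,
          ((if j = j₀ then (2:ℝ)⁻¹ else 0) + (if j = j₁ then (2:ℝ)⁻¹ else 0)) *
          ((if k = k₀ then (2:ℝ)⁻¹ else 0) + (if k = k₁ then (2:ℝ)⁻¹ else 0)) * u₁ (a, j, k))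
        = (u₁ (a,j₀,k₀) + u₁ (a,j₀,k₁) + u₁ (a,j₁,k₀) + u₁ (a,j₁,k₁)) / 4 := by
      intro a
      have hin : ∀ j : S₂, (∑ k : S₃,
          ((if k = k₀ then (2:ℝ)⁻¹ else 0) + (if k = k₁ then (2:ℝ)⁻¹ else 0)) * u₁ (a, j, k))
          = (u₁ (a,j,k₀) + u₁ (a,j,k₁)) / 2 := fun j => two_point_sum (fun k => u₁ (a,j,k)) k₀ k₁
      calc (∑ j : S₂, ∑ k : S₃,
          ((if j = j₀ then (2:ℝ)⁻¹ else 0) + (if j = j₁ then (2:ℝ)⁻¹ else 0)) *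
          ((if k = k₀ then (2:ℝ)⁻¹ else 0) + (if k = k₁ then (2:ℝ)⁻¹ else 0)) * u₁ (a, j, k))
          = ∑ j : S₂,
            ((if j = j₀ then (2:ℝ)⁻¹ else 0) + (if j = j₁ then (2:ℝ)⁻¹ else 0)) *
            ((u₁ (a,j,k₀) + u₁ (a,j,k₁)) / 2) := by
            refine Finset.sum_congr rfl fun j _ => ?_
            rw [← hin j, Finset.mul_sum]
            exact Finset.sum_congr rfl fun k _ => by ring
        _ = ((u₁ (a,j₀,k₀) + u₁ (a,j₀,k₁)) / 2 + (u₁ (a,j₁,k₀) + u₁ (a,j₁,k₁)) / 2) / 2 :=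
            two_point_sum (fun j => (u₁ (a,j,k₀) + u₁ (a,j,k₁)) / 2) j₀ j₁
        _ = (u₁ (a,j₀,k₀) + u₁ (a,j₀,k₁) + u₁ (a,j₁,k₀) + u₁ (a,j₁,k₁)) / 4 := by ring
    rw [fin2_iSup]
    rw [key 0, key 1, h0, h1, (H10 j₀ k₀).1, (H10 j₁ k₀).2, (H10 j₁ k₁).1,
      (H01 j₀ k₀).1, (H01 j₀ k₁).2, (H01 j₁ k₀).1]
    norm_num
  -- lower bound
  have hlb : ∀ v ∈ V, (3/4 : ℝ) ≤ v := by
    rintro v ⟨σ₂, σ₃, h₂, h₃, rfl⟩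
    rw [fin2_iSup]
    set Z : Fin 2 → Finset (S₂ × S₃) :=
      fun a => Finset.univ.filter (fun p : S₂ × S₃ => u₁ (a, p.1, p.2) = 0) with hZ
    have payeq : ∀ a : Fin 2, (∑ j : S₂, ∑ k : S₃, σ₂ j * σ₃ k * u₁ (a, j, k))
        = 1 - ∑ p ∈ Z a, σ₂ p.1 * σ₃ p.2 := fun a =>
      pay_eq σ₂ σ₃ h₂ h₃ (fun p => u₁ (a, p.1, p.2)) (fun p => h01 _)
    set A : Fin 2 → Finset S₂ := fun a => Finset.univ.filter (fun j => ∃ k, u₁ (a, j, k) = 0)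
      with hA
    set B : Fin 2 → Finset S₃ := fun a => Finset.univ.filter (fun k => ∃ j, u₁ (a, j, k) = 0)
      with hB
    set x : Fin 2 → ℝ := fun a => ∑ j ∈ A a, σ₂ j with hx
    set y : Fin 2 → ℝ := fun a => ∑ k ∈ B a, σ₃ k with hy
    have hxnn : ∀ a, 0 ≤ x a := fun a => Finset.sum_nonneg fun j _ => h₂.1 j
    have hynn : ∀ a, 0 ≤ y a := fun a => Finset.sum_nonneg fun k _ => h₃.1 k
    have hzle : ∀ a, (∑ p ∈ Z a, σ₂ p.1 * σ₃ p.2) ≤ x a * y a := by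
      intro a
      have hsub : Z a ⊆ A a ×ˢ B a := by
        intro p hp
        have hp0 : u₁ (a, p.1, p.2) = 0 := (Finset.mem_filter.mp hp).2
        rw [Finset.mem_product]
        exact ⟨Finset.mem_filter.mpr ⟨Finset.mem_univ _, ⟨p.2, hp0⟩⟩,
          Finset.mem_filter.mpr ⟨Finset.mem_univ _, ⟨p.1, hp0⟩⟩⟩
      calc (∑ p ∈ Z a, σ₂ p.1 * σ₃ p.2) ≤ ∑ p ∈ A a ×ˢ B a, σ₂ p.1 * σ₃ p.2 :=
            Finset.sum_le_sum_of_subset_of_nonneg hsub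
              (fun p _ _ => mul_nonneg (h₂.1 p.1) (h₃.1 p.2))
        _ = x a * y a := by
            rw [Finset.sum_product, hx, hy]
            simp only [← Finset.sum_mul_sum]
    have hdisjA : Disjoint (A 0) (A 1) := by
      rw [Finset.disjoint_left]
      rintro j hj0 hj1
      obtain ⟨k, hk⟩ := (Finset.mem_filter.mp hj0).2
      obtain ⟨k', hk'⟩ := (Finset.mem_filter.mp hj1).2
      have := (H2 0 1 j k hk (by decide) j k').2
      rw [this] at hk'
      exact one_ne_zero hk'
    have hdisjB : Disjoint (B 0) (B 1) := by
      rw [Finset.disjoint_left]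
      rintro k hk0 hk1
      obtain ⟨j, hj⟩ := (Finset.mem_filter.mp hk0).2
      obtain ⟨j', hj'⟩ := (Finset.mem_filter.mp hk1).2
      have := (H2 0 1 j k hj (by decide) j' k).1
      rw [this] at hj'
      exact one_ne_zero hj'
    have hxsum : x 0 + x 1 ≤ 1 := by
      rw [hx, ← Finset.sum_union hdisjA, ← h₂.2]
      exact Finset.sum_le_sum_of_subset_of_nonneg (Finset.subset_univ _)
        (fun j _ _ => h₂.1 j)
    have hysum : y 0 + y 1 ≤ 1 := by
      rw [hy, ← Finset.sum_union hdisjB, ← h₃.2]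
      exact Finset.sum_le_sum_of_subset_of_nonneg (Finset.subset_univ _)
        (fun k _ _ => h₃.1 k)
    by_contra hcon
    push_neg at hcon
    rw [max_lt_iff] at hcon
    obtain ⟨hc0, hc1⟩ := hcon
    rw [payeq 0] at hc0
    rw [payeq 1] at hc1
    have hz0 : (1:ℝ)/4 < x 0 * y 0 := lt_of_lt_of_le (by linarith) (hzle 0)
    have hz1 : (1:ℝ)/4 < x 1 * y 1 := lt_of_lt_of_le (by linarith) (hzle 1)
    have h5 : x 1 * y 1 ≤ (1 - x 0) * (1 - y 0) := by
      calc x 1 * y 1 ≤ (1 - x 0) * y 1 :=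
            mul_le_mul_of_nonneg_right (by linarith [hxsum]) (hynn 1)
        _ ≤ (1 - x 0) * (1 - y 0) :=
            mul_le_mul_of_nonneg_left (by linarith [hysum]) (by linarith [hxsum, hxnn 1])
    have hx0le : x 0 ≤ 1 := by linarith [hxsum, hxnn 1]
    have hy0le : y 0 ≤ 1 := by linarith [hysum, hynn 1]
    have hs1 : 1 < x 0 + y 0 := by nlinarith [sq_nonneg (x 0 - y 0), hxnn 0, hynn 0]
    have hs2 : x 0 + y 0 < 1 := by nlinarith [sq_nonneg (x 0 - y 0), hx0le, hy0le]
    linarith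
  exact le_antisymm (csInf_le ⟨3/4, fun v hv => hlb v hv⟩ hmem) (le_csInf ⟨_, hmem⟩ hlb)
end

section
/- For every integer n ≥ 1 and every payoff function u₁ : Fin 2 × Fin n × Fin n → ℝ taking only the values 0 and 1, the minmax value for Player 1 of the three-player game with payoff u₁ belongs to the set {0, 1/2, 3/4, 1}; in particular it is a rational number. -/
set_option linter.unnecessarySeqFocus false

namespace MinmaxAux


variable {n : ℕ}

lemma iSup_fin2 (g : Fin 2 → ℝ) : (⨆ a : Fin 2, g a) = max (g 0) (g 1) := by
  apply le_antisymm
  · exact ciSup_le fun a => by fin_cases a <;> [exact le_max_left _ _; exact le_max_right _ _]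
  · exact max_le (le_ciSup (Finite.bddAbove_range g) 0) (le_ciSup (Finite.bddAbove_range g) 1)

noncomputable def mixS (j j' : Fin n) : Fin n → ℝ :=
  fun i => (if i = j then (1:ℝ) else 0)/2 + (if i = j' then (1:ℝ) else 0)/2

lemma mixS_isMixed (j j' : Fin n) : IsMixedStrategy (mixS j j') := by
  constructor
  · intro s; unfold mixS; split_ifs <;> norm_num
  · unfold mixS
    rw [Finset.sum_add_distrib, ← Finset.sum_div, ← Finset.sum_div]
    simp
    norm_num

lemma sum_mixS (j j' : Fin n) (f : Fin n → ℝ) :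
    ∑ i, mixS j j' i * f i = (f j + f j') / 2 := by
  unfold mixS
  simp only [add_mul, div_mul_eq_mul_div, ite_mul, one_mul, zero_mul,
    Finset.sum_add_distrib, ← Finset.sum_div, Finset.sum_ite_eq', Finset.mem_univ, if_true]
  ring

noncomputable def EV (u : Fin 2 × Fin n × Fin n → ℝ) (p q : Fin n → ℝ) (a : Fin 2) : ℝ :=
  ∑ j, ∑ k, p j * q k * u (a, j, k)

lemma EV_eq (u : Fin 2 × Fin n × Fin n → ℝ) (p q : Fin n → ℝ) (a : Fin 2) :
    EV u p q a = ∑ j, p j * ∑ k, q k * u (a, j, k) := by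
  unfold EV
  simp only [Finset.mul_sum, mul_assoc]

lemma EV_mixS (u : Fin 2 × Fin n × Fin n → ℝ) (j j' k k' : Fin n) (a : Fin 2) :
    EV u (mixS j j') (mixS k k') a
      = (u (a,j,k) + u (a,j,k') + u (a,j',k) + u (a,j',k')) / 4 := by
  rw [EV_eq]
  have h : ∀ r, mixS j j' r * ∑ s, mixS k k' s * u (a, r, s)
      = mixS j j' r * ((u (a,r,k) + u (a,r,k'))/2) := by
    intro r; rw [sum_mixS]
  rw [Finset.sum_congr rfl (fun r _ => h r)]
  have := sum_mixS j j' (fun r => (u (a,r,k) + u (a,r,k'))/2)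
  rw [this]; ring



variable {u : Fin 2 × Fin n × Fin n → ℝ} {p q : Fin n → ℝ}

lemma u_nonneg (h01 : ∀ x, u x = 0 ∨ u x = 1) (x) : 0 ≤ u x := by
  rcases h01 x with h | h <;> rw [h] <;> norm_num

lemma u_le_one (h01 : ∀ x, u x = 0 ∨ u x = 1) (x) : u x ≤ 1 := by
  rcases h01 x with h | h <;> rw [h] <;> norm_num

lemma sum_pq (hp : IsMixedStrategy p) (hq : IsMixedStrategy q) :
    ∑ j, ∑ k, p j * q k = (1:ℝ) := by
  rw [← Finset.sum_mul_sum, hp.2, hq.2, one_mul]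

lemma EV_nonneg (h01 : ∀ x, u x = 0 ∨ u x = 1) (hp : IsMixedStrategy p)
    (hq : IsMixedStrategy q) (a : Fin 2) : 0 ≤ EV u p q a := by
  refine Finset.sum_nonneg fun j _ => Finset.sum_nonneg fun k _ => ?_
  exact mul_nonneg (mul_nonneg (hp.1 j) (hq.1 k)) (u_nonneg h01 _)

lemma EV_le_one (h01 : ∀ x, u x = 0 ∨ u x = 1) (hp : IsMixedStrategy p)
    (hq : IsMixedStrategy q) (a : Fin 2) : EV u p q a ≤ 1 := by
  calc EV u p q a ≤ ∑ j, ∑ k, p j * q k := by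
        refine Finset.sum_le_sum fun j _ => Finset.sum_le_sum fun k _ => ?_
        have := u_le_one h01 (a, j, k)
        nlinarith [hp.1 j, hq.1 k, mul_nonneg (hp.1 j) (hq.1 k)]
    _ = 1 := sum_pq hp hq

/-- lower bound 1/2 when no double-zero cell -/
lemma lb_half (h01 : ∀ x, u x = 0 ∨ u x = 1)
    (h : ∀ j k, u (0,j,k) = 1 ∨ u (1,j,k) = 1)
    (hp : IsMixedStrategy p) (hq : IsMixedStrategy q) :
    (1:ℝ)/2 ≤ max (EV u p q 0) (EV u p q 1) := by
  have hsum : (1:ℝ) ≤ EV u p q 0 + EV u p q 1 := by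
    have : EV u p q 0 + EV u p q 1
        = ∑ j, ∑ k, p j * q k * (u (0,j,k) + u (1,j,k)) := by
      unfold EV
      rw [← Finset.sum_add_distrib]
      refine Finset.sum_congr rfl fun j _ => ?_
      rw [← Finset.sum_add_distrib]
      exact Finset.sum_congr rfl fun k _ => by ring
    rw [this, ← sum_pq hp hq]
    refine Finset.sum_le_sum fun j _ => Finset.sum_le_sum fun k _ => ?_
    have h1 : (1:ℝ) ≤ u (0,j,k) + u (1,j,k) := by
      rcases h j k with h' | h' <;> rw [h'] <;>
        [nlinarith [u_nonneg h01 ((1:Fin 2),j,k)]; nlinarith [u_nonneg h01 ((0:Fin 2),j,k)]]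
    nlinarith [mul_nonneg (hp.1 j) (hq.1 k)]
  have := le_max_left (EV u p q 0) (EV u p q 1)
  have := le_max_right (EV u p q 0) (EV u p q 1)
  linarith

/-- lower bound 1 when player-1 action a always pays 1 -/
lemma lb_one (a : Fin 2) (h : ∀ j k, u (a,j,k) = 1)
    (hp : IsMixedStrategy p) (hq : IsMixedStrategy q) :
    (1:ℝ) ≤ max (EV u p q 0) (EV u p q 1) := by
  have hEV : EV u p q a = 1 := by
    unfold EV
    rw [← sum_pq hp hq]
    refine Finset.sum_congr rfl fun j _ => Finset.sum_congr rfl fun k _ => ?_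
    rw [h j k, mul_one]
  fin_cases a
  · rw [← hEV]; exact le_max_left _ _
  · rw [← hEV]; exact le_max_right _ _

lemma min_quarter {x x' y y' m : ℝ} (hx : 0 ≤ x) (hx' : 0 ≤ x') (hy : 0 ≤ y)
    (hy' : 0 ≤ y') (hxx : x + x' ≤ 1) (hyy : y + y' ≤ 1)
    (h1 : m ≤ x * y) (h2 : m ≤ x' * y') : m ≤ 1/4 := by
  rcases le_or_gt m 0 with h | h
  · linarith
  · have hm2 : m^2 ≤ (x * x') * (y * y') := by nlinarith
    have hxx2 : x * x' ≤ 1/4 := by nlinarith [sq_nonneg (x - x')]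
    have hyy2 : y * y' ≤ 1/4 := by nlinarith [sq_nonneg (y - y')]
    have h16 : m^2 ≤ 1/16 := by nlinarith [mul_nonneg hx hx', mul_nonneg hy hy']
    nlinarith [sq_nonneg (m - 1/4)]

/-- lower bound 3/4 when zero cells of the two actions share no row and no column -/
lemma lb_34 (h01 : ∀ x, u x = 0 ∨ u x = 1)
    (hR : ∀ j k k', u (0,j,k) = 0 → u (1,j,k') ≠ 0)
    (hC : ∀ j j' k, u (0,j,k) = 0 → u (1,j',k) ≠ 0)
    (hp : IsMixedStrategy p) (hq : IsMixedStrategy q) :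
    (3:ℝ)/4 ≤ max (EV u p q 0) (EV u p q 1) := by
  classical
  set RA := Finset.univ.filter (fun j : Fin n => ∃ k, u (0,j,k) = 0) with hRA
  set RB := Finset.univ.filter (fun j : Fin n => ∃ k, u (1,j,k) = 0) with hRB
  set CA := Finset.univ.filter (fun k : Fin n => ∃ j, u (0,j,k) = 0) with hCA
  set CB := Finset.univ.filter (fun k : Fin n => ∃ j, u (1,j,k) = 0) with hCB
  set x := ∑ j ∈ RA, p j with hx
  set x' := ∑ j ∈ RB, p j with hx'
  set y := ∑ k ∈ CA, q k with hy
  set y' := ∑ k ∈ CB, q k with hy'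
  -- key bound: 1 - EV a ≤ (row mass) * (col mass)
  have key : ∀ (a : Fin 2) (R C : Finset (Fin n)),
      (∀ j k, u (a,j,k) = 0 → j ∈ R) → (∀ j k, u (a,j,k) = 0 → k ∈ C) →
      1 - EV u p q a ≤ (∑ j ∈ R, p j) * (∑ k ∈ C, q k) := by
    intro a R C hRmem hCmem
    have h1 : 1 - EV u p q a = ∑ j, p j * ∑ k, q k * (1 - u (a,j,k)) := by
      have e1 : EV u p q a = ∑ j, p j * ∑ k, q k * u (a,j,k) := by
        unfold EV; simp only [Finset.mul_sum, mul_assoc]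
      have e2 : ∑ j, p j * ∑ k, q k = (1:ℝ) := by
        rw [← Finset.sum_mul, hp.2, hq.2, one_mul]
      have hsum : EV u p q a + ∑ j, p j * ∑ k, q k * (1 - u (a,j,k)) = 1 := by
        rw [e1, ← Finset.sum_add_distrib]
        conv_rhs => rw [← e2]
        refine Finset.sum_congr rfl fun j _ => ?_
        rw [← mul_add, ← Finset.sum_add_distrib]
        refine congrArg _ (Finset.sum_congr rfl fun k _ => by ring)
      linarith
    have hinner : ∀ j, ∑ k, q k * (1 - u (a,j,k)) ≤ ∑ k ∈ C, q k := by
      intro j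
      have hsub : ∑ k, q k * (1 - u (a,j,k)) = ∑ k ∈ C, q k * (1 - u (a,j,k)) := by
        refine (Finset.sum_subset (Finset.subset_univ C) ?_).symm
        intro k _ hk
        have h1' : u (a,j,k) = 1 := by
          rcases h01 (a,j,k) with h | h
          · exact absurd (hCmem j k h) hk
          · exact h
        rw [h1']; ring
      rw [hsub]
      refine Finset.sum_le_sum fun k _ => ?_
      have := u_nonneg h01 (a,j,k)
      nlinarith [hq.1 k]
    have hshrink : ∑ j, p j * ∑ k, q k * (1 - u (a,j,k))
        = ∑ j ∈ R, p j * ∑ k, q k * (1 - u (a,j,k)) := by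
      refine (Finset.sum_subset (Finset.subset_univ R) ?_).symm
      intro j _ hj
      have hz : ∑ k, q k * (1 - u (a,j,k)) = 0 := by
        refine Finset.sum_eq_zero fun k _ => ?_
        have h1' : u (a,j,k) = 1 := by
          rcases h01 (a,j,k) with h | h
          · exact absurd (hRmem j k h) hj
          · exact h
        rw [h1']; ring
      rw [hz, mul_zero]
    rw [h1, hshrink]
    calc ∑ j ∈ R, p j * ∑ k, q k * (1 - u (a,j,k))
        ≤ ∑ j ∈ R, p j * ∑ k ∈ C, q k :=
          Finset.sum_le_sum fun j _ => mul_le_mul_of_nonneg_left (hinner j) (hp.1 j)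
      _ = (∑ j ∈ R, p j) * (∑ k ∈ C, q k) := by rw [Finset.sum_mul]
  have hdisjR : Disjoint RA RB := by
    rw [Finset.disjoint_left]
    intro j hjA hjB
    obtain ⟨k, hk⟩ := (Finset.mem_filter.mp hjA).2
    obtain ⟨k', hk'⟩ := (Finset.mem_filter.mp hjB).2
    exact hR j k k' hk hk'
  have hdisjC : Disjoint CA CB := by
    rw [Finset.disjoint_left]
    intro k hkA hkB
    obtain ⟨j, hj⟩ := (Finset.mem_filter.mp hkA).2
    obtain ⟨j', hj'⟩ := (Finset.mem_filter.mp hkB).2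
    exact hC j j' k hj hj'
  have hxx : x + x' ≤ 1 := by
    rw [hx, hx', ← Finset.sum_union hdisjR, ← hp.2]
    exact Finset.sum_le_sum_of_subset_of_nonneg (Finset.subset_univ _) fun i _ _ => hp.1 i
  have hyy : y + y' ≤ 1 := by
    rw [hy, hy', ← Finset.sum_union hdisjC, ← hq.2]
    exact Finset.sum_le_sum_of_subset_of_nonneg (Finset.subset_univ _) fun i _ _ => hq.1 i
  have hx0 : 0 ≤ x := Finset.sum_nonneg fun i _ => hp.1 i
  have hx'0 : 0 ≤ x' := Finset.sum_nonneg fun i _ => hp.1 i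
  have hy0 : 0 ≤ y := Finset.sum_nonneg fun i _ => hq.1 i
  have hy'0 : 0 ≤ y' := Finset.sum_nonneg fun i _ => hq.1 i
  have k0 : 1 - EV u p q 0 ≤ x * y := by
    refine key 0 RA CA (fun j k h => ?_) (fun j k h => ?_)
    · exact Finset.mem_filter.mpr ⟨Finset.mem_univ _, ⟨k, h⟩⟩
    · exact Finset.mem_filter.mpr ⟨Finset.mem_univ _, ⟨j, h⟩⟩
  have k1 : 1 - EV u p q 1 ≤ x' * y' := by
    refine key 1 RB CB (fun j k h => ?_) (fun j k h => ?_)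
    · exact Finset.mem_filter.mpr ⟨Finset.mem_univ _, ⟨k, h⟩⟩
    · exact Finset.mem_filter.mpr ⟨Finset.mem_univ _, ⟨j, h⟩⟩
  rcases le_total (EV u p q 0) (EV u p q 1) with h | h
  · rw [max_eq_right h]
    have := min_quarter hx0 hx'0 hy0 hy'0 hxx hyy (le_trans (by linarith) k0) k1
    linarith
  · rw [max_eq_left h]
    have := min_quarter hx0 hx'0 hy0 hy'0 hxx hyy k0 (le_trans (by linarith) k1)
    linarith


def SetS (u : Fin 2 × Fin n × Fin n → ℝ) : Set ℝ :=
  { v | ∃ σ₂ : Fin n → ℝ, ∃ σ₃ : Fin n → ℝ,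
    IsMixedStrategy σ₂ ∧ IsMixedStrategy σ₃ ∧
    v = ⨆ a : Fin 2, ∑ j, ∑ k, σ₂ j * σ₃ k * u (a, j, k) }

lemma minmaxVal_eq (u : Fin 2 × Fin n × Fin n → ℝ) : minmaxVal u = sInf (SetS u) := rfl

lemma mem_SetS (u : Fin 2 × Fin n × Fin n → ℝ) {p q : Fin n → ℝ}
    (hp : IsMixedStrategy p) (hq : IsMixedStrategy q) :
    max (EV u p q 0) (EV u p q 1) ∈ SetS u :=
  ⟨p, q, hp, hq, (iSup_fin2 (EV u p q)).symm⟩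

lemma lb_sInf {u : Fin 2 × Fin n × Fin n → ℝ} {c : ℝ} (hne : (SetS u).Nonempty)
    (h : ∀ p q : Fin n → ℝ, IsMixedStrategy p → IsMixedStrategy q →
      c ≤ max (EV u p q 0) (EV u p q 1)) : c ≤ sInf (SetS u) := by
  refine le_csInf hne ?_
  rintro v ⟨p, q, hp, hq, rfl⟩
  rw [iSup_fin2 (fun a => ∑ j, ∑ k, p j * q k * u (a, j, k))]
  exact h p q hp hq

end MinmaxAux

open MinmaxAux in
/-- For a three-player `2 × n × n` game with 0-1 payoffs, the minmax value for
Player 1 lies in `{0, 1/2, 3/4, 1}`; in particular it is rational. -/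
theorem minmax_two_by_n_by_n_zero_one_rational (n : ℕ) (hn : 1 ≤ n)
    (u₁ : Fin 2 × Fin n × Fin n → ℝ) (h01 : ∀ x, u₁ x = 0 ∨ u₁ x = 1) :
    minmaxVal u₁ ∈ ({0, 1 / 2, 3 / 4, 1} : Set ℝ) ∧
    ∃ q : ℚ, minmaxVal u₁ = (q : ℝ) := by
  classical
  let j0 : Fin n := ⟨0, by omega⟩
  have hbdd : BddBelow (SetS u₁) := by
    refine ⟨0, ?_⟩
    rintro v ⟨p, q, hp, hq, rfl⟩
    rw [iSup_fin2 (fun a => ∑ j, ∑ k, p j * q k * u₁ (a, j, k))]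
    exact le_trans (EV_nonneg h01 hp hq 0) (le_max_left _ _)
  have hne : (SetS u₁).Nonempty :=
    ⟨_, mem_SetS u₁ (mixS_isMixed j0 j0) (mixS_isMixed j0 j0)⟩
  suffices h : minmaxVal u₁ ∈ ({0, 1 / 2, 3 / 4, 1} : Set ℝ) by
    refine ⟨h, ?_⟩
    rcases h with h | h | h | h
    · exact ⟨0, by rw [h]; norm_num⟩
    · exact ⟨1/2, by rw [h]; norm_num⟩
    · exact ⟨3/4, by rw [h]; norm_num⟩
    · exact ⟨1, by rw [h]; norm_num⟩
  rw [minmaxVal_eq]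
  by_cases h00 : ∃ j k, u₁ (0,j,k) = 0 ∧ u₁ (1,j,k) = 0
  · -- value 0
    left
    obtain ⟨j, k, h0, h1⟩ := h00
    have hub : sInf (SetS u₁) ≤ 0 := by
      refine le_trans (csInf_le hbdd (mem_SetS u₁ (mixS_isMixed j j) (mixS_isMixed k k))) ?_
      rw [EV_mixS, EV_mixS, h0, h1]
      norm_num
    have hlb : (0:ℝ) ≤ sInf (SetS u₁) :=
      lb_sInf hne fun p q hp hq =>
        le_trans (EV_nonneg h01 hp hq 0) (le_max_left _ _)
    exact le_antisymm hub hlb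
  push_neg at h00
  have hno : ∀ j k, u₁ (0,j,k) = 1 ∨ u₁ (1,j,k) = 1 := by
    intro j k
    rcases h01 (0,j,k) with h | h
    · rcases h01 (1,j,k) with h' | h'
      · exact absurd h' (h00 j k h)
      · exact Or.inr h'
    · exact Or.inl h
  have half_lb : (1:ℝ)/2 ≤ sInf (SetS u₁) :=
    lb_sInf hne fun p q hp hq => lb_half h01 hno hp hq
  by_cases hrow : ∃ j k kk, u₁ (0,j,k) = 0 ∧ u₁ (1,j,kk) = 0
  · -- value 1/2 (shared row)
    right; left
    obtain ⟨j, k, kk, h0, h1⟩ := hrow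
    refine le_antisymm ?_ half_lb
    refine le_trans (csInf_le hbdd (mem_SetS u₁ (mixS_isMixed j j) (mixS_isMixed k kk))) ?_
    rw [EV_mixS, EV_mixS, h0, h1]
    have b1 := u_le_one h01 ((0:Fin 2), j, kk)
    have b2 := u_le_one h01 ((1:Fin 2), j, k)
    have n1 := u_nonneg h01 ((0:Fin 2), j, kk)
    have n2 := u_nonneg h01 ((1:Fin 2), j, k)
    rw [max_le_iff]
    constructor <;> nlinarith
  by_cases hcol : ∃ j jj k, u₁ (0,j,k) = 0 ∧ u₁ (1,jj,k) = 0
  · -- value 1/2 (shared column)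
    right; left
    obtain ⟨j, jj, k, h0, h1⟩ := hcol
    refine le_antisymm ?_ half_lb
    refine le_trans (csInf_le hbdd (mem_SetS u₁ (mixS_isMixed j jj) (mixS_isMixed k k))) ?_
    rw [EV_mixS, EV_mixS, h0, h1]
    have b1 := u_le_one h01 ((0:Fin 2), jj, k)
    have b2 := u_le_one h01 ((1:Fin 2), j, k)
    have n1 := u_nonneg h01 ((0:Fin 2), jj, k)
    have n2 := u_nonneg h01 ((1:Fin 2), j, k)
    rw [max_le_iff]
    constructor <;> nlinarith
  push_neg at hrow hcol
  by_cases hA : ∃ j k, u₁ (0,j,k) = 0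
  · by_cases hB : ∃ j k, u₁ (1,j,k) = 0
    · -- value 3/4
      right; right; left
      obtain ⟨j, k, h0⟩ := hA
      obtain ⟨j', k', h1⟩ := hB
      refine le_antisymm ?_ (lb_sInf hne fun p q hp hq => lb_34 h01 hrow hcol hp hq)
      refine le_trans (csInf_le hbdd (mem_SetS u₁ (mixS_isMixed j j') (mixS_isMixed k k'))) ?_
      rw [EV_mixS, EV_mixS, h0, h1]
      have b1 := u_le_one h01 ((0:Fin 2), j, k')
      have b2 := u_le_one h01 ((0:Fin 2), j', k)
      have b3 := u_le_one h01 ((0:Fin 2), j', k')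
      have b4 := u_le_one h01 ((1:Fin 2), j, k)
      have b5 := u_le_one h01 ((1:Fin 2), j, k')
      have b6 := u_le_one h01 ((1:Fin 2), j', k)
      rw [max_le_iff]
      constructor <;> nlinarith
    · -- value 1 : action 1 always pays 1
      right; right; right
      push_neg at hB
      have hB1 : ∀ j k, u₁ (1,j,k) = 1 := fun j k => by
        rcases h01 (1,j,k) with h | h
        · exact absurd h (hB j k)
        · exact h
      refine le_antisymm ?_ (lb_sInf hne fun p q hp hq => lb_one 1 hB1 hp hq)
      refine le_trans (csInf_le hbdd (mem_SetS u₁ (mixS_isMixed j0 j0) (mixS_isMixed j0 j0))) ?_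
      rw [max_le_iff]
      exact ⟨EV_le_one h01 (mixS_isMixed j0 j0) (mixS_isMixed j0 j0) 0,
             EV_le_one h01 (mixS_isMixed j0 j0) (mixS_isMixed j0 j0) 1⟩
  · -- value 1 : action 0 always pays 1
    right; right; right
    push_neg at hA
    have hA1 : ∀ j k, u₁ (0,j,k) = 1 := fun j k => by
      rcases h01 (0,j,k) with h | h
      · exact absurd h (hA j k)
      · exact h
    refine le_antisymm ?_ (lb_sInf hne fun p q hp hq => lb_one 0 hA1 hp hq)
    refine le_trans (csInf_le hbdd (mem_SetS u₁ (mixS_isMixed j0 j0) (mixS_isMixed j0 j0))) ?_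
    rw [max_le_iff]
    exact ⟨EV_le_one h01 (mixS_isMixed j0 j0) (mixS_isMixed j0 j0) 0,
           EV_le_one h01 (mixS_isMixed j0 j0) (mixS_isMixed j0 j0) 1⟩
end

section
/- Small supports suffice for optimal threats: let k, n ≥ 1 be integers and let u₁ : Fin k × Fin n × Fin n → ℝ be Player 1's payoff in a three-player game. Then there exist mixed strategies σ₂, σ₃ on Fin n, each with support of cardinality at most k, such that max_{a ∈ Fin k} ∑_{j,k'} σ₂(j)·σ₃(k')·u₁(a,j,k') equals the minmax value for Player 1. -/
open Finset

private lemma combo_coords {k n : ℕ} {S : Finset (Fin n)} (y : Fin n → Fin k → ℝ)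
    (c : ↥S → ℝ) (T : Fin (k+1) → ℝ)
    (h : ∑ i : ↥S, c i • (Fin.snoc (y ↑i) 1 : Fin (k+1) → ℝ) = T) :
    (∀ a : Fin k, ∑ i : ↥S, c i * y ↑i a = T a.castSucc) ∧
      (∑ i : ↥S, c i = T (Fin.last k)) := by
  constructor
  · intro a
    have := congrFun h a.castSucc
    simpa [Finset.sum_apply, Fin.snoc_castSucc] using this
  · have := congrFun h (Fin.last k)
    simpa [Finset.sum_apply, Fin.snoc_last] using this

/-- Key shrinking lemma: if `v` is a lower bound for the best-response value over all
mixed strategies, and some mixed strategy has all payoffs `≤ v`, then there is such a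
strategy with support of size at most `k`. -/
lemma small_support_aux (k : ℕ) (hk : 1 ≤ k) (n : ℕ) (y : Fin n → Fin k → ℝ) (v : ℝ)
    (hmin : ∀ τ : Fin n → ℝ, IsMixedStrategy τ → v ≤ ⨆ a : Fin k, ∑ j, τ j * y j a) :
    ∀ m : ℕ, ∀ σ : Fin n → ℝ, IsMixedStrategy σ →
      (Finset.univ.filter fun s => 0 < σ s).card ≤ m →
      (∀ a, ∑ j, σ j * y j a ≤ v) →
      ∃ τ : Fin n → ℝ, IsMixedStrategy τ ∧
        (Finset.univ.filter fun s => 0 < τ s).card ≤ k ∧ ∀ a, ∑ j, τ j * y j a ≤ v := by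
  haveI : Nonempty (Fin k) := ⟨⟨0, hk⟩⟩
  intro m
  induction m with
  | zero =>
    intro σ hσ hcard hval
    exact ⟨σ, hσ, hcard.trans (Nat.zero_le k), hval⟩
  | succ m ih =>
    intro σ hσ hcard hval
    by_cases hle : (Finset.univ.filter fun s => 0 < σ s).card ≤ k
    · exact ⟨σ, hσ, hle, hval⟩
    push_neg at hle
    set S : Finset (Fin n) := Finset.univ.filter fun s => 0 < σ s with hSdef
    have hzero : ∀ j, j ∉ S → σ j = 0 := by
      intro j hj
      simp only [hSdef, mem_filter, mem_univ, true_and] at hj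
      exact le_antisymm (not_lt.mp hj) (hσ.1 j)
    set w : ↥S → (Fin (k+1) → ℝ) := fun i => Fin.snoc (y ↑i) 1 with hwdef
    by_cases hli : LinearIndependent ℝ w
    · -- independent case: |S| = k+1, vectors span, strictly improve: contradiction
      exfalso
      have hcardS : S.card = k + 1 := by
        have h1 : Fintype.card ↥S ≤ Module.finrank ℝ (Fin (k+1) → ℝ) :=
          LinearIndependent.fintype_card_le_finrank hli
        rw [Module.finrank_fin_fun, Fintype.card_coe] at h1
        omega
      haveI : Nonempty ↥S := by
        rw [Finset.nonempty_coe_sort]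
        exact Finset.card_pos.mp (by omega)
      have hcardeq : Fintype.card ↥S = Module.finrank ℝ (Fin (k+1) → ℝ) := by
        rw [Module.finrank_fin_fun, Fintype.card_coe, hcardS]
      set b := basisOfLinearIndependentOfCardEqFinrank hli hcardeq with hbdef
      have hb : ⇑b = w := coe_basisOfLinearIndependentOfCardEqFinrank hli hcardeq
      set t₀ : Fin (k+1) → ℝ := Fin.snoc (fun _ => (-1 : ℝ)) 0 with ht₀
      set c : ↥S → ℝ := fun i => b.repr t₀ i with hcdef
      have hrepr : ∑ i, c i • w i = t₀ := by
        rw [← hb]; exact b.sum_repr t₀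
      obtain ⟨hcoA, hcoS⟩ := combo_coords y c t₀ hrepr
      set d : Fin n → ℝ := fun j => if h : j ∈ S then c ⟨j, h⟩ else 0 with hddef
      have hdzero : ∀ j, j ∉ S → d j = 0 := fun j hj => dif_neg hj
      have hdsum : ∀ f : Fin n → ℝ, ∑ j, d j * f j = ∑ i : ↥S, c i * f ↑i := by
        intro f
        calc ∑ j, d j * f j = ∑ j ∈ S, d j * f j :=
              (Finset.sum_subset S.subset_univ
                (fun j _ hj => by rw [hdzero j hj, zero_mul])).symm
          _ = ∑ i : ↥S, d ↑i * f ↑i := (Finset.sum_coe_sort S _).symm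
          _ = ∑ i : ↥S, c i * f ↑i := Finset.sum_congr rfl fun i _ => by
              simp [hddef, dif_pos i.2]
      have hdA : ∀ a : Fin k, ∑ j, d j * y j a = -1 := by
        intro a
        rw [hdsum (fun j => y j a), hcoA a, ht₀, Fin.snoc_castSucc]
      have hdS : ∑ j, d j = 0 := by
        have := hdsum (fun _ => (1:ℝ))
        simp only [mul_one] at this
        rw [this, hcoS, ht₀, Fin.snoc_last]
      -- choose ε > 0 so that σ + ε d is still a mixed strategy
      have hSne : S.Nonempty := Finset.card_pos.mp (by omega)
      obtain ⟨j₁, hj₁S, hj₁min⟩ := Finset.exists_min_image S (fun j => σ j / (1 + |d j|)) hSne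
      have hσj₁ : 0 < σ j₁ := by
        simp only [hSdef, mem_filter, mem_univ, true_and] at hj₁S; exact hj₁S
      set ε : ℝ := σ j₁ / (1 + |d j₁|) with hεdef
      have hεpos : 0 < ε := div_pos hσj₁ (by positivity)
      set τ : Fin n → ℝ := fun j => σ j + ε * d j with hτdef
      have hτmixed : IsMixedStrategy τ := by
        constructor
        · intro j
          by_cases hjS : j ∈ S
          · have h1 : ε ≤ σ j / (1 + |d j|) := hj₁min j hjS
            have h2 : ε * (1 + |d j|) ≤ σ j :=
              (le_div_iff₀ (by positivity)).mp h1
            have h3 : -|d j| ≤ d j := neg_abs_le _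
            have h4 : ε * -|d j| ≤ ε * d j := mul_le_mul_of_nonneg_left h3 hεpos.le
            show 0 ≤ σ j + ε * d j
            nlinarith [abs_nonneg (d j)]
          · simp [hτdef, hzero j hjS, hdzero j hjS]
        · rw [hτdef]
          simp only
          rw [Finset.sum_add_distrib, ← Finset.mul_sum, hσ.2, hdS, mul_zero, add_zero]
      have hτval : ∀ a : Fin k, ∑ j, τ j * y j a ≤ v - ε := by
        intro a
        have : ∑ j, τ j * y j a
            = (∑ j, σ j * y j a) + ε * ∑ j, d j * y j a := by
          rw [Finset.mul_sum, ← Finset.sum_add_distrib]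
          exact Finset.sum_congr rfl fun j _ => by rw [hτdef]; ring
        rw [this, hdA a]
        have := hval a
        linarith
      have h1 : v ≤ ⨆ a : Fin k, ∑ j, τ j * y j a := hmin τ hτmixed
      have h2 : (⨆ a : Fin k, ∑ j, τ j * y j a) ≤ v - ε := ciSup_le hτval
      linarith
    · -- dependent case: find nonzero kernel direction and shrink the support
      obtain ⟨c, hc0, i₀, hi₀⟩ := Fintype.not_linearIndependent_iff.mp hli
      obtain ⟨hcoA, hcoS⟩ := combo_coords y c 0 hc0
      set d : Fin n → ℝ := fun j => if h : j ∈ S then c ⟨j, h⟩ else 0 with hddef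
      have hdzero : ∀ j, j ∉ S → d j = 0 := fun j hj => dif_neg hj
      have hdsum : ∀ f : Fin n → ℝ, ∑ j, d j * f j = ∑ i : ↥S, c i * f ↑i := by
        intro f
        calc ∑ j, d j * f j = ∑ j ∈ S, d j * f j :=
              (Finset.sum_subset S.subset_univ
                (fun j _ hj => by rw [hdzero j hj, zero_mul])).symm
          _ = ∑ i : ↥S, d ↑i * f ↑i := (Finset.sum_coe_sort S _).symm
          _ = ∑ i : ↥S, c i * f ↑i := Finset.sum_congr rfl fun i _ => by
              simp [hddef, dif_pos i.2]
      have hdA : ∀ a : Fin k, ∑ j, d j * y j a = 0 := by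
        intro a
        rw [hdsum (fun j => y j a), hcoA a]; rfl
      have hdS : ∑ j, d j = 0 := by
        have := hdsum (fun _ => (1:ℝ))
        simp only [mul_one] at this
        rw [this, hcoS]; rfl
      have hdne : d (↑i₀) ≠ 0 := by
        simp only [hddef, dif_pos i₀.2]
        simpa using hi₀
      -- there is a negative coordinate
      have hneg : ∃ j, d j < 0 := by
        by_contra h
        push_neg at h
        have : ∀ j ∈ Finset.univ, d j = 0 :=
          (Finset.sum_eq_zero_iff_of_nonneg (fun j _ => h j)).mp hdS
        exact hdne (this _ (Finset.mem_univ _))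
      set F : Finset (Fin n) := Finset.univ.filter fun j => d j < 0 with hFdef
      have hFne : F.Nonempty := by
        obtain ⟨j, hj⟩ := hneg
        exact ⟨j, by simp [hFdef, hj]⟩
      obtain ⟨j₀, hj₀F, hj₀min⟩ := Finset.exists_min_image F (fun j => σ j / (-d j)) hFne
      have hdj₀ : d j₀ < 0 := by
        simp only [hFdef, mem_filter, mem_univ, true_and] at hj₀F; exact hj₀F
      have hj₀S : j₀ ∈ S := by
        by_contra h
        exact absurd (hdzero j₀ h) hdj₀.ne
      have hσj₀ : 0 < σ j₀ := by
        simp only [hSdef, mem_filter, mem_univ, true_and] at hj₀S; exact hj₀S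
      set t : ℝ := σ j₀ / (-d j₀) with htdef
      have htpos : 0 < t := div_pos hσj₀ (by linarith)
      set τ : Fin n → ℝ := fun j => σ j + t * d j with hτdef
      have hτnonneg : ∀ j, 0 ≤ τ j := by
        intro j
        by_cases hdj : d j < 0
        · have hjF : j ∈ F := by simp [hFdef, hdj]
          have h1 : t ≤ σ j / (-d j) := hj₀min j hjF
          have h2 : t * (-d j) ≤ σ j := (le_div_iff₀ (by linarith)).mp h1
          show 0 ≤ σ j + t * d j
          nlinarith
        · push_neg at hdj
          show 0 ≤ σ j + t * d j
          exact add_nonneg (hσ.1 j) (mul_nonneg htpos.le hdj)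
      have hτmixed : IsMixedStrategy τ := by
        refine ⟨hτnonneg, ?_⟩
        rw [hτdef]
        simp only
        rw [Finset.sum_add_distrib, ← Finset.mul_sum, hσ.2, hdS, mul_zero, add_zero]
      have hτval : ∀ a : Fin k, ∑ j, τ j * y j a ≤ v := by
        intro a
        have : ∑ j, τ j * y j a = (∑ j, σ j * y j a) + t * ∑ j, d j * y j a := by
          rw [Finset.mul_sum, ← Finset.sum_add_distrib]
          exact Finset.sum_congr rfl fun j _ => by rw [hτdef]; ring
        rw [this, hdA a, mul_zero, add_zero]
        exact hval a
      have hτj₀ : τ j₀ = 0 := by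
        have hne : d j₀ ≠ 0 := hdj₀.ne
        have hmul : σ j₀ / (-d j₀) * d j₀ = -σ j₀ := by
          rw [div_mul_eq_mul_div, div_neg, mul_div_assoc, div_self hne, mul_one]
        show σ j₀ + σ j₀ / (-d j₀) * d j₀ = 0
        rw [hmul]; ring
      have hsubset : (Finset.univ.filter fun s => 0 < τ s) ⊆ S.erase j₀ := by
        intro j hj
        simp only [mem_filter, mem_univ, true_and] at hj
        have hjS : j ∈ S := by
          by_contra h
          rw [show τ j = 0 by simp [hτdef, hzero j h, hdzero j h]] at hj
          exact lt_irrefl _ hj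
        refine Finset.mem_erase.mpr ⟨?_, hjS⟩
        rintro rfl
        rw [hτj₀] at hj
        exact lt_irrefl _ hj
      have hcard' : (Finset.univ.filter fun s => 0 < τ s).card ≤ m := by
        have h1 := Finset.card_le_card hsubset
        rw [Finset.card_erase_of_mem hj₀S] at h1
        omega
      exact ih τ hτmixed hcard' hτval

set_option maxHeartbeats 1600000 in
/-- Shapley–Snow style small supports: in a `k × n × n` game there is an optimal threat
profile for Players 2 and 3 in which each mixed strategy has support of size at most
`k`. -/
theorem optimal_threat_small_support (k n : ℕ) (hk : 1 ≤ k) (hn : 1 ≤ n)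
    (u₁ : Fin k × Fin n × Fin n → ℝ) :
    ∃ σ₂ σ₃ : Fin n → ℝ, IsMixedStrategy σ₂ ∧ IsMixedStrategy σ₃ ∧
      (Finset.univ.filter fun s => 0 < σ₂ s).card ≤ k ∧
      (Finset.univ.filter fun s => 0 < σ₃ s).card ≤ k ∧
      (⨆ a : Fin k, ∑ j : Fin n, ∑ k' : Fin n, σ₂ j * σ₃ k' * u₁ (a, j, k'))
        = minmaxVal u₁ := by
  haveI : Nonempty (Fin k) := ⟨⟨0, hk⟩⟩
  haveI : Nonempty (Fin n) := ⟨⟨0, hn⟩⟩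
  set f : ((Fin n → ℝ) × (Fin n → ℝ)) → ℝ :=
    fun p => ⨆ a : Fin k, ∑ j, ∑ k', p.1 j * p.2 k' * u₁ (a, j, k') with hf
  have hfc : Continuous f := by
    have hfe : f = fun p => Finset.univ.sup' Finset.univ_nonempty
        (fun a : Fin k => ∑ j, ∑ k', p.1 j * p.2 k' * u₁ (a, j, k')) := by
      funext p
      rw [hf]
      exact (Finset.sup'_univ_eq_ciSup _).symm
    rw [hfe]
    refine Continuous.finset_sup'_apply Finset.univ_nonempty fun a _ => ?_
    refine continuous_finset_sum _ fun j _ => continuous_finset_sum _ fun k' _ => ?_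
    exact (((continuous_apply j).comp continuous_fst).mul
      ((continuous_apply k').comp continuous_snd)).mul continuous_const
  set K : Set ((Fin n → ℝ) × (Fin n → ℝ)) :=
    stdSimplex ℝ (Fin n) ×ˢ stdSimplex ℝ (Fin n) with hK
  have hKc : IsCompact K := (isCompact_stdSimplex (𝕜 := ℝ) (ι := Fin n)).prod (isCompact_stdSimplex (𝕜 := ℝ) (ι := Fin n))
  have hKne : K.Nonempty := by
    refine ⟨((fun _ => (n:ℝ)⁻¹), fun _ => (n:ℝ)⁻¹), ?_, ?_⟩ <;>
    · refine ⟨fun _ => by positivity, ?_⟩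
      rw [Finset.sum_const, Finset.card_fin, nsmul_eq_mul]
      field_simp
  obtain ⟨p₀, hp₀K, hp₀min⟩ := hKc.exists_isMinOn hKne hfc.continuousOn
  have hmemK : ∀ σ τ : Fin n → ℝ, IsMixedStrategy σ → IsMixedStrategy τ → (σ, τ) ∈ K :=
    fun σ τ hσ hτ => Set.mk_mem_prod hσ hτ
  have hp₁ : IsMixedStrategy p₀.1 := hp₀K.1
  have hp₂ : IsMixedStrategy p₀.2 := hp₀K.2
  have hleast : IsLeast { v | ∃ σ₂ : Fin n → ℝ, ∃ σ₃ : Fin n → ℝ,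
      IsMixedStrategy σ₂ ∧ IsMixedStrategy σ₃ ∧
      v = ⨆ a : Fin k, ∑ j : Fin n, ∑ k' : Fin n, σ₂ j * σ₃ k' * u₁ (a, j, k') } (f p₀) := by
    constructor
    · exact ⟨p₀.1, p₀.2, hp₁, hp₂, rfl⟩
    · rintro vv ⟨σ₂, σ₃, h2, h3, rfl⟩
      exact hp₀min (hmemK σ₂ σ₃ h2 h3)
  have hvmin : minmaxVal u₁ = f p₀ := hleast.csInf_eq
  -- stage 1: shrink σ₂'s support, with σ₃ = p₀.2 fixed
  set y : Fin n → Fin k → ℝ := fun j a => ∑ k', p₀.2 k' * u₁ (a, j, k') with hy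
  have hswap1 : ∀ (σ : Fin n → ℝ) (a : Fin k),
      ∑ j, σ j * y j a = ∑ j, ∑ k', σ j * p₀.2 k' * u₁ (a, j, k') := by
    intro σ a
    refine Finset.sum_congr rfl fun j _ => ?_
    rw [hy, Finset.mul_sum]
    exact Finset.sum_congr rfl fun k' _ => by ring
  have hmin1 : ∀ τ : Fin n → ℝ, IsMixedStrategy τ →
      f p₀ ≤ ⨆ a : Fin k, ∑ j, τ j * y j a := by
    intro τ hτ
    have h1 : (⨆ a : Fin k, ∑ j, τ j * y j a) = f (τ, p₀.2) := by
      rw [hf]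
      exact iSup_congr fun a => hswap1 τ a
    rw [h1]
    exact hp₀min (hmemK τ p₀.2 hτ hp₂)
  have hval1 : ∀ a : Fin k, ∑ j, p₀.1 j * y j a ≤ f p₀ := by
    intro a
    rw [hswap1]
    have hfp : f p₀ = ⨆ a : Fin k, ∑ j, ∑ k', p₀.1 j * p₀.2 k' * u₁ (a, j, k') := rfl
    rw [hfp]
    exact le_ciSup (Set.Finite.bddAbove
      (Set.finite_range fun a : Fin k => ∑ j, ∑ k', p₀.1 j * p₀.2 k' * u₁ (a, j, k'))) a
  obtain ⟨σ₂, hσ₂mix, hσ₂card, hσ₂val⟩ :=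
    small_support_aux k hk n y (f p₀) hmin1 n p₀.1 hp₁
      (le_trans (Finset.card_filter_le _ _) (by simp)) hval1
  -- stage 2: shrink σ₃'s support, with σ₂ fixed
  set z : Fin n → Fin k → ℝ := fun k' a => ∑ j, σ₂ j * u₁ (a, j, k') with hz
  have hswap2 : ∀ (σ₃ : Fin n → ℝ) (a : Fin k),
      ∑ k', σ₃ k' * z k' a = ∑ j, ∑ k', σ₂ j * σ₃ k' * u₁ (a, j, k') := by
    intro σ₃ a
    rw [Finset.sum_comm]
    refine Finset.sum_congr rfl fun k' _ => ?_
    rw [hz, Finset.mul_sum]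
    exact Finset.sum_congr rfl fun j _ => by ring
  have hmin2 : ∀ τ : Fin n → ℝ, IsMixedStrategy τ →
      f p₀ ≤ ⨆ a : Fin k, ∑ k', τ k' * z k' a := by
    intro τ hτ
    have h1 : (⨆ a : Fin k, ∑ k', τ k' * z k' a) = f (σ₂, τ) := by
      rw [hf]
      exact iSup_congr fun a => hswap2 τ a
    rw [h1]
    exact hp₀min (hmemK σ₂ τ hσ₂mix hτ)
  have hval2 : ∀ a : Fin k, ∑ k', p₀.2 k' * z k' a ≤ f p₀ := by
    intro a
    rw [hswap2 _ a, ← hswap1 σ₂ a]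
    exact hσ₂val a
  obtain ⟨σ₃, hσ₃mix, hσ₃card, hσ₃val⟩ :=
    small_support_aux k hk n z (f p₀) hmin2 n p₀.2 hp₂
      (le_trans (Finset.card_filter_le _ _) (by simp)) hval2
  refine ⟨σ₂, σ₃, hσ₂mix, hσ₃mix, hσ₂card, hσ₃card, ?_⟩
  rw [hvmin]
  refine le_antisymm (ciSup_le fun a => ?_) (hleast.2 ⟨σ₂, σ₃, hσ₂mix, hσ₃mix, rfl⟩)
  rw [← hswap2 σ₃ a]
  exact hσ₃val a
end

section
/- Support enumeration computes the minmax value: let 1 ≤ k ≤ n be integers and let u₁ : Fin k × Fin n × Fin n → ℝ be Player 1's payoff in a three-player game. Then the minmax value for Player 1 equals the minimum, over all pairs of subsets T₂, T₃ ⊆ Fin n with |T₂| = |T₃| = k, of min over mixed strategies σ₂ supported in T₂ and σ₃ supported in T₃ of max_{a ∈ Fin k} ∑_{j,k'} σ₂(j)·σ₃(k')·u₁(a,j,k'). -/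
/-- Existence of a feasible descent direction supported in a big support. -/
lemma exists_dir (k n : ℕ) (hk : 1 ≤ k) (c : Fin k → Fin n → ℝ) (T : Finset (Fin n))
    (hT : k + 1 ≤ T.card) :
    ∃ d : Fin n → ℝ, d ≠ 0 ∧ (∀ j, j ∉ T → d j = 0) ∧ (∑ j, d j = 0) ∧
      ∀ a, ∑ j, d j * c a j ≤ 0 := by
  classical
  set M : Matrix (Unit ⊕ Fin k) ↥T ℝ :=
    Matrix.of fun i (j : ↥T) => Sum.elim (fun _ => (1:ℝ)) (fun a => c a j) i with hM
  set L := M.mulVecLin with hL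
  have hrankT : Module.finrank ℝ (↥T → ℝ) = T.card := by
    simp [Module.finrank_pi]
  have hrank2 : Module.finrank ℝ ((Unit ⊕ Fin k) → ℝ) = 1 + k := by
    simp [Module.finrank_pi]
  -- get f : ↥T → ℝ, f ≠ 0, with (L f) (inl) = 0 and (L f) (inr a) ≤ 0
  have key : ∃ f : ↥T → ℝ, f ≠ 0 ∧ (L f) (Sum.inl ()) = 0 ∧ ∀ a, (L f) (Sum.inr a) ≤ 0 := by
    by_cases hinj : Function.Injective L
    · have hcard : T.card = k + 1 := by
        have := LinearMap.finrank_le_finrank_of_injective hinj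
        rw [hrankT, hrank2] at this
        omega
      have hsurj : Function.Surjective L := by
        refine (LinearMap.injective_iff_surjective_of_finrank_eq_finrank ?_).mp hinj
        rw [hrankT, hrank2, hcard]; omega
      obtain ⟨f, hf⟩ := hsurj (Sum.elim (fun _ => (0:ℝ)) (fun _ => (-1:ℝ)))
      refine ⟨f, ?_, by rw [hf]; simp, fun a => by rw [hf]; simp⟩
      rintro rfl
      have := congrFun hf (Sum.inr ⟨0, hk⟩)
      simp at this
    · rw [← LinearMap.ker_eq_bot] at hinj
      obtain ⟨f, hfmem, hf0⟩ := Submodule.exists_mem_ne_zero_of_ne_bot hinj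
      rw [LinearMap.mem_ker] at hfmem
      exact ⟨f, hf0, by rw [hfmem]; simp, fun a => by rw [hfmem]; simp⟩
  obtain ⟨f, hf0, hsum, hle⟩ := key
  have key2 : ∀ g : Fin n → ℝ,
      ∑ j : Fin n, (if h : j ∈ T then f ⟨j, h⟩ else 0) * g j = ∑ j : ↥T, f j * g ↑j := by
    intro g
    rw [← Finset.sum_subset (Finset.subset_univ T)
      (by intro j _ hj; simp [hj])]
    rw [← Finset.sum_attach T (fun j => (if h : j ∈ T then f ⟨j, h⟩ else 0) * g j)]
    exact Finset.sum_congr rfl fun j _ => by simp [j.2]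
  have hmv : ∀ i, L f i = ∑ j : ↥T, M i j * f j := by
    intro i
    simp [hL, Matrix.mulVecLin, Matrix.mulVec, dotProduct]
  refine ⟨fun j => if h : j ∈ T then f ⟨j, h⟩ else 0, ?_, ?_, ?_, ?_⟩
  · obtain ⟨j, hj⟩ := Function.ne_iff.mp hf0
    intro hcon
    have := congrFun hcon (j : Fin n)
    simp [j.2] at this
    exact hj this
  · intro j hj; simp [hj]
  · have h1 := key2 (fun _ => 1)
    simp only [mul_one] at h1
    rw [h1]
    rw [hmv (Sum.inl ())] at hsum
    simpa [hM] using hsum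
  · intro a
    have h1 := key2 (c a)
    rw [h1]
    have := hle a
    rw [hmv (Sum.inr a)] at this
    simp only [hM, Matrix.of_apply, Sum.elim_inr] at this
    calc ∑ j : ↥T, f j * c a ↑j = ∑ j : ↥T, c a ↑j * f j := by
          exact Finset.sum_congr rfl fun j _ => mul_comm _ _
      _ ≤ 0 := this

/-- One descent step: if the support is bigger than `k`, we can shrink it
without increasing any of the `k` payoffs. -/
lemma shrink_step (k n : ℕ) (hk : 1 ≤ k) (c : Fin k → Fin n → ℝ) (σ : Fin n → ℝ)
    (hσ : IsMixedStrategy σ)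
    (hbig : k + 1 ≤ (Finset.univ.filter fun j => 0 < σ j).card) :
    ∃ σ' : Fin n → ℝ, IsMixedStrategy σ' ∧
      (Finset.univ.filter fun j => 0 < σ' j).card <
        (Finset.univ.filter fun j => 0 < σ j).card ∧
      ∀ a, ∑ j, σ' j * c a j ≤ ∑ j, σ j * c a j := by
  classical
  obtain ⟨hσ0, hσ1⟩ := hσ
  set T := Finset.univ.filter fun j => 0 < σ j with hTdefEq
  obtain ⟨d, hd0, hdsupp, hdsum, hdle⟩ := exists_dir k n hk c T hbig
  -- d has a negative coordinate
  have hneg : ∃ j, d j < 0 := by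
    by_contra hcon
    push_neg at hcon
    apply hd0
    funext j
    exact (Finset.sum_eq_zero_iff_of_nonneg (fun j _ => hcon j)).mp hdsum j (Finset.mem_univ j)
  set N := Finset.univ.filter fun j => d j < 0 with hNdef
  have hNne : N.Nonempty := by
    obtain ⟨j, hj⟩ := hneg
    exact ⟨j, by simp [hNdef, hj]⟩
  obtain ⟨j₀, hj₀N, hj₀min⟩ := Finset.exists_min_image N (fun j => σ j / (-d j)) hNne
  have hdj₀ : d j₀ < 0 := by simpa [hNdef] using hj₀N
  have hj₀T : j₀ ∈ T := by
    by_contra hcon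
    exact absurd (hdsupp j₀ hcon) (ne_of_lt hdj₀)
  have hσj₀ : 0 < σ j₀ := by simpa [hTdefEq] using hj₀T
  set t := σ j₀ / (-d j₀) with htdef
  have ht0 : 0 < t := div_pos hσj₀ (by linarith)
  refine ⟨fun j => σ j + t * d j, ⟨?_, ?_⟩, ?_, ?_⟩
  · intro j
    show 0 ≤ σ j + t * d j
    by_cases hdj : d j < 0
    · have hmem : j ∈ N := by simp [hNdef, hdj]
      have hle := hj₀min j hmem
      have : t * (-d j) ≤ σ j / (-d j) * (-d j) :=
        mul_le_mul_of_nonneg_right hle (by linarith)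
      rw [div_mul_cancel₀ _ (by linarith : -d j ≠ 0)] at this
      nlinarith
    · push_neg at hdj
      have : 0 ≤ t * d j := mul_nonneg ht0.le hdj
      linarith [hσ0 j]
  · rw [Finset.sum_add_distrib, hσ1, ← Finset.mul_sum, hdsum]
    ring
  · apply Finset.card_lt_card
    constructor
    · intro j hj
      simp only [hTdefEq, Finset.mem_filter, Finset.mem_univ, true_and] at hj ⊢
      by_contra hcon
      push_neg at hcon
      have hσj : σ j = 0 := le_antisymm hcon (hσ0 j)
      have hdj : d j = 0 := hdsupp j (by simp [hTdefEq, hσj])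
      simp [hσj, hdj] at hj
    · intro hcon
      have hj₀mem := hcon hj₀T
      simp only [Finset.mem_filter, Finset.mem_univ, true_and] at hj₀mem
      have h2 : t * (-d j₀) = σ j₀ := div_mul_cancel₀ _ (by linarith : -d j₀ ≠ 0)
      have : σ j₀ + t * d j₀ = 0 := by nlinarith
      linarith
  · intro a
    have : ∑ j, (σ j + t * d j) * c a j = ∑ j, σ j * c a j + t * ∑ j, d j * c a j := by
      rw [Finset.mul_sum, ← Finset.sum_add_distrib]
      exact Finset.sum_congr rfl fun j _ => by ring
    rw [this]
    nlinarith [hdle a, ht0]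

/-- Any mixed strategy can be replaced by one with support of size at most `k`,
weakly decreasing all `k` payoffs. -/
lemma shrink (k n : ℕ) (hk : 1 ≤ k) (c : Fin k → Fin n → ℝ) (σ : Fin n → ℝ)
    (hσ : IsMixedStrategy σ) :
    ∃ σ' : Fin n → ℝ, IsMixedStrategy σ' ∧
      (Finset.univ.filter fun j => 0 < σ' j).card ≤ k ∧
      ∀ a, ∑ j, σ' j * c a j ≤ ∑ j, σ j * c a j := by
  classical
  obtain ⟨m, hm⟩ : ∃ m, (Finset.univ.filter fun j => 0 < σ j).card ≤ m :=
    ⟨_, le_refl _⟩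
  induction m generalizing σ with
  | zero =>
    exact ⟨σ, hσ, by omega, fun a => le_refl _⟩
  | succ m ih =>
    by_cases hsmall : (Finset.univ.filter fun j => 0 < σ j).card ≤ k
    · exact ⟨σ, hσ, hsmall, fun a => le_refl _⟩
    · obtain ⟨σ'', hσ'', hcard, hpay⟩ := shrink_step k n hk c σ hσ (by omega)
      obtain ⟨σ', hσ', hcard', hpay'⟩ := ih σ'' hσ'' (by omega)
      exact ⟨σ', hσ', hcard', fun a => le_trans (hpay' a) (hpay a)⟩

theorem minmax_support_enumeration' (k n : ℕ) (hk : 1 ≤ k) (hkn : k ≤ n)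
    (u₁ : Fin k × Fin n × Fin n → ℝ) :
    sInf { v | ∃ σ₂ : Fin n → ℝ, ∃ σ₃ : Fin n → ℝ,
      IsMixedStrategy σ₂ ∧ IsMixedStrategy σ₃ ∧
      v = ⨆ a : Fin k, ∑ j : Fin n, ∑ k' : Fin n, σ₂ j * σ₃ k' * u₁ (a, j, k') } =
      sInf { v : ℝ | ∃ T₂ T₃ : Finset (Fin n), T₂.card = k ∧ T₃.card = k ∧
        ∃ σ₂ σ₃ : Fin n → ℝ, IsMixedStrategy σ₂ ∧ IsMixedStrategy σ₃ ∧
          (∀ j, 0 < σ₂ j → j ∈ T₂) ∧ (∀ j, 0 < σ₃ j → j ∈ T₃) ∧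
          v = ⨆ a : Fin k, ∑ j : Fin n, ∑ k' : Fin n, σ₂ j * σ₃ k' * u₁ (a, j, k') } := by
  classical
  have hn : 1 ≤ n := le_trans hk hkn
  haveI : Nonempty (Fin k) := ⟨⟨0, hk⟩⟩
  set A := { v | ∃ σ₂ : Fin n → ℝ, ∃ σ₃ : Fin n → ℝ,
      IsMixedStrategy σ₂ ∧ IsMixedStrategy σ₃ ∧
      v = ⨆ a : Fin k, ∑ j : Fin n, ∑ k' : Fin n, σ₂ j * σ₃ k' * u₁ (a, j, k') } with hA
  set B := { v : ℝ | ∃ T₂ T₃ : Finset (Fin n), T₂.card = k ∧ T₃.card = k ∧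
        ∃ σ₂ σ₃ : Fin n → ℝ, IsMixedStrategy σ₂ ∧ IsMixedStrategy σ₃ ∧
          (∀ j, 0 < σ₂ j → j ∈ T₂) ∧ (∀ j, 0 < σ₃ j → j ∈ T₃) ∧
          v = ⨆ a : Fin k, ∑ j : Fin n, ∑ k' : Fin n, σ₂ j * σ₃ k' * u₁ (a, j, k') } with hB
  have hBA : B ⊆ A := by
    rintro v ⟨T₂, T₃, -, -, σ₂, σ₃, h₂, h₃, -, -, hv⟩
    exact ⟨σ₂, σ₃, h₂, h₃, hv⟩
  -- lower bound for all elements of A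
  have huniv : (Finset.univ : Finset (Fin k × Fin n × Fin n)).Nonempty := by
    refine ⟨(⟨0, hk⟩, ⟨0, hn⟩, ⟨0, hn⟩), Finset.mem_univ _⟩
  set m := Finset.univ.inf' huniv u₁ with hm
  have hlbA : ∀ v ∈ A, m ≤ v := by
    rintro v ⟨σ₂, σ₃, ⟨h₂0, h₂1⟩, ⟨h₃0, h₃1⟩, rfl⟩
    have hpt : ∀ a, m ≤ ∑ j : Fin n, ∑ k' : Fin n, σ₂ j * σ₃ k' * u₁ (a, j, k') := by
      intro a
      have e1 : ∑ j : Fin n, ∑ k' : Fin n, σ₂ j * σ₃ k' * m = m := by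
        have e2 : ∀ j, ∑ k' : Fin n, σ₂ j * σ₃ k' * m = σ₂ j * ((∑ k' : Fin n, σ₃ k') * m) := by
          intro j
          simp only [Finset.sum_mul, Finset.mul_sum]
          exact Finset.sum_congr rfl fun _ _ => by ring
        rw [Finset.sum_congr rfl fun j _ => e2 j, ← Finset.sum_mul, h₂1, h₃1]
        ring
      calc m = ∑ j : Fin n, ∑ k' : Fin n, σ₂ j * σ₃ k' * m := e1.symm
        _ ≤ ∑ j : Fin n, ∑ k' : Fin n, σ₂ j * σ₃ k' * u₁ (a, j, k') := by
            refine Finset.sum_le_sum fun j _ => Finset.sum_le_sum fun k' _ => ?_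
            exact mul_le_mul_of_nonneg_left (Finset.inf'_le _ (Finset.mem_univ _))
              (mul_nonneg (h₂0 j) (h₃0 k'))
    calc m ≤ ∑ j : Fin n, ∑ k' : Fin n, σ₂ j * σ₃ k' * u₁ (⟨0, hk⟩, j, k') := hpt _
      _ ≤ ⨆ a : Fin k, ∑ j : Fin n, ∑ k' : Fin n, σ₂ j * σ₃ k' * u₁ (a, j, k') :=
          le_ciSup (Set.Finite.bddAbove (Set.finite_range
            (fun a : Fin k => ∑ j : Fin n, ∑ k' : Fin n, σ₂ j * σ₃ k' * u₁ (a, j, k')))) ⟨0, hk⟩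
  have hbddA : BddBelow A := ⟨m, hlbA⟩
  have hbddB : BddBelow B := hbddA.mono hBA
  -- nonemptiness of B (hence A)
  have hBne : B.Nonempty := by
    obtain ⟨T, hsub, -, hcard⟩ := Finset.exists_subsuperset_card_eq
      (Finset.subset_univ {(⟨0, hn⟩ : Fin n)}) (by simpa using hk) (by simpa using hkn)
    set σp : Fin n → ℝ := fun j => if j = ⟨0, hn⟩ then 1 else 0 with hσp
    have hmix : IsMixedStrategy σp := by
      constructor
      · intro j; by_cases h : j = ⟨0, hn⟩ <;> simp [hσp, h]
      · simp [hσp]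
    have hsupp : ∀ j, 0 < σp j → j ∈ T := by
      intro j hj
      by_cases h : j = ⟨0, hn⟩
      · exact h ▸ hsub (Finset.mem_singleton_self _)
      · simp [hσp, h] at hj
    exact ⟨_, T, T, hcard, hcard, σp, σp, hmix, hmix, hsupp, hsupp, rfl⟩
  have hAne : A.Nonempty := hBne.mono hBA
  apply le_antisymm
  · exact csInf_le_csInf hbddA hBne hBA
  · refine le_csInf hAne ?_
    rintro v ⟨σ₂, σ₃, hσ₂, hσ₃, rfl⟩
    -- shrink σ₂ against c₁
    set c₁ : Fin k → Fin n → ℝ := fun a j => ∑ k' : Fin n, σ₃ k' * u₁ (a, j, k') with hc₁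
    obtain ⟨σ₂', hσ₂', hcard₂, hpay₂⟩ := shrink k n hk c₁ σ₂ hσ₂
    have rearr1 : ∀ (σ : Fin n → ℝ) a, ∑ j, σ j * c₁ a j =
        ∑ j : Fin n, ∑ k' : Fin n, σ j * σ₃ k' * u₁ (a, j, k') := by
      intro σ a
      refine Finset.sum_congr rfl fun j _ => ?_
      rw [hc₁, Finset.mul_sum]
      exact Finset.sum_congr rfl fun k' _ => by ring
    set c₂ : Fin k → Fin n → ℝ := fun a k' => ∑ j : Fin n, σ₂' j * u₁ (a, j, k') with hc₂
    obtain ⟨σ₃', hσ₃', hcard₃, hpay₃⟩ := shrink k n hk c₂ σ₃ hσ₃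
    have rearr2 : ∀ (τ : Fin n → ℝ) a, ∑ k', τ k' * c₂ a k' =
        ∑ j : Fin n, ∑ k' : Fin n, σ₂' j * τ k' * u₁ (a, j, k') := by
      intro τ a
      rw [Finset.sum_comm]
      refine Finset.sum_congr rfl fun k' _ => ?_
      rw [hc₂, Finset.mul_sum]
      exact Finset.sum_congr rfl fun j _ => by ring
    -- pointwise domination
    have hdom : ∀ a, ∑ j : Fin n, ∑ k' : Fin n, σ₂' j * σ₃' k' * u₁ (a, j, k') ≤
        ∑ j : Fin n, ∑ k' : Fin n, σ₂ j * σ₃ k' * u₁ (a, j, k') := by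
      intro a
      calc ∑ j : Fin n, ∑ k' : Fin n, σ₂' j * σ₃' k' * u₁ (a, j, k')
          = ∑ k', σ₃' k' * c₂ a k' := (rearr2 σ₃' a).symm
        _ ≤ ∑ k', σ₃ k' * c₂ a k' := hpay₃ a
        _ = ∑ j : Fin n, ∑ k' : Fin n, σ₂' j * σ₃ k' * u₁ (a, j, k') := rearr2 σ₃ a
        _ = ∑ j, σ₂' j * c₁ a j := (rearr1 σ₂' a).symm
        _ ≤ ∑ j, σ₂ j * c₁ a j := hpay₂ a
        _ = _ := rearr1 σ₂ a
    -- supports of size k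
    obtain ⟨T₂, hT₂sub, -, hT₂card⟩ := Finset.exists_subsuperset_card_eq
      (Finset.subset_univ (Finset.univ.filter fun j => 0 < σ₂' j)) hcard₂ (by simpa using hkn)
    obtain ⟨T₃, hT₃sub, -, hT₃card⟩ := Finset.exists_subsuperset_card_eq
      (Finset.subset_univ (Finset.univ.filter fun j => 0 < σ₃' j)) hcard₃ (by simpa using hkn)
    have hmemB : (⨆ a : Fin k, ∑ j : Fin n, ∑ k' : Fin n, σ₂' j * σ₃' k' * u₁ (a, j, k')) ∈ B := by
      refine ⟨T₂, T₃, hT₂card, hT₃card, σ₂', σ₃', hσ₂', hσ₃', ?_, ?_, rfl⟩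
      · intro j hj; exact hT₂sub (by simp [hj])
      · intro j hj; exact hT₃sub (by simp [hj])
    refine le_trans (csInf_le hbddB hmemB) ?_
    refine ciSup_le fun a => ?_
    exact le_trans (hdom a) (le_ciSup (Set.Finite.bddAbove (Set.finite_range
      (fun a : Fin k => ∑ j : Fin n, ∑ k' : Fin n, σ₂ j * σ₃ k' * u₁ (a, j, k')))) a)

/-- Support enumeration: for `1 ≤ k ≤ n`, the minmax value of a `k × n × n` game equals
the minimum over all pairs of size-`k` supports `T₂, T₃ ⊆ Fin n` of the minmax value
restricted to mixed strategies supported in `T₂` and `T₃` respectively. -/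
theorem minmax_support_enumeration (k n : ℕ) (hk : 1 ≤ k) (hkn : k ≤ n)
    (u₁ : Fin k × Fin n × Fin n → ℝ) :
    minmaxVal u₁ =
      sInf { v : ℝ | ∃ T₂ T₃ : Finset (Fin n), T₂.card = k ∧ T₃.card = k ∧
        ∃ σ₂ σ₃ : Fin n → ℝ, IsMixedStrategy σ₂ ∧ IsMixedStrategy σ₃ ∧
          (∀ j, 0 < σ₂ j → j ∈ T₂) ∧ (∀ j, 0 < σ₃ j → j ∈ T₃) ∧
          v = ⨆ a : Fin k, ∑ j : Fin n, ∑ k' : Fin n, σ₂ j * σ₃ k' * u₁ (a, j, k') } := by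
  rw [minmaxVal]
  exact minmax_support_enumeration' k n hk hkn u₁
end

section
/- For every finite simple undirected graph G = (V,E) with V nonempty and every integer k ≥ 1, the minmax value for Player 1 in the clique game Γ(G,k) is at least 1/k. -/
/-- The clique game `Γ(G,k)`: Player 1 picks a label in `Fin k` and points at one of the
two bullies (`Fin 2`); each bully picks a label in `Fin k` and a vertex of `G`.
Player 1 gets payoff 1 iff his label matches the label of the bully he points at, or the
bullies choose the same label with different vertices, or different labels with the same
vertex, or distinct non-adjacent vertices; otherwise payoff 0. -/
def cliqueGame {V : Type*} [DecidableEq V] (G : SimpleGraph V) [DecidableRel G.Adj]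
    (k : ℕ) : (Fin k × Fin 2) × (Fin k × V) × (Fin k × V) → ℝ :=
  fun p =>
    if p.1.1 = (if p.1.2 = 0 then p.2.1.1 else p.2.2.1) ∨
       (p.2.1.1 = p.2.2.1 ∧ p.2.1.2 ≠ p.2.2.2) ∨
       (p.2.1.1 ≠ p.2.2.1 ∧ p.2.1.2 = p.2.2.2) ∨
       (p.2.1.2 ≠ p.2.2.2 ∧ ¬ G.Adj p.2.1.2 p.2.2.2)
    then 1 else 0

/-- The minmax value for Player 1 in the clique game `Γ(G,k)` is always at least `1/k`. -/
theorem cliqueGame_minmax_ge (V : Type*) [Fintype V] [DecidableEq V] [Nonempty V]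
    (G : SimpleGraph V) [DecidableRel G.Adj] (k : ℕ) (hk : 1 ≤ k) :
    1 / (k : ℝ) ≤ minmaxVal (cliqueGame G k) := by
  have hkpos : (0:ℝ) < k := by exact_mod_cast hk
  haveI : NeZero k := ⟨Nat.one_le_iff_ne_zero.mp hk⟩
  have hu : ∀ p, (0:ℝ) ≤ cliqueGame G k p := by
    intro p; unfold cliqueGame; split_ifs <;> norm_num
  apply le_csInf
  · -- the set of achievable values is nonempty: uniform strategies
    have hcard : (0:ℝ) < (Fintype.card (Fin k × V) : ℝ) := by
      exact_mod_cast Fintype.card_pos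
    refine ⟨_, fun _ => (Fintype.card (Fin k × V) : ℝ)⁻¹,
      fun _ => (Fintype.card (Fin k × V) : ℝ)⁻¹, ?_, ?_, rfl⟩ <;>
    · refine ⟨fun s => by positivity, ?_⟩
      rw [Finset.sum_const, Finset.card_univ, nsmul_eq_mul, mul_inv_cancel₀ hcard.ne']
  · rintro v ⟨σ₂, σ₃, ⟨h2n, h2s⟩, ⟨h3n, h3s⟩, rfl⟩
    set g : Fin k → ℝ := fun x => ∑ j : Fin k × V, if j.1 = x then σ₂ j else 0 with hg
    have hgsum : ∑ x, g x = 1 := by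
      rw [hg, Finset.sum_comm]
      rw [← h2s]
      refine Finset.sum_congr rfl fun j _ => ?_
      simp
    have hx : ∃ x : Fin k, 1 / (k:ℝ) ≤ g x := by
      by_contra h
      push_neg at h
      have h1 : ∑ x : Fin k, g x < ∑ _x : Fin k, 1 / (k:ℝ) :=
        Finset.sum_lt_sum_of_nonempty Finset.univ_nonempty fun x _ => h x
      rw [hgsum, Finset.sum_const, Finset.card_univ, Fintype.card_fin, nsmul_eq_mul,
        mul_one_div, div_self hkpos.ne'] at h1
      exact lt_irrefl _ h1
    obtain ⟨x, hxle⟩ := hx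
    have key : g x ≤ ∑ j : Fin k × V, ∑ k' : Fin k × V,
        σ₂ j * σ₃ k' * cliqueGame G k ((x, (0 : Fin 2)), j, k') := by
      rw [hg]
      refine Finset.sum_le_sum fun j _ => ?_
      by_cases hj : j.1 = x
      · simp only [hj, if_pos rfl]
        have hval : ∀ k' : Fin k × V,
            σ₂ j * σ₃ k' * cliqueGame G k ((x, (0 : Fin 2)), j, k') = σ₂ j * σ₃ k' := by
          intro k'
          have : cliqueGame G k ((x, (0 : Fin 2)), j, k') = 1 := by
            unfold cliqueGame
            rw [if_pos]
            exact Or.inl (show x = j.1 from hj.symm)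
          rw [this, mul_one]
        calc σ₂ j = σ₂ j * ∑ k' : Fin k × V, σ₃ k' := by rw [h3s, mul_one]
          _ = ∑ k' : Fin k × V, σ₂ j * σ₃ k' := by rw [Finset.mul_sum]
          _ = _ := Finset.sum_congr rfl fun k' _ => (hval k').symm
          _ ≤ _ := le_rfl
      · simp only [if_neg hj]
        exact Finset.sum_nonneg fun k' _ =>
          mul_nonneg (mul_nonneg (h2n j) (h3n k')) (hu _)
    have hbdd : BddAbove (Set.range fun a : Fin k × Fin 2 =>
        ∑ j : Fin k × V, ∑ k' : Fin k × V, σ₂ j * σ₃ k' * cliqueGame G k (a, j, k')) :=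
      Set.Finite.bddAbove (Set.finite_range _)
    calc 1 / (k:ℝ) ≤ g x := hxle
      _ ≤ _ := key
      _ ≤ _ := le_ciSup hbdd ((x, (0:Fin 2)))
end

section
/- Let G = (V,E) be a finite simple undirected graph with V nonempty and let k ≥ 1 be an integer. If G contains a k-clique, that is, a set C ⊆ V with |C| = k all of whose pairs of distinct vertices are adjacent, then the minmax value for Player 1 in the clique game Γ(G,k) equals exactly 1/k. -/
lemma cliqueGame_nonneg {V : Type*} [DecidableEq V] (G : SimpleGraph V) [DecidableRel G.Adj]
    (k : ℕ) (p) : 0 ≤ cliqueGame G k p := by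
  unfold cliqueGame; split_ifs <;> norm_num


/-- If `G` contains a `k`-clique, the minmax value for Player 1 in the clique game
`Γ(G,k)` is exactly `1/k`. -/
theorem cliqueGame_minmax_eq_of_clique (V : Type*) [Fintype V] [DecidableEq V]
    [Nonempty V] (G : SimpleGraph V) [DecidableRel G.Adj] (k : ℕ) (hk : 1 ≤ k)
    (hclique : ∃ C : Finset V, C.card = k ∧
      ∀ v ∈ C, ∀ w ∈ C, v ≠ w → G.Adj v w) :
    minmaxVal (cliqueGame G k) = 1 / (k : ℝ) := by
  obtain ⟨C, hC, hcl⟩ := hclique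
  haveI : Nonempty (Fin k) := ⟨⟨0, by omega⟩⟩
  have hk0 : (k : ℝ) ≠ 0 := by positivity
  set u := cliqueGame G k with hu_def
  -- lower bound for any strategies
  have lb : ∀ σ₂ σ₃ : Fin k × V → ℝ, IsMixedStrategy σ₂ → IsMixedStrategy σ₃ →
      1 / (k : ℝ) ≤ ⨆ a : Fin k × Fin 2, ∑ j : Fin k × V, ∑ m : Fin k × V,
        σ₂ j * σ₃ m * u (a, j, m) := by
    intro σ₂ σ₃ h₂ h₃
    set F : Fin k × Fin 2 → ℝ :=
      fun a => ∑ j : Fin k × V, ∑ m : Fin k × V, σ₂ j * σ₃ m * u (a, j, m) with hF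
    have hsum : 1 ≤ ∑ x : Fin k, F (x, 0) := by
      have key : ∀ x : Fin k,
          (∑ j : Fin k × V, ∑ m : Fin k × V,
            σ₂ j * σ₃ m * (if x = j.1 then (1:ℝ) else 0)) ≤ F (x, 0) := by
        intro x
        apply Finset.sum_le_sum; intro j _
        apply Finset.sum_le_sum; intro m _
        apply mul_le_mul_of_nonneg_left _ (mul_nonneg (h₂.1 j) (h₃.1 m))
        by_cases hx : x = j.1
        · simp [hu_def, cliqueGame, hx]
        · simp only [hx, if_false]
          exact cliqueGame_nonneg G k _
      have inner : ∀ (x : Fin k) (j : Fin k × V),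
          ∑ m : Fin k × V, σ₂ j * σ₃ m * (if x = j.1 then (1:ℝ) else 0)
            = σ₂ j * (if x = j.1 then (1:ℝ) else 0) := by
        intro x j
        rw [show (∑ m : Fin k × V, σ₂ j * σ₃ m * (if x = j.1 then (1:ℝ) else 0))
            = (σ₂ j * (if x = j.1 then (1:ℝ) else 0)) * ∑ m : Fin k × V, σ₃ m by
          rw [Finset.mul_sum]; apply Finset.sum_congr rfl; intro m _; ring]
        rw [h₃.2, mul_one]
      have tot : ∑ x : Fin k, ∑ j : Fin k × V, ∑ m : Fin k × V,
          σ₂ j * σ₃ m * (if x = j.1 then (1:ℝ) else 0) = 1 := by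
        simp only [inner]
        rw [Finset.sum_comm]
        simp only [mul_ite, mul_one, mul_zero, Finset.sum_ite_eq, Finset.sum_ite_eq', Finset.mem_univ, if_true]
        exact h₂.2
      calc (1:ℝ) = ∑ x : Fin k, ∑ j : Fin k × V, ∑ m : Fin k × V,
              σ₂ j * σ₃ m * (if x = j.1 then (1:ℝ) else 0) := tot.symm
        _ ≤ ∑ x : Fin k, F (x, 0) := Finset.sum_le_sum fun x _ => key x
    have hex : ∃ x : Fin k, 1 / (k : ℝ) ≤ F (x, 0) := by
      by_contra h
      push_neg at h
      have hlt : ∑ x : Fin k, F (x, 0) < ∑ _x : Fin k, 1 / (k : ℝ) :=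
        Finset.sum_lt_sum_of_nonempty Finset.univ_nonempty (fun i _ => h i)
      rw [Finset.sum_const, Finset.card_univ, Fintype.card_fin, nsmul_eq_mul,
        mul_one_div, div_self hk0] at hlt
      linarith
    obtain ⟨x, hx⟩ := hex
    exact hx.trans (le_ciSup (Set.finite_range F).bddAbove (x, 0))
  -- clique strategy
  let e := C.equivFinOfCardEq hC
  let f : Fin k → V := fun x => (e.symm x : V)
  have hfC : ∀ x, f x ∈ C := fun x => (e.symm x).2
  have hfinj : Function.Injective f := fun a b h => e.symm.injective (Subtype.ext h)
  set σ : Fin k × V → ℝ := fun p => if p.2 = f p.1 then 1 / (k : ℝ) else 0 with hσdef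
  have hσ : IsMixedStrategy σ := by
    constructor
    · intro s
      show (0:ℝ) ≤ if s.2 = f s.1 then 1 / (k : ℝ) else 0
      split_ifs <;> positivity
    · rw [Fintype.sum_prod_type]
      simp only [hσdef, Finset.sum_ite_eq', Finset.mem_univ, if_true]
      rw [Finset.sum_const, Finset.card_univ, Fintype.card_fin, nsmul_eq_mul,
        mul_one_div, div_self hk0]
  have hsumσ : ∀ g : Fin k × V → ℝ,
      ∑ p : Fin k × V, σ p * g p = ∑ x : Fin k, (1 / (k : ℝ)) * g (x, f x) := by
    intro g
    rw [Fintype.sum_prod_type]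
    apply Finset.sum_congr rfl; intro x _
    simp [hσdef, ite_mul, Finset.sum_ite_eq']
  have huval : ∀ (a : Fin k × Fin 2) (x₂ x₃ : Fin k),
      u (a, (x₂, f x₂), (x₃, f x₃)) =
        if a.1 = (if a.2 = 0 then x₂ else x₃) then (1:ℝ) else 0 := by
    intro a x₂ x₃
    by_cases h : a.1 = (if a.2 = 0 then x₂ else x₃)
    · simp only [h, if_true]
      simp [hu_def, cliqueGame, h]
    · simp only [h, if_false]
      by_cases hxx : x₂ = x₃
      · subst hxx
        simp only [ite_self] at h
        simp [hu_def, cliqueGame, h]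
      · have hfne : f x₂ ≠ f x₃ := fun hh => hxx (hfinj hh)
        have hadj : G.Adj (f x₂) (f x₃) := hcl _ (hfC x₂) _ (hfC x₃) hfne
        simp [hu_def, cliqueGame, h, hxx, hfne, hadj]
  have hFval : ∀ a : Fin k × Fin 2,
      ∑ j : Fin k × V, ∑ m : Fin k × V, σ j * σ m * u (a, j, m) = 1 / (k : ℝ) := by
    intro a
    have step1 : ∀ j, ∑ m : Fin k × V, σ j * σ m * u (a, j, m)
        = σ j * ∑ m : Fin k × V, σ m * u (a, j, m) := by
      intro j; rw [Finset.mul_sum]; apply Finset.sum_congr rfl; intro m _; ring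
    simp only [step1]
    rw [hsumσ (fun j => ∑ m : Fin k × V, σ m * u (a, j, m))]
    have step2 : ∀ x₂ : Fin k, ∑ m : Fin k × V, σ m * u (a, (x₂, f x₂), m)
        = ∑ x₃ : Fin k, (1 / (k:ℝ)) * u (a, (x₂, f x₂), (x₃, f x₃)) :=
      fun x₂ => hsumσ (fun m => u (a, (x₂, f x₂), m))
    simp only [step2, huval]
    by_cases h2 : a.2 = 0
    · simp only [h2, if_true]
      simp [Finset.mul_sum, Finset.sum_ite_eq', mul_one_div, div_self hk0]
      field_simp
    · simp only [h2, if_false]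
      simp [Finset.mul_sum, Finset.sum_ite_eq']
      field_simp
  have hmem : (1 / (k : ℝ)) ∈ { v | ∃ σ₂ : Fin k × V → ℝ, ∃ σ₃ : Fin k × V → ℝ,
      IsMixedStrategy σ₂ ∧ IsMixedStrategy σ₃ ∧
      v = ⨆ a : Fin k × Fin 2, ∑ j : Fin k × V, ∑ m : Fin k × V,
        σ₂ j * σ₃ m * u (a, j, m) } := by
    refine ⟨σ, σ, hσ, hσ, ?_⟩
    simp only [hFval]
    exact (ciSup_const).symm
  rw [minmaxVal]
  apply le_antisymm
  · apply csInf_le _ hmem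
    refine ⟨1 / (k:ℝ), ?_⟩
    rintro v ⟨σ₂, σ₃, h₂, h₃, rfl⟩
    exact lb σ₂ σ₃ h₂ h₃
  · apply le_csInf ⟨_, hmem⟩
    rintro v ⟨σ₂, σ₃, h₂, h₃, rfl⟩
    exact lb σ₂ σ₃ h₂ h₃
end

section
/- Let G = (V,E) be a finite simple undirected graph with V nonempty and let k ≥ 5 be an integer. If G contains no k-clique, that is, no set C ⊆ V with |C| = k all of whose pairs of distinct vertices are adjacent, then the minmax value for Player 1 in the clique game Γ(G,k) is at least 1/k + 1/(4k²). -/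
abbrev CGBad {V : Type*} [DecidableEq V] (G : SimpleGraph V) [DecidableRel G.Adj]
    {k : ℕ} (j l : Fin k × V) : Prop :=
  (j.1 = l.1 ∧ j.2 ≠ l.2) ∨ (j.1 ≠ l.1 ∧ j.2 = l.2) ∨ (j.2 ≠ l.2 ∧ ¬ G.Adj j.2 l.2)

lemma cg_key_arith (m ax bx ay by' u₁ u₂ p q : ℝ)
    (hm : 0 < m) (hmax : m < ax) (hmbx : m < bx) (hmay : m < ay) (hmby : m < by')
    (hu₁ : 0 ≤ u₁) (hu₂ : 0 ≤ u₂) (hp : 0 ≤ p) (hq : 0 ≤ q)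
    (hf1 : ax * bx - u₁ ≤ p * bx)
    (hf2 : ay * by' - 2 * u₂ ≤ ay * q) :
    m * m / 2 ≤ u₁ + u₂ + p * q := by
  rcases le_or_gt (m * bx) u₁ with hcase | hcase
  · nlinarith [mul_nonneg hp hq, mul_le_mul_of_nonneg_left hmbx.le hm.le]
  rcases le_or_gt (m * ay) (2 * u₂) with hcase2 | hcase2
  · nlinarith [mul_nonneg hp hq, mul_le_mul_of_nonneg_left hmay.le hm.le]
  have hbxpos : 0 < bx := lt_trans hm hmbx
  have haypos : 0 < ay := lt_trans hm hmay
  set s' := u₁ / bx with hs'def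
  set t' := u₂ / ay with ht'def
  have hs0 : 0 ≤ s' := div_nonneg hu₁ hbxpos.le
  have ht0 : 0 ≤ t' := div_nonneg hu₂ haypos.le
  have hu₁s : u₁ = s' * bx := (div_mul_cancel₀ _ (ne_of_gt hbxpos)).symm
  have hu₂t : u₂ = t' * ay := (div_mul_cancel₀ _ (ne_of_gt haypos)).symm
  have hs'm : s' < m := by rw [hs'def, div_lt_iff₀ hbxpos]; linarith
  have ht'm : 2 * t' < m := by
    have h : t' < m / 2 := by rw [ht'def, div_lt_iff₀ haypos]; linarith
    linarith
  have hp' : m - s' ≤ p := by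
    have h1 : (ax - s') * bx ≤ p * bx := by nlinarith [hu₁s, hf1]
    have h2 : ax - s' ≤ p := le_of_mul_le_mul_right h1 hbxpos
    linarith
  have hq' : m - 2 * t' ≤ q := by
    have h1 : (by' - 2 * t') * ay ≤ q * ay := by nlinarith [hu₂t, hf2]
    have h2 : by' - 2 * t' ≤ q := le_of_mul_le_mul_right h1 haypos
    linarith
  have hP : (m - s') * (m - 2 * t') ≤ p * q := mul_le_mul hp' hq' (by linarith) hp
  nlinarith [hP, mul_le_mul_of_nonneg_left hmbx.le hs0, mul_le_mul_of_nonneg_left hmay.le ht0,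
    mul_nonneg hs0 ht0, mul_le_mul_of_nonneg_left ht'm.le hm.le, hu₁s, hu₂t]

lemma cg_key_arith2 (k : ℝ) (hk : 5 ≤ k) :
    1 / (4 * k) ≤ (k - 1) * ((3 * k + 1) / (4 * k ^ 2) * ((3 * k + 1) / (4 * k ^ 2)) / 2) := by
  have hkpos : 0 < k := by linarith
  have hRHS : (k - 1) * ((3 * k + 1) / (4 * k ^ 2) * ((3 * k + 1) / (4 * k ^ 2)) / 2)
      = ((k - 1) * (3 * k + 1) ^ 2) / (32 * k ^ 4) := by
    field_simp; ring
  rw [hRHS, div_le_div_iff₀ (by positivity) (by positivity)]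
  nlinarith [mul_nonneg (by linarith : (0:ℝ) ≤ k - 5) (by positivity : (0:ℝ) ≤ k ^ 2),
    mul_nonneg (by linarith : (0:ℝ) ≤ k - 5) hkpos.le, hkpos]

set_option maxHeartbeats 1600000 in
lemma cliqueGame_key {V : Type*} [Fintype V] [DecidableEq V] [Nonempty V]
    (G : SimpleGraph V) [DecidableRel G.Adj] (k : ℕ) (hk : 5 ≤ k)
    (hnoclique : ¬ ∃ C : Finset V, C.card = k ∧ ∀ v ∈ C, ∀ w ∈ C, v ≠ w → G.Adj v w)
    (σ₂ σ₃ : Fin k × V → ℝ) (h2 : IsMixedStrategy σ₂) (h3 : IsMixedStrategy σ₃) :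
    ∃ a : Fin k × Fin 2,
      1 / (k : ℝ) + 1 / (4 * (k : ℝ) ^ 2) ≤
        ∑ j : Fin k × V, ∑ l : Fin k × V, σ₂ j * σ₃ l * cliqueGame G k (a, j, l) := by
  classical
  by_contra hcon
  push_neg at hcon
  have hk0 : 0 < k := by omega
  haveI : Nonempty (Fin k) := ⟨⟨0, hk0⟩⟩
  have hkR : (5 : ℝ) ≤ (k : ℝ) := by exact_mod_cast hk
  have hkpos : (0 : ℝ) < (k : ℝ) := by linarith
  obtain ⟨h2n, h2s⟩ := h2
  obtain ⟨h3n, h3s⟩ := h3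
  set T : ℝ := 1 / (k : ℝ) + 1 / (4 * (k : ℝ) ^ 2) with hTdef
  set α : Fin k → ℝ := fun x => ∑ v : V, σ₂ (x, v) with hαdef
  set β : Fin k → ℝ := fun x => ∑ v : V, σ₃ (x, v) with hβdef
  have hα_nonneg : ∀ x, 0 ≤ α x := fun x => Finset.sum_nonneg fun v _ => h2n _
  have hβ_nonneg : ∀ x, 0 ≤ β x := fun x => Finset.sum_nonneg fun v _ => h3n _
  have hαsum : ∑ x : Fin k, α x = 1 := by
    simp only [hαdef]; rw [← h2s, Fintype.sum_prod_type]
  have hβsum : ∑ x : Fin k, β x = 1 := by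
    simp only [hβdef]; rw [← h3s, Fintype.sum_prod_type]
  have hgame0 : ∀ (x : Fin k) (j l : Fin k × V),
      cliqueGame G k ((x, 0), j, l) = if x = j.1 ∨ CGBad G j l then 1 else 0 := by
    intro x j l; simp [cliqueGame, CGBad]
  have hgame1 : ∀ (x : Fin k) (j l : Fin k × V),
      cliqueGame G k ((x, 1), j, l) = if x = l.1 ∨ CGBad G j l then 1 else 0 := by
    intro x j l; simp [cliqueGame, CGBad]
  set b : ℝ := ∑ j : Fin k × V, ∑ l : Fin k × V,
      σ₂ j * σ₃ l * (if CGBad G j l then (1:ℝ) else 0) with hbdef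
  -- label-marginal summation helper
  have hlabel : ∀ (τ : Fin k × V → ℝ) (x : Fin k),
      ∑ j : Fin k × V, τ j * (if x = j.1 then (1:ℝ) else 0) = ∑ v : V, τ (x, v) := by
    intro τ x
    rw [Fintype.sum_prod_type]
    simp [mul_ite, Finset.sum_ite_irrel, Finset.sum_ite_eq]
  -- sum over l of a constant-in-l expression
  have hconst3 : ∀ (j : Fin k × V) (cc : ℝ),
      ∑ l : Fin k × V, σ₂ j * σ₃ l * cc = σ₂ j * cc := by
    intro j cc
    calc ∑ l : Fin k × V, σ₂ j * σ₃ l * cc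
        = ∑ l : Fin k × V, (σ₂ j * cc) * σ₃ l :=
          Finset.sum_congr rfl fun l _ => by ring
      _ = (σ₂ j * cc) * ∑ l : Fin k × V, σ₃ l := by rw [← Finset.mul_sum]
      _ = σ₂ j * cc := by rw [h3s, mul_one]
  have hsum_ind2 : ∀ x : Fin k,
      ∑ j : Fin k × V, ∑ l : Fin k × V, σ₂ j * σ₃ l * (if x = j.1 then (1:ℝ) else 0)
        = α x := by
    intro x
    have h1 : ∀ j : Fin k × V,
        ∑ l : Fin k × V, σ₂ j * σ₃ l * (if x = j.1 then (1:ℝ) else 0)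
          = σ₂ j * (if x = j.1 then (1:ℝ) else 0) := fun j => hconst3 j _
    rw [Finset.sum_congr rfl fun j _ => h1 j, hlabel σ₂ x]
  have hsum_ind3 : ∀ x : Fin k,
      ∑ j : Fin k × V, ∑ l : Fin k × V, σ₂ j * σ₃ l * (if x = l.1 then (1:ℝ) else 0)
        = β x := by
    intro x
    have h1 : ∀ j : Fin k × V,
        ∑ l : Fin k × V, σ₂ j * σ₃ l * (if x = l.1 then (1:ℝ) else 0)
          = σ₂ j * β x := by
      intro j
      calc ∑ l : Fin k × V, σ₂ j * σ₃ l * (if x = l.1 then (1:ℝ) else 0)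
          = ∑ l : Fin k × V, σ₂ j * (σ₃ l * (if x = l.1 then (1:ℝ) else 0)) :=
            Finset.sum_congr rfl fun l _ => by ring
        _ = σ₂ j * ∑ l : Fin k × V, σ₃ l * (if x = l.1 then (1:ℝ) else 0) := by
            rw [← Finset.mul_sum]
        _ = σ₂ j * β x := by rw [hlabel σ₃ x]
    rw [Finset.sum_congr rfl fun j _ => h1 j, ← Finset.sum_mul, h2s, one_mul]
  -- per-action expansion for actions pointing at player 2
  set W : Fin k → ℝ := fun x => ∑ j : Fin k × V, ∑ l : Fin k × V,
      σ₂ j * σ₃ l * ((if x = j.1 then (1:ℝ) else 0) * (if CGBad G j l then (1:ℝ) else 0))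
    with hWdef
  have hFx : ∀ x : Fin k,
      ∑ j : Fin k × V, ∑ l : Fin k × V, σ₂ j * σ₃ l * cliqueGame G k ((x, 0), j, l)
        = α x + b - W x := by
    intro x
    have hpt : ∀ j l : Fin k × V,
        σ₂ j * σ₃ l * cliqueGame G k ((x, 0), j, l)
          = σ₂ j * σ₃ l * (if x = j.1 then (1:ℝ) else 0)
            + σ₂ j * σ₃ l * (if CGBad G j l then (1:ℝ) else 0)
            - σ₂ j * σ₃ l * ((if x = j.1 then (1:ℝ) else 0) * (if CGBad G j l then (1:ℝ) else 0)) := by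
      intro j l
      rw [hgame0]
      by_cases h1 : x = j.1 <;> by_cases hB : CGBad G j l <;> simp [h1, hB]
    calc ∑ j : Fin k × V, ∑ l : Fin k × V, σ₂ j * σ₃ l * cliqueGame G k ((x, 0), j, l)
        = ∑ j : Fin k × V, ∑ l : Fin k × V,
            (σ₂ j * σ₃ l * (if x = j.1 then (1:ℝ) else 0)
            + σ₂ j * σ₃ l * (if CGBad G j l then (1:ℝ) else 0)
            - σ₂ j * σ₃ l * ((if x = j.1 then (1:ℝ) else 0) * (if CGBad G j l then (1:ℝ) else 0))) :=
          Finset.sum_congr rfl fun j _ => Finset.sum_congr rfl fun l _ => hpt j l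
      _ = α x + b - W x := by
          simp only [Finset.sum_add_distrib, Finset.sum_sub_distrib]
          rw [hsum_ind2 x]
  have hWsum : ∑ x : Fin k, W x = b := by
    simp only [hWdef]
    rw [Finset.sum_comm]
    rw [hbdef]
    refine Finset.sum_congr rfl fun j _ => ?_
    rw [Finset.sum_comm]
    refine Finset.sum_congr rfl fun l _ => ?_
    calc ∑ x : Fin k, σ₂ j * σ₃ l * ((if x = j.1 then (1:ℝ) else 0) * (if CGBad G j l then (1:ℝ) else 0))
        = ∑ x : Fin k, (σ₂ j * σ₃ l * (if CGBad G j l then (1:ℝ) else 0)) * (if x = j.1 then (1:ℝ) else 0) :=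
          Finset.sum_congr rfl fun x _ => by ring
      _ = (σ₂ j * σ₃ l * (if CGBad G j l then (1:ℝ) else 0)) * ∑ x : Fin k, (if x = j.1 then (1:ℝ) else 0) := by
          rw [← Finset.mul_sum]
      _ = σ₂ j * σ₃ l * (if CGBad G j l then (1:ℝ) else 0) := by
          simp [Finset.sum_ite_eq']
  -- sum of best responses pointing at player 2
  have hsum1 : ∑ x : Fin k,
      (∑ j : Fin k × V, ∑ l : Fin k × V, σ₂ j * σ₃ l * cliqueGame G k ((x, 0), j, l))
      < (k : ℝ) * T := by
    have h := Finset.sum_lt_sum_of_nonempty (Finset.univ_nonempty (α := Fin k))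
      (fun x _ => hcon (x, 0))
    calc ∑ x : Fin k,
        (∑ j : Fin k × V, ∑ l : Fin k × V, σ₂ j * σ₃ l * cliqueGame G k ((x, 0), j, l))
        < ∑ _x : Fin k, T := h
      _ = (k : ℝ) * T := by
          rw [Finset.sum_const, Finset.card_univ, Fintype.card_fin, nsmul_eq_mul]
  have hblt : ((k : ℝ) - 1) * b < 1 / (4 * (k : ℝ)) := by
    have heq : ∑ x : Fin k,
        (∑ j : Fin k × V, ∑ l : Fin k × V, σ₂ j * σ₃ l * cliqueGame G k ((x, 0), j, l))
        = 1 + ((k : ℝ) - 1) * b := by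
      rw [Finset.sum_congr rfl fun x _ => hFx x]
      rw [Finset.sum_sub_distrib, Finset.sum_add_distrib, hαsum, hWsum, Finset.sum_const,
        Finset.card_univ, Fintype.card_fin, nsmul_eq_mul]
      ring
    have hkT : (k : ℝ) * T = 1 + 1 / (4 * (k : ℝ)) := by
      rw [hTdef]; field_simp
    rw [heq] at hsum1
    rw [hkT] at hsum1
    linarith
  -- each label marginal is < T
  have hαT : ∀ x : Fin k, α x < T := by
    intro x
    refine lt_of_le_of_lt ?_ (hcon (x, 0))
    rw [← hsum_ind2 x]
    refine Finset.sum_le_sum fun j _ => Finset.sum_le_sum fun l _ => ?_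
    rw [hgame0]
    gcongr
    · exact mul_nonneg (h2n j) (h3n l)
    · by_cases h1 : x = j.1 <;> by_cases hB : CGBad G j l <;> simp [h1, hB]
  have hβT : ∀ x : Fin k, β x < T := by
    intro x
    refine lt_of_le_of_lt ?_ (hcon (x, 1))
    rw [← hsum_ind3 x]
    refine Finset.sum_le_sum fun j _ => Finset.sum_le_sum fun l _ => ?_
    rw [hgame1]
    gcongr
    · exact mul_nonneg (h2n j) (h3n l)
    · by_cases h1 : x = l.1 <;> by_cases hB : CGBad G j l <;> simp [h1, hB]
  -- lower bound on marginals
  set m : ℝ := 1 - ((k : ℝ) - 1) * T with hmdef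
  have hmarg : ∀ (γ : Fin k → ℝ), (∑ x : Fin k, γ x = 1) → (∀ x, γ x < T) →
      ∀ x, m < γ x := by
    intro γ hγs hγT x
    have hne : (Finset.univ.erase x).Nonempty := by
      rw [← Finset.card_pos, Finset.card_erase_of_mem (Finset.mem_univ x),
        Finset.card_univ, Fintype.card_fin]
      omega
    have h1 : ∑ y ∈ Finset.univ.erase x, γ y < ∑ _y ∈ Finset.univ.erase x, T :=
      Finset.sum_lt_sum_of_nonempty hne fun y _ => hγT y
    have h2 : ∑ _y ∈ Finset.univ.erase x, T = ((k : ℝ) - 1) * T := by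
      rw [Finset.sum_const, Finset.card_erase_of_mem (Finset.mem_univ x),
        Finset.card_univ, Fintype.card_fin, nsmul_eq_mul]
      congr 1
      push_cast [Nat.cast_sub (by omega : 1 ≤ k)]
      ring
    have h3 : γ x + ∑ y ∈ Finset.univ.erase x, γ y = 1 := by
      rw [Finset.add_sum_erase _ _ (Finset.mem_univ x), hγs]
    rw [h2] at h1
    rw [hmdef]
    linarith
  have hmα : ∀ x, m < α x := hmarg α hαsum hαT
  have hmβ : ∀ x, m < β x := hmarg β hβsum hβT
  have hmval : m = (3 * (k : ℝ) + 1) / (4 * (k : ℝ) ^ 2) := by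
    rw [hmdef, hTdef]; field_simp; ring
  have hm_pos : 0 < m := by rw [hmval]; positivity
  -- diagonal mass per label
  set Sd : Fin k → ℝ := fun x => ∑ v : V, σ₂ (x, v) * σ₃ (x, v) with hSdef
  have hSd_nonneg : ∀ x, 0 ≤ Sd x := fun x =>
    Finset.sum_nonneg fun v _ => mul_nonneg (h2n _) (h3n _)
  have hSd_le : ∀ x, Sd x ≤ α x * β x := by
    intro x
    simp only [hSdef]
    calc ∑ v : V, σ₂ (x, v) * σ₃ (x, v)
        ≤ ∑ v : V, σ₂ (x, v) * β x := by
          refine Finset.sum_le_sum fun v _ => ?_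
          exact mul_le_mul_of_nonneg_left
            (Finset.single_le_sum (fun w _ => h3n (x, w)) (Finset.mem_univ v)) (h2n _)
      _ = α x * β x := by rw [← Finset.sum_mul]
  -- bad mass by label pair
  set W2 : Fin k → Fin k → ℝ := fun x y => ∑ v : V, ∑ w : V,
      σ₂ (x, v) * σ₃ (y, w) * (if CGBad G (x, v) (y, w) then (1:ℝ) else 0) with hW2def
  have hW2_nonneg : ∀ x y, 0 ≤ W2 x y := fun x y =>
    Finset.sum_nonneg fun v _ => Finset.sum_nonneg fun w _ =>
      mul_nonneg (mul_nonneg (h2n _) (h3n _)) (by positivity)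
  have hb_eq : b = ∑ x : Fin k, ∑ y : Fin k, W2 x y := by
    rw [hbdef]
    simp only [Fintype.sum_prod_type]
    exact Finset.sum_congr rfl fun x _ => Finset.sum_comm
  have hW2xx : ∀ x, W2 x x = α x * β x - Sd x := by
    intro x
    have hbadxx : ∀ v w : V, CGBad G (x, v) (x, w) ↔ v ≠ w := by
      intro v w
      constructor
      · rintro (⟨-, h⟩ | ⟨h, -⟩ | ⟨h, -⟩) <;> first | exact h | exact absurd rfl h
      · intro h; exact Or.inl ⟨rfl, h⟩
    simp only [hW2def]
    have hpt : ∀ v w : V,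
        σ₂ (x, v) * σ₃ (x, w) * (if CGBad G (x, v) (x, w) then (1:ℝ) else 0)
          = σ₂ (x, v) * σ₃ (x, w)
            - σ₂ (x, v) * σ₃ (x, w) * (if v = w then (1:ℝ) else 0) := by
      intro v w
      by_cases h : v = w <;> simp [hbadxx v w, h]
    rw [Finset.sum_congr rfl fun v _ => Finset.sum_congr rfl fun w _ => hpt v w]
    simp only [Finset.sum_sub_distrib]
    congr 1
    · calc ∑ v : V, ∑ w : V, σ₂ (x, v) * σ₃ (x, w)
          = ∑ v : V, σ₂ (x, v) * ∑ w : V, σ₃ (x, w) := by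
            exact Finset.sum_congr rfl fun v _ => by rw [← Finset.mul_sum]
        _ = α x * β x := by rw [← Finset.sum_mul]
    · simp only [hSdef]
      refine Finset.sum_congr rfl fun v _ => ?_
      simp [mul_ite, Finset.sum_ite_eq]
  -- three disjoint contributions to b
  have htriple : ∀ x y : Fin k, x ≠ y → W2 x x + W2 y y + W2 x y ≤ b := by
    intro x y hxy
    have hsub := Finset.sum_le_sum_of_subset_of_nonneg
      (Finset.subset_univ ({(x, x), (y, y), (x, y)} : Finset (Fin k × Fin k)))
      (fun p _ _ => hW2_nonneg p.1 p.2)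
    have h1 : ((x, x) : Fin k × Fin k) ∉ ({(y, y), (x, y)} : Finset (Fin k × Fin k)) := by
      simp [Prod.ext_iff]
      exact hxy
    have h2 : ((y, y) : Fin k × Fin k) ∉ ({(x, y)} : Finset (Fin k × Fin k)) := by
      simp [Prod.ext_iff]
      exact fun h => absurd h.symm hxy
    rw [Finset.sum_insert h1, Finset.sum_insert h2, Finset.sum_singleton] at hsub
    have huniv : ∑ p ∈ (Finset.univ : Finset (Fin k × Fin k)), W2 p.1 p.2 = b := by
      rw [hb_eq, Fintype.sum_prod_type]
    rw [huniv] at hsub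
    simp only at hsub
    linarith [hsub]
  -- argmax vertices
  have hcex : ∀ x : Fin k, ∃ cx : V, ∀ v : V, σ₂ (x, v) ≤ σ₂ (x, cx) := by
    intro x
    obtain ⟨cx, -, hcx⟩ := Finset.exists_max_image Finset.univ
      (fun v => σ₂ (x, v)) Finset.univ_nonempty
    exact ⟨cx, fun v => hcx v (Finset.mem_univ v)⟩
  choose c hc using hcex
  -- the argmax vertices cannot all form a clique
  by_cases hgood : ∀ x y : Fin k, x ≠ y → c x ≠ c y ∧ G.Adj (c x) (c y)
  · refine hnoclique ⟨Finset.image c Finset.univ, ?_, ?_⟩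
    · have hinj : Function.Injective c := by
        intro x y hxy
        by_contra hne
        exact (hgood x y hne).1 hxy
      rw [Finset.card_image_of_injective _ hinj, Finset.card_univ, Fintype.card_fin]
    · intro v hv w hw hvw
      obtain ⟨x, -, rfl⟩ := Finset.mem_image.mp hv
      obtain ⟨y, -, rfl⟩ := Finset.mem_image.mp hw
      have hxy : x ≠ y := fun h => hvw (by rw [h])
      exact (hgood x y hxy).2
  push_neg at hgood
  obtain ⟨x, y, hxy, hbadc⟩ := hgood
  -- the pair ((x, c x), (y, c y)) is bad
  have hbadpair : CGBad G (x, c x) (y, c y) := by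
    by_cases hcc : c x = c y
    · exact Or.inr (Or.inl ⟨hxy, hcc⟩)
    · exact Or.inr (Or.inr ⟨hcc, hbadc hcc⟩)
  set p : ℝ := σ₂ (x, c x) with hpdef
  set q : ℝ := σ₃ (y, c y) with hqdef
  have hp_nonneg : 0 ≤ p := h2n _
  have hq_nonneg : 0 ≤ q := h3n _
  -- p * q is a bad contribution with labels (x, y)
  have hpq_le : p * q ≤ W2 x y := by
    simp only [hW2def]
    have hinner : ∀ v : V, (0:ℝ) ≤ ∑ w : V,
        σ₂ (x, v) * σ₃ (y, w) * (if CGBad G (x, v) (y, w) then (1:ℝ) else 0) :=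
      fun v => Finset.sum_nonneg fun w _ =>
        mul_nonneg (mul_nonneg (h2n _) (h3n _)) (by positivity)
    refine le_trans ?_ (Finset.single_le_sum (fun v _ => hinner v) (Finset.mem_univ (c x)))
    refine le_trans ?_ (Finset.single_le_sum (f := fun w =>
        σ₂ (x, c x) * σ₃ (y, w) * (if CGBad G (x, c x) (y, w) then (1:ℝ) else 0))
      (fun w _ => mul_nonneg (mul_nonneg (h2n _) (h3n _)) (by positivity))
      (Finset.mem_univ (c y)))
    simp [hbadpair]
    exact le_rfl
  -- concentration facts
  have hf1 : Sd x ≤ p * β x := by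
    simp only [hSdef]
    calc ∑ v : V, σ₂ (x, v) * σ₃ (x, v)
        ≤ ∑ v : V, p * σ₃ (x, v) := by
          refine Finset.sum_le_sum fun v _ => ?_
          exact mul_le_mul_of_nonneg_right (hc x v) (h3n _)
      _ = p * β x := by rw [← Finset.mul_sum]
  have hf1y : Sd y ≤ σ₂ (y, c y) * β y := by
    simp only [hSdef]
    calc ∑ v : V, σ₂ (y, v) * σ₃ (y, v)
        ≤ ∑ v : V, σ₂ (y, c y) * σ₃ (y, v) := by
          refine Finset.sum_le_sum fun v _ => ?_
          exact mul_le_mul_of_nonneg_right (hc y v) (h3n _)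
      _ = σ₂ (y, c y) * β y := by rw [← Finset.mul_sum]
  have hf2 : 2 * Sd y - α y * β y ≤ α y * q := by
    have hstep2 : Sd y ≤ α y * q + α y * β y - σ₂ (y, c y) * β y := by
      have hsplit : Sd y = σ₂ (y, c y) * σ₃ (y, c y)
          + ∑ v ∈ Finset.univ.erase (c y), σ₂ (y, v) * σ₃ (y, v) := by
        simp only [hSdef]
        exact (Finset.add_sum_erase _ (fun v => σ₂ (y, v) * σ₃ (y, v))
          (Finset.mem_univ (c y))).symm
      have hterm1 : σ₂ (y, c y) * σ₃ (y, c y) ≤ α y * q := by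
        rw [hqdef]
        exact mul_le_mul_of_nonneg_right
          (Finset.single_le_sum (fun w _ => h2n (y, w)) (Finset.mem_univ (c y))) (h3n _)
      have hterm2 : ∑ v ∈ Finset.univ.erase (c y), σ₂ (y, v) * σ₃ (y, v)
          ≤ α y * β y - σ₂ (y, c y) * β y := by
        calc ∑ v ∈ Finset.univ.erase (c y), σ₂ (y, v) * σ₃ (y, v)
            ≤ ∑ v ∈ Finset.univ.erase (c y), σ₂ (y, v) * β y := by
              refine Finset.sum_le_sum fun v _ => ?_
              exact mul_le_mul_of_nonneg_left
                (Finset.single_le_sum (fun w _ => h3n (y, w)) (Finset.mem_univ v)) (h2n _)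
          _ = (∑ v ∈ Finset.univ.erase (c y), σ₂ (y, v)) * β y := by rw [← Finset.sum_mul]
          _ = (α y - σ₂ (y, c y)) * β y := by
              rw [Finset.sum_erase_eq_sub (Finset.mem_univ (c y))]
          _ = α y * β y - σ₂ (y, c y) * β y := by ring
      linarith
    linarith [hf1y]
  set u₁ : ℝ := α x * β x - Sd x with hu₁def
  set u₂ : ℝ := α y * β y - Sd y with hu₂def
  have hu₁_nonneg : 0 ≤ u₁ := by rw [hu₁def]; linarith [hSd_le x]
  have hu₂_nonneg : 0 ≤ u₂ := by rw [hu₂def]; linarith [hSd_le y]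
  have htriple' : u₁ + u₂ + p * q ≤ b := by
    have := htriple x y hxy
    rw [hW2xx x, hW2xx y] at this
    simp only [← hu₁def, ← hu₂def] at this
    linarith [hpq_le]
  -- the heart: lower bound on the bad mass
  have hf1' : α x * β x - u₁ ≤ p * β x := by
    rw [hu₁def]; linarith [hf1]
  have hf2' : α y * β y - 2 * u₂ ≤ α y * q := by
    rw [hu₂def]; linarith [hf2]
  have hbound : m * m / 2 ≤ u₁ + u₂ + p * q :=
    cg_key_arith m (α x) (β x) (α y) (β y) u₁ u₂ p q hm_pos (hmα x) (hmβ x) (hmα y) (hmβ y)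
      hu₁_nonneg hu₂_nonneg hp_nonneg hq_nonneg hf1' hf2'
  -- final numeric contradiction
  have hfinal : m * m / 2 ≤ b := le_trans hbound htriple'
  have hklarge : 1 / (4 * (k : ℝ)) ≤ ((k : ℝ) - 1) * (m * m / 2) := by
    rw [hmval]; exact cg_key_arith2 (k : ℝ) hkR
  have hcontr : ((k : ℝ) - 1) * (m * m / 2) ≤ ((k : ℝ) - 1) * b :=
    mul_le_mul_of_nonneg_left hfinal (by linarith)
  linarith

/-- If `k ≥ 5` and `G` contains no `k`-clique, the minmax value for Player 1 in the
clique game `Γ(G,k)` is at least `1/k + 1/(4k²)`. -/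
theorem cliqueGame_minmax_ge_of_no_clique (V : Type*) [Fintype V] [DecidableEq V]
    [Nonempty V] (G : SimpleGraph V) [DecidableRel G.Adj] (k : ℕ) (hk : 5 ≤ k)
    (hnoclique : ¬ ∃ C : Finset V, C.card = k ∧
      ∀ v ∈ C, ∀ w ∈ C, v ≠ w → G.Adj v w) :
    1 / (k : ℝ) + 1 / (4 * (k : ℝ) ^ 2) ≤ minmaxVal (cliqueGame G k) := by
  classical
  have hk0 : 0 < k := by omega
  haveI : Nonempty (Fin k) := ⟨⟨0, hk0⟩⟩
  rw [minmaxVal]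
  apply le_csInf
  · -- the set of achievable values is nonempty (uniform strategies)
    have hcard : (0 : ℝ) < (Fintype.card (Fin k × V) : ℝ) := by
      have : 0 < Fintype.card (Fin k × V) := Fintype.card_pos
      exact_mod_cast this
    have hmix : IsMixedStrategy (fun _ : Fin k × V => (Fintype.card (Fin k × V) : ℝ)⁻¹) := by
      constructor
      · intro s; positivity
      · rw [Finset.sum_const, Finset.card_univ, nsmul_eq_mul,
          mul_inv_cancel₀ (ne_of_gt hcard)]
    exact ⟨_, _, _, hmix, hmix, rfl⟩
  · rintro v ⟨σ₂, σ₃, h2, h3, rfl⟩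
    obtain ⟨a, ha⟩ := cliqueGame_key G k hk hnoclique σ₂ σ₃ h2 h3
    refine le_trans ha ?_
    exact le_ciSup (f := fun a : Fin k × Fin 2 =>
      ∑ j : Fin k × V, ∑ l : Fin k × V, σ₂ j * σ₃ l * cliqueGame G k (a, j, l))
      (Finite.bddAbove_range _) a
end
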